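/- arXiv:2102.13306 — 8 statements merged into one kernel-verified Lean document; each statement's English description precedes it below -/
import Mathlib

section
/- If G is a (1,0)-stable graph on n vertices (i.e., removing any single vertex does not decrease the independence number), then the independence number of G is at most ⌊n/2⌋. -/
open SimpleGraph Set

/-- The independence number of `G` restricted to a vertex subset `A`:
the largest cardinality of a finite set of vertices inside `A` that is
pairwise non-adjacent in `G`. -/
noncomputable def indepNumOn {V : Type*} (G : SimpleGraph V) (A : Set V) : ℕ :=
  sSup {n | ∃ s : Finset V, ↑s ⊆ A ∧ s.card = n ∧
    ∀ x ∈ s, ∀ y ∈ s, x ≠ y → ¬ G.Adj x y}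

/-- The independence number of `G`. -/
noncomputable def indepNum {V : Type*} (G : SimpleGraph V) : ℕ :=
  indepNumOn G Set.univ

/-- `G` is `(k, l)`-stable: removing any `k` vertices decreases the
independence number by at most `l`. -/
def IsStable {V : Type*} (G : SimpleGraph V) (k l : ℕ) : Prop :=
  ∀ S : Finset V, S.card = k → _root_.indepNum G ≤ indepNumOn G (↑S : Set V)ᶜ + l

lemma indepNumOn_mem {V : Type*} [Fintype V] (G : SimpleGraph V) (A : Set V) :
    ∃ s : Finset V, ↑s ⊆ A ∧ s.card = indepNumOn G A ∧
      ∀ x ∈ s, ∀ y ∈ s, x ≠ y → ¬ G.Adj x y := by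
  have h0 : (0 : ℕ) ∈ {n | ∃ s : Finset V, ↑s ⊆ A ∧ s.card = n ∧
      ∀ x ∈ s, ∀ y ∈ s, x ≠ y → ¬ G.Adj x y} := ⟨∅, by simp⟩
  have hbdd : BddAbove {n | ∃ s : Finset V, ↑s ⊆ A ∧ s.card = n ∧
      ∀ x ∈ s, ∀ y ∈ s, x ≠ y → ¬ G.Adj x y} := by
    refine ⟨Fintype.card V, ?_⟩
    rintro m ⟨s, _, rfl, _⟩
    exact Finset.card_le_univ s
  have := Nat.sSup_mem ⟨0, h0⟩ hbdd
  exact this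

lemma card_le_indepNum {V : Type*} [Fintype V] (G : SimpleGraph V) (s : Finset V)
    (hs : ∀ x ∈ s, ∀ y ∈ s, x ≠ y → ¬ G.Adj x y) : s.card ≤ _root_.indepNum G := by
  have hbdd : BddAbove {n | ∃ s : Finset V, ↑s ⊆ (Set.univ : Set V) ∧ s.card = n ∧
      ∀ x ∈ s, ∀ y ∈ s, x ≠ y → ¬ G.Adj x y} := by
    refine ⟨Fintype.card V, ?_⟩
    rintro m ⟨s, _, rfl, _⟩
    exact Finset.card_le_univ s
  exact le_csSup hbdd ⟨s, by simp, rfl, hs⟩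

/-- Key combinatorial step (Hammer–Hansen–Simeone style): maintaining a pair
`X ⊆ U` with no edges from `X` into `U` and `2a ≤ |X| + |U|`, we can shrink `X`
until it is empty, yielding `2a ≤ |V|`. -/
lemma key_lemma {V : Type*} [Fintype V] [DecidableEq V] (G : SimpleGraph V) (a : ℕ)
    (hmax : ∀ s : Finset V, (∀ x ∈ s, ∀ y ∈ s, x ≠ y → ¬ G.Adj x y) → s.card ≤ a)
    (hstab : ∀ v : V, ∃ I : Finset V, v ∉ I ∧ I.card = a ∧
      ∀ x ∈ I, ∀ y ∈ I, x ≠ y → ¬ G.Adj x y) :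
    ∀ X U : Finset V, X ⊆ U → (∀ x ∈ X, ∀ w ∈ U, ¬ G.Adj x w) →
      2 * a ≤ X.card + U.card → 2 * a ≤ Fintype.card V := by
  classical
  intro X
  induction X using Finset.strongInduction with
  | _ X ih =>
    intro U hXU hadj hcard
    rcases X.eq_empty_or_nonempty with rfl | ⟨v, hv⟩
    · have : U.card ≤ Fintype.card V := Finset.card_le_univ U
      simpa using hcard.trans (by simpa using this)
    · obtain ⟨I, hvI, hIcard, hIind⟩ := hstab v
      set Y : Finset V := X \ I with hY
      set N : Finset V := I.filter (fun w => ∃ y ∈ Y, G.Adj y w) with hN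
      have hYX : Y ⊆ X := Finset.sdiff_subset
      have hNI : N ⊆ I := Finset.filter_subset _ _
      -- (I \ N) ∪ Y is independent
      have hs : ∀ x ∈ (I \ N) ∪ Y, ∀ y ∈ (I \ N) ∪ Y, x ≠ y → ¬ G.Adj x y := by
        intro x hx y hy hxy hA
        rcases Finset.mem_union.1 hx with hx | hx <;>
          rcases Finset.mem_union.1 hy with hy | hy
        · exact hIind x (Finset.mem_sdiff.1 hx).1 y (Finset.mem_sdiff.1 hy).1 hxy hA
        · -- x ∈ I \ N, y ∈ Y : then x is a neighbor of y, so x ∈ N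
          have : x ∈ N := Finset.mem_filter.2 ⟨(Finset.mem_sdiff.1 hx).1, ⟨y, hy, hA.symm⟩⟩
          exact (Finset.mem_sdiff.1 hx).2 this
        · have : y ∈ N := Finset.mem_filter.2 ⟨(Finset.mem_sdiff.1 hy).1, ⟨x, hx, hA⟩⟩
          exact (Finset.mem_sdiff.1 hy).2 this
        · exact hadj x (hYX hx) y (hXU (hYX hy)) hA
      have hcard_s := hmax _ hs
      have hdisjIY : Disjoint (I \ N) Y := by
        rw [Finset.disjoint_left]
        intro x hx hxY
        exact (Finset.mem_sdiff.1 hxY).2 (Finset.mem_sdiff.1 hx).1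
      have hcardu : ((I \ N) ∪ Y).card = (I \ N).card + Y.card :=
        Finset.card_union_of_disjoint hdisjIY
      have hIN : (I \ N).card = I.card - N.card := Finset.card_sdiff_of_subset hNI
      have hNle : N.card ≤ I.card := Finset.card_le_card hNI
      have hYN : Y.card ≤ N.card := by omega
      -- N is disjoint from U
      have hNU : Disjoint N U := by
        rw [Finset.disjoint_left]
        intro w hw hwU
        obtain ⟨-, y, hyY, hAdj⟩ := Finset.mem_filter.1 hw
        exact hadj y (hYX hyY) w hwU hAdj
      -- recurse
      have hXIX : X ∩ I ⊂ X := by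
        refine Finset.ssubset_iff_of_subset Finset.inter_subset_left |>.2 ?_
        exact ⟨v, hv, fun h => hvI (Finset.mem_inter.1 h).2⟩
      refine ih (X ∩ I) hXIX (U ∪ N) ?_ ?_ ?_
      · exact fun x hx => Finset.mem_union_left _ (hXU (Finset.mem_inter.1 hx).1)
      · intro x hx w hw hA
        rcases Finset.mem_union.1 hw with hw | hw
        · exact hadj x (Finset.mem_inter.1 hx).1 w hw hA
        · rcases eq_or_ne x w with rfl | hne
          · exact G.irrefl hA
          · exact hIind x (Finset.mem_inter.1 hx).2 w (hNI hw) hne hA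
      · have h1 : (U ∪ N).card = U.card + N.card :=
          Finset.card_union_of_disjoint hNU.symm
        have h2 : (X ∩ I).card = X.card - Y.card := by
          have : X ∩ I = X \ Y := by
            ext x
            simp [hY, Finset.mem_sdiff, Finset.mem_inter]
          rw [this, Finset.card_sdiff_of_subset hYX]
        have hYXc : Y.card ≤ X.card := Finset.card_le_card hYX
        omega

theorem stable_one_zero_indepNum_le {V : Type*} [Fintype V] (G : SimpleGraph V) (n : ℕ)
    (hn : Fintype.card V = n)
    (hstable : ∀ v : V, indepNumOn G ({v} : Set V)ᶜ = _root_.indepNum G) :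
    _root_.indepNum G ≤ n / 2 := by
  classical
  set a := _root_.indepNum G with ha
  obtain ⟨I₀, -, hI₀card, hI₀ind⟩ := indepNumOn_mem G (Set.univ : Set V)
  have hmax : ∀ s : Finset V, (∀ x ∈ s, ∀ y ∈ s, x ≠ y → ¬ G.Adj x y) → s.card ≤ a :=
    fun s hs => card_le_indepNum G s hs
  have hstab : ∀ v : V, ∃ I : Finset V, v ∉ I ∧ I.card = a ∧
      ∀ x ∈ I, ∀ y ∈ I, x ≠ y → ¬ G.Adj x y := by
    intro v
    obtain ⟨s, hsub, hcard, hind⟩ := indepNumOn_mem G (({v} : Set V)ᶜ)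
    refine ⟨s, ?_, ?_, hind⟩
    · intro hvs
      have := hsub hvs
      simp at this
    · rw [hcard, hstable v]
  have hadj0 : ∀ x ∈ I₀, ∀ w ∈ I₀, ¬ G.Adj x w := by
    intro x hx w hw hA
    rcases eq_or_ne x w with rfl | hne
    · exact G.irrefl hA
    · exact hI₀ind x hx w hw hne hA
  have h2a : 2 * a ≤ Fintype.card V := by
    refine key_lemma G a hmax hstab I₀ I₀ le_rfl hadj0 ?_
    have : I₀.card = a := by rw [hI₀card, ha, _root_.indepNum]
    omega
  omega
end

section
/- Let G be a graph on n vertices, and suppose there are at least m vertices v such that α(G \ {v}) = α(G). Then α(G) ≤ ⌊n − m/2⌋. -/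
open SimpleGraph Set

private lemma keyP' {V : Type*} [Fintype V] [DecidableEq V] (G : SimpleGraph V) (I : Finset V)
    (hmax : ∀ s : Finset V, (∀ x ∈ s, ∀ y ∈ s, x ≠ y → ¬ G.Adj x y) → s.card ≤ I.card)
    (hIind : ∀ x ∈ I, ∀ y ∈ I, x ≠ y → ¬ G.Adj x y) :
    ∀ A B : Finset V, A ⊆ I →
      (∀ a ∈ A, ∃ K : Finset V, (∀ x ∈ K, ∀ y ∈ K, x ≠ y → ¬ G.Adj x y) ∧
          K.card = I.card ∧ a ∉ K) →
      (∀ x ∈ A, ∀ y : V, G.Adj x y → y ∈ B) → B.card < A.card → False := by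
  classical
  intro A
  induction A using Finset.strongInduction with
  | _ A ih =>
  intro B hAI hav hcl hlt
  have hAne : A.Nonempty := by
    rw [← Finset.card_pos]; omega
  obtain ⟨a, ha⟩ := hAne
  obtain ⟨K, hKind, hKcard, haK⟩ := hav a ha
  -- Hall's theorem on A.erase a
  set t : {x // x ∈ A.erase a} → Finset V :=
    fun x => Finset.univ.filter (fun y => G.Adj ↑x y) with ht
  have hall_cond : ∀ s : Finset {x // x ∈ A.erase a}, s.card ≤ (s.biUnion t).card := by
    intro s
    by_contra hc
    push_neg at hc
    have himg : (s.image (Subtype.val)).card = s.card :=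
      Finset.card_image_of_injective s Subtype.val_injective
    have hsubA : s.image Subtype.val ⊂ A := by
      refine Finset.ssubset_of_subset_of_ssubset ?_ (Finset.erase_ssubset ha)
      intro x hx
      obtain ⟨z, _, rfl⟩ := Finset.mem_image.mp hx
      exact z.2
    refine ih (s.image Subtype.val) hsubA (s.biUnion t)
      (hsubA.subset.trans hAI)
      (fun x hx => hav x (hsubA.subset hx)) ?_ (by omega)
    intro x hx y hxy
    obtain ⟨z, hz, rfl⟩ := Finset.mem_image.mp hx
    exact Finset.mem_biUnion.mpr ⟨z, hz, by simp [ht, hxy]⟩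
  obtain ⟨f, hfinj, hfmem⟩ :=
    (Finset.all_card_le_biUnion_card_iff_exists_injective t).mp hall_cond
  have hfadj : ∀ x : {x // x ∈ A.erase a}, G.Adj ↑x (f x) := by
    intro x
    have := hfmem x
    simp [ht] at this
    exact this
  have hfB : ∀ x : {x // x ∈ A.erase a}, f x ∈ B :=
    fun x => hcl _ (Finset.mem_of_mem_erase x.2) _ (hfadj x)
  -- the image of f is all of B
  have hcardι : Fintype.card {x // x ∈ A.erase a} = A.card - 1 := by
    rw [Fintype.card_coe, Finset.card_erase_of_mem ha]
  have himgf : Finset.univ.image f = B := by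
    apply Finset.eq_of_subset_of_card_le
    · intro b hb
      obtain ⟨x, _, rfl⟩ := Finset.mem_image.mp hb
      exact hfB x
    · rw [Finset.card_image_of_injective _ hfinj, Finset.card_univ, hcardι]
      omega
  have hsurj : ∀ b ∈ B, ∃ x : {x // x ∈ A.erase a}, f x = b := by
    intro b hb
    rw [← himgf] at hb
    obtain ⟨x, _, hx⟩ := Finset.mem_image.mp hb
    exact ⟨x, hx⟩
  -- partner function
  set g : V → V := fun b =>
    if h : ∃ x : {x // x ∈ A.erase a}, f x = b then (h.choose : {x // x ∈ A.erase a}).1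
    else b with hg
  have hgmem : ∀ b ∈ B, g b ∈ A.erase a := by
    intro b hb
    have h := hsurj b hb
    rw [hg]
    simp only [dif_pos h]
    exact h.choose.2
  have hgadj : ∀ b ∈ B, G.Adj (g b) b := by
    intro b hb
    have h := hsurj b hb
    have hspec := h.choose_spec
    have e : g b = (h.choose : {x // x ∈ A.erase a}).1 := by
      rw [hg]; simp only [dif_pos h]
    have adj2 : G.Adj (h.choose : {x // x ∈ A.erase a}).1 b := by
      have h3 := hfadj h.choose
      rwa [hspec] at h3
    rw [e]
    exact adj2
  have hginj : ∀ b₁ ∈ B, ∀ b₂ ∈ B, g b₁ = g b₂ → b₁ = b₂ := by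
    intro b₁ hb₁ b₂ hb₂ heq
    have h₁ := hsurj b₁ hb₁
    have h₂ := hsurj b₂ hb₂
    have e₁ : g b₁ = (h₁.choose : {x // x ∈ A.erase a}).1 := by
      rw [hg]; simp only [dif_pos h₁]
    have e₂ : g b₂ = (h₂.choose : {x // x ∈ A.erase a}).1 := by
      rw [hg]; simp only [dif_pos h₂]
    have : h₁.choose = h₂.choose := Subtype.ext (by rw [← e₁, ← e₂, heq])
    rw [← h₁.choose_spec, ← h₂.choose_spec, this]
  -- reachability
  set step : V → V → Prop := fun b b' => b ∈ B ∧ b' ∈ K ∧ G.Adj (g b) b' with hstep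
  set RS : Set V := {b | ∃ b₀, b₀ ∈ K ∧ G.Adj a b₀ ∧ Relation.ReflTransGen step b₀ b}
    with hRSdef
  have hRS : ∀ b ∈ RS, b ∈ K ∧ b ∈ B := by
    rintro b ⟨b₀, hb₀K, hab₀, hpath⟩
    induction hpath with
    | refl => exact ⟨hb₀K, hcl a ha b₀ hab₀⟩
    | tail _ hstp ihp =>
      rename_i c d _
      obtain ⟨hcB, hdK, hadj⟩ := hstp
      refine ⟨hdK, ?_⟩
      exact hcl _ (Finset.mem_of_mem_erase (hgmem c hcB)) _ hadj
  set Reach : Finset V := K.filter (fun b => b ∈ RS) with hReachdef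
  have hReach_mem : ∀ b, b ∈ Reach ↔ b ∈ RS := by
    intro b
    rw [hReachdef, Finset.mem_filter]
    constructor
    · exact fun h => h.2
    · exact fun h => ⟨(hRS b h).1, h⟩
  have hReachK : Reach ⊆ K := Finset.filter_subset _ _
  have hReachB : ∀ b ∈ Reach, b ∈ B := fun b hb => (hRS b ((hReach_mem b).mp hb)).2
  -- the enlarged independent set
  set T : Finset V := (K \ Reach) ∪ insert a (Reach.image g) with hT
  -- cross independence
  have hcross : ∀ x ∈ insert a (Reach.image g), ∀ y ∈ K \ Reach, ¬ G.Adj x y := by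
    intro x hx y hy hadj
    rw [Finset.mem_sdiff] at hy
    obtain ⟨hyK, hyR⟩ := hy
    rcases Finset.mem_insert.mp hx with rfl | hx
    · exact hyR ((hReach_mem y).mpr ⟨y, hyK, hadj, Relation.ReflTransGen.refl⟩)
    · obtain ⟨b, hb, rfl⟩ := Finset.mem_image.mp hx
      obtain ⟨b₀, h₀K, h₀a, h₀p⟩ := (hReach_mem b).mp hb
      exact hyR ((hReach_mem y).mpr
        ⟨b₀, h₀K, h₀a, h₀p.tail ⟨hReachB b hb, hyK, hadj⟩⟩)
  -- membership of the A-part in A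
  have hinsA : ∀ x ∈ insert a (Reach.image g), x ∈ A := by
    intro x hx
    rcases Finset.mem_insert.mp hx with rfl | hx
    · exact ha
    · obtain ⟨b, hb, rfl⟩ := Finset.mem_image.mp hx
      exact Finset.mem_of_mem_erase (hgmem b (hReachB b hb))
  have hTind : ∀ x ∈ T, ∀ y ∈ T, x ≠ y → ¬ G.Adj x y := by
    intro x hx y hy hne hadj
    rw [hT, Finset.mem_union] at hx hy
    rcases hx with hx | hx <;> rcases hy with hy | hy
    · exact hKind x (Finset.mem_sdiff.mp hx).1 y (Finset.mem_sdiff.mp hy).1 hne hadj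
    · exact hcross y hy x hx hadj.symm
    · exact hcross x hx y hy hadj
    · exact hIind x (hAI (hinsA x hx)) y (hAI (hinsA y hy)) hne hadj
  -- cardinality of T
  have hganotin : a ∉ Reach.image g := by
    intro h
    obtain ⟨b, hb, hgb⟩ := Finset.mem_image.mp h
    exact (Finset.mem_erase.mp (hgmem b (hReachB b hb))).1 hgb
  have hgK : ∀ b ∈ Reach, g b ∉ K := by
    intro b hb hgbK
    exact hKind _ hgbK _ (hReachK hb) (G.ne_of_adj (hgadj b (hReachB b hb)))
      (hgadj b (hReachB b hb))
  have hdisj : Disjoint (K \ Reach) (insert a (Reach.image g)) := by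
    rw [Finset.disjoint_right]
    intro x hx hx'
    rw [Finset.mem_sdiff] at hx'
    rcases Finset.mem_insert.mp hx with rfl | hx
    · exact haK hx'.1
    · obtain ⟨b, hb, rfl⟩ := Finset.mem_image.mp hx
      exact hgK b hb hx'.1
  have hcardim : (Reach.image g).card = Reach.card :=
    Finset.card_image_of_injOn (fun b₁ h₁ b₂ h₂ he =>
      hginj b₁ (hReachB b₁ h₁) b₂ (hReachB b₂ h₂) he)
  have hcardT : T.card = K.card + 1 := by
    rw [hT, Finset.card_union_of_disjoint hdisj,
      Finset.card_sdiff_of_subset hReachK,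
      Finset.card_insert_of_notMem hganotin, hcardim]
    have := Finset.card_le_card hReachK
    omega
  have := hmax T hTind
  omega

theorem indepNum_le_of_many_removable {V : Type*} [Fintype V] (G : SimpleGraph V) (n m : ℕ)
    (hn : Fintype.card V = n)
    (hm : m ≤ {v : V | indepNumOn G ({v} : Set V)ᶜ = _root_.indepNum G}.ncard) :
    _root_.indepNum G ≤ n - (m + 1) / 2 := by
  classical
  set S := {v : V | indepNumOn G ({v} : Set V)ᶜ = _root_.indepNum G} with hS
  have hbdd : ∀ A : Set V, BddAbove {k | ∃ s : Finset V, ↑s ⊆ A ∧ s.card = k ∧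
      ∀ x ∈ s, ∀ y ∈ s, x ≠ y → ¬ G.Adj x y} := by
    intro A
    refine ⟨Fintype.card V, ?_⟩
    rintro k ⟨s, _, rfl, _⟩
    exact Finset.card_le_univ s
  have hmemrec : ∀ A : Set V, ∃ s : Finset V, ↑s ⊆ A ∧ s.card = indepNumOn G A ∧
      (∀ x ∈ s, ∀ y ∈ s, x ≠ y → ¬ G.Adj x y) := by
    intro A
    have h0 : (0 : ℕ) ∈ {k | ∃ s : Finset V, ↑s ⊆ A ∧ s.card = k ∧
        ∀ x ∈ s, ∀ y ∈ s, x ≠ y → ¬ G.Adj x y} := ⟨∅, by simp, by simp, by simp⟩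
    have hmem := Nat.sSup_mem ⟨0, h0⟩ (hbdd A)
    simp only [indepNumOn]
    exact hmem
  obtain ⟨I, -, hIcard, hIind⟩ := hmemrec Set.univ
  have hIcard' : I.card = _root_.indepNum G := by rw [_root_.indepNum]; exact hIcard
  have hmax : ∀ s : Finset V, (∀ x ∈ s, ∀ y ∈ s, x ≠ y → ¬ G.Adj x y) →
      s.card ≤ I.card := by
    intro s hs
    rw [hIcard]
    simp only [indepNumOn]
    exact le_csSup (hbdd Set.univ) ⟨s, Set.subset_univ _, rfl, hs⟩
  have hav : ∀ a ∈ S.toFinset ∩ I, ∃ K : Finset V,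
      (∀ x ∈ K, ∀ y ∈ K, x ≠ y → ¬ G.Adj x y) ∧ K.card = I.card ∧ a ∉ K := by
    intro a haA
    have haS : a ∈ S := Set.mem_toFinset.mp (Finset.mem_inter.mp haA).1
    have hSa : indepNumOn G ({a} : Set V)ᶜ = _root_.indepNum G := haS
    obtain ⟨K, hK1, hK2, hK3⟩ := hmemrec ({a} : Set V)ᶜ
    refine ⟨K, hK3, ?_, ?_⟩
    · rw [hK2, hSa]
      exact hIcard'.symm
    · intro haK
      have := hK1 haK
      simp at this
  have hcl : ∀ x ∈ S.toFinset ∩ I, ∀ y : V, G.Adj x y → y ∈ Iᶜ := by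
    intro x hx y hxy
    rw [Finset.mem_compl]
    intro hyI
    exact hIind x (Finset.mem_inter.mp hx).2 y hyI (G.ne_of_adj hxy) hxy
  have h1 : (S.toFinset ∩ I).card ≤ Iᶜ.card := by
    by_contra hc
    push_neg at hc
    exact keyP' G I hmax hIind (S.toFinset ∩ I) Iᶜ Finset.inter_subset_right hav hcl hc
  have h2 : (S.toFinset \ I).card ≤ Iᶜ.card := by
    apply Finset.card_le_card
    intro x hx
    rw [Finset.mem_compl]
    exact (Finset.mem_sdiff.mp hx).2
  have h3 : (S.toFinset \ I).card + (S.toFinset ∩ I).card = S.toFinset.card :=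
    Finset.card_sdiff_add_card_inter _ _
  have h4 : m ≤ S.toFinset.card := by
    rw [← Set.ncard_eq_toFinset_card' S]
    exact hm
  have h5 : Iᶜ.card = n - I.card := by rw [Finset.card_compl, hn]
  have h6 : I.card ≤ n := by rw [← hn]; exact Finset.card_le_univ I
  rw [← hIcard']
  omega
end

section
/- If G is an n-vertex tight (k,ℓ)-stable graph (with n > k > ℓ ≥ 0), then the disjoint union G ⊔ K₁ of G with an isolated vertex is an (n+1)-vertex tight (k+1, ℓ+1)-stable graph. -/
open SimpleGraph Set

/-- The disjoint union of `G` with one isolated vertex. -/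
def addIsolated {V : Type*} (G : SimpleGraph V) : SimpleGraph (Option V) :=
  SimpleGraph.fromRel (fun a b => ∃ x y, a = some x ∧ b = some y ∧ G.Adj x y)

section Aux

variable {V : Type*} [Fintype V] [DecidableEq V]

lemma indepNumOn_bddAbove (G : SimpleGraph V) (A : Set V) :
    BddAbove {n | ∃ s : Finset V, ↑s ⊆ A ∧ s.card = n ∧
      ∀ x ∈ s, ∀ y ∈ s, x ≠ y → ¬ G.Adj x y} := by
  refine ⟨Fintype.card V, ?_⟩
  rintro n ⟨s, -, rfl, -⟩
  exact s.card_le_univ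

lemma exists_indep_max (G : SimpleGraph V) (A : Set V) :
    ∃ s : Finset V, ↑s ⊆ A ∧ s.card = indepNumOn G A ∧
      ∀ x ∈ s, ∀ y ∈ s, x ≠ y → ¬ G.Adj x y := by
  have h0 : 0 ∈ {n | ∃ s : Finset V, ↑s ⊆ A ∧ s.card = n ∧
      ∀ x ∈ s, ∀ y ∈ s, x ≠ y → ¬ G.Adj x y} := ⟨∅, by simp⟩
  exact Nat.sSup_mem ⟨0, h0⟩ (indepNumOn_bddAbove G A)

lemma card_le_indepNumOn (G : SimpleGraph V) {A : Set V} {s : Finset V}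
    (h1 : ↑s ⊆ A) (h2 : ∀ x ∈ s, ∀ y ∈ s, x ≠ y → ¬ G.Adj x y) :
    s.card ≤ indepNumOn G A :=
  le_csSup (indepNumOn_bddAbove G A) ⟨s, h1, rfl, h2⟩

lemma indepNumOn_diff_singleton (G : SimpleGraph V) (A : Set V) (v : V) :
    indepNumOn G A ≤ indepNumOn G (A \ {v}) + 1 := by
  classical
  obtain ⟨s, hsA, hcard, hind⟩ := exists_indep_max G A
  have h1 : ↑(s.erase v) ⊆ A \ {v} := by
    intro x hx
    simp only [Finset.coe_erase, Set.mem_diff, Set.mem_singleton_iff] at hx ⊢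
    exact ⟨hsA hx.1, hx.2⟩
  have h2 := card_le_indepNumOn G h1
    (fun x hx y hy => hind x (Finset.mem_of_mem_erase hx) y (Finset.mem_of_mem_erase hy))
  have h3 : s.card - 1 ≤ (s.erase v).card := Finset.pred_card_le_card_erase
  omega

lemma addIsolated_not_adj_none (G : SimpleGraph V) (b : Option V) :
    ¬ (addIsolated G).Adj none b := by
  simp only [addIsolated, fromRel_adj]
  rintro ⟨-, (⟨x, y, h, -⟩ | ⟨x, y, -, h, -⟩)⟩ <;> exact nomatch h

lemma addIsolated_adj_some (G : SimpleGraph V) (x y : V) :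
    (addIsolated G).Adj (some x) (some y) ↔ G.Adj x y := by
  simp only [addIsolated, fromRel_adj]
  constructor
  · rintro ⟨-, (⟨a, b, ha, hb, h⟩ | ⟨a, b, ha, hb, h⟩)⟩
    · cases Option.some_injective V ha; cases Option.some_injective V hb; exact h
    · cases Option.some_injective V ha; cases Option.some_injective V hb; exact h.symm
  · intro h
    exact ⟨by simpa using h.ne, Or.inl ⟨x, y, rfl, rfl, h⟩⟩

lemma indep_insert_none (G : SimpleGraph V) {s : Finset V}
    (hind : ∀ x ∈ s, ∀ y ∈ s, x ≠ y → ¬ G.Adj x y) :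
    ∀ x ∈ insert none (s.image some), ∀ y ∈ insert none (s.image some),
      x ≠ y → ¬ (addIsolated G).Adj x y := by
  classical
  intro x hx y hy hxy hadj
  rcases Finset.mem_insert.1 hx with rfl | hx
  · exact addIsolated_not_adj_none G y hadj
  rcases Finset.mem_insert.1 hy with rfl | hy
  · exact addIsolated_not_adj_none G x hadj.symm
  obtain ⟨a, ha, rfl⟩ := Finset.mem_image.1 hx
  obtain ⟨b, hb, rfl⟩ := Finset.mem_image.1 hy
  exact hind a ha b hb (fun h => hxy (by rw [h]))
    ((addIsolated_adj_some G a b).1 hadj)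

lemma indep_image_some (G : SimpleGraph V) {s : Finset V}
    (hind : ∀ x ∈ s, ∀ y ∈ s, x ≠ y → ¬ G.Adj x y) :
    ∀ x ∈ s.image some, ∀ y ∈ s.image some,
      x ≠ y → ¬ (addIsolated G).Adj x y := by
  classical
  intro x hx y hy hxy
  exact indep_insert_none G hind x (Finset.mem_insert_of_mem hx) y
    (Finset.mem_insert_of_mem hy) hxy

lemma indepNum_addIsolated (G : SimpleGraph V) :
    _root_.indepNum (addIsolated G) = _root_.indepNum G + 1 := by
  classical
  apply le_antisymm
  · obtain ⟨t, -, hcard, hind⟩ := exists_indep_max (addIsolated G) Set.univ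
    set s : Finset V := t.eraseNone with hs
    have hsub : t ⊆ insert none (s.image some) := by
      intro a ha
      cases a with
      | none => exact Finset.mem_insert_self _ _
      | some x =>
        exact Finset.mem_insert_of_mem
          (Finset.mem_image.2 ⟨x, Finset.mem_eraseNone.2 ha, rfl⟩)
    have h1 : t.card ≤ s.card + 1 :=
      le_trans (Finset.card_le_card hsub)
        (le_trans (Finset.card_insert_le _ _)
          (by rw [Finset.card_image_of_injective _ (Option.some_injective V)]))
    have h2 : s.card ≤ indepNumOn G Set.univ := by
      apply card_le_indepNumOn G (by simp)
      intro x hx y hy hxy hadj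
      exact hind (some x) (Finset.mem_eraseNone.1 hx) (some y) (Finset.mem_eraseNone.1 hy)
        (by simpa using hxy) ((addIsolated_adj_some G x y).2 hadj)
    have e1 : _root_.indepNum (addIsolated G) = indepNumOn (addIsolated G) Set.univ := rfl
    have e2 : _root_.indepNum G = indepNumOn G Set.univ := rfl
    omega
  · obtain ⟨s, -, hcard, hind⟩ := exists_indep_max G Set.univ
    have hc : (insert none (s.image some)).card = s.card + 1 := by
      rw [Finset.card_insert_of_notMem (by simp),
        Finset.card_image_of_injective _ (Option.some_injective V)]
    have := card_le_indepNumOn (addIsolated G) (A := Set.univ)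
      (s := insert none (s.image some)) (by simp) (indep_insert_none G hind)
    have e1 : _root_.indepNum (addIsolated G) = indepNumOn (addIsolated G) Set.univ := rfl
    have e2 : _root_.indepNum G = indepNumOn G Set.univ := rfl
    omega

end Aux

theorem tight_stable_addIsolated {V : Type*} [Fintype V] (G : SimpleGraph V) (n k l : ℕ)
    (hn : Fintype.card V = n) (hkn : k < n) (hlk : l < k)
    (hstable : IsStable G k l) (htight : _root_.indepNum G = (n - k + 1) / 2 + l) :
    IsStable (addIsolated G) (k + 1) (l + 1) ∧
      _root_.indepNum (addIsolated G) = ((n + 1) - (k + 1) + 1) / 2 + (l + 1) := by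
  classical
  have hadd := indepNum_addIsolated G
  constructor
  · intro S hS
    set T : Finset V := S.eraseNone with hT
    have hmemT : ∀ x : V, x ∈ T ↔ some x ∈ S := fun x => Finset.mem_eraseNone
    by_cases hnS : none ∈ S
    · -- T has card k
      have hST : S = insert none (T.image some) := by
        ext a
        cases a with
        | none => simp [hnS]
        | some x =>
          simp only [Finset.mem_insert, Finset.mem_image]
          constructor
          · intro h; exact Or.inr ⟨x, (hmemT x).2 h, rfl⟩
          · rintro (h | ⟨b, hb, hba⟩)
            · exact nomatch h
            · cases Option.some_injective V hba; exact (hmemT x).1 hb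
      have hTcard : T.card = k := by
        have : S.card = T.card + 1 := by
          rw [hST, Finset.card_insert_of_notMem (by simp),
            Finset.card_image_of_injective _ (Option.some_injective V)]
        omega
      have h1 := hstable T hTcard
      -- transfer: indepNumOn G Tᶜ ≤ indepNumOn (addIsolated G) Sᶜ
      obtain ⟨s, hsub, hcard, hind⟩ := exists_indep_max G (↑T : Set V)ᶜ
      have h2 : ↑(s.image some) ⊆ ((↑S : Set (Option V))ᶜ) := by
        intro a ha
        simp only [Finset.coe_image, Set.mem_image, Finset.mem_coe] at ha
        obtain ⟨x, hx, rfl⟩ := ha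
        intro hmem
        exact hsub hx ((hmemT x).2 hmem)
      have h3 := card_le_indepNumOn (addIsolated G) h2 (indep_image_some G hind)
      rw [Finset.card_image_of_injective _ (Option.some_injective V)] at h3
      omega
    · -- none ∉ S : T has card k + 1
      have hST : S = T.image some := by
        ext a
        cases a with
        | none => simpa using hnS
        | some x =>
          simp only [Finset.mem_image]
          constructor
          · intro h; exact ⟨x, (hmemT x).2 h, rfl⟩
          · rintro ⟨b, hb, hba⟩
            cases Option.some_injective V hba; exact (hmemT x).1 hb
      have hTcard : T.card = k + 1 := by
        have : S.card = T.card := by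
          rw [hST, Finset.card_image_of_injective _ (Option.some_injective V)]
        omega
      obtain ⟨v, hv⟩ : T.Nonempty := Finset.card_pos.1 (by omega)
      have hT'card : (T.erase v).card = k := by
        rw [Finset.card_erase_of_mem hv]; omega
      have h1 := hstable (T.erase v) hT'card
      have h2 : ((↑(T.erase v) : Set V)ᶜ \ {v}) = (↑T : Set V)ᶜ := by
        ext x
        simp only [Set.mem_diff, Set.mem_compl_iff, Finset.mem_coe,
          Finset.mem_erase, Set.mem_singleton_iff]
        constructor
        · rintro ⟨h, hxv⟩ hxT; exact h ⟨hxv, hxT⟩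
        · intro h
          refine ⟨fun hh => h hh.2, fun hh => h (hh ▸ hv)⟩
      have h3 := indepNumOn_diff_singleton G ((↑(T.erase v) : Set V)ᶜ) v
      rw [h2] at h3
      -- transfer with the extra vertex `none`
      obtain ⟨s, hsub, hcard, hind⟩ := exists_indep_max G (↑T : Set V)ᶜ
      have h4 : ↑(insert none (s.image some)) ⊆ ((↑S : Set (Option V))ᶜ) := by
        intro a ha
        simp only [Finset.coe_insert, Set.mem_insert_iff, Finset.coe_image,
          Set.mem_image, Finset.mem_coe] at ha
        rcases ha with rfl | ⟨x, hx, rfl⟩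
        · exact hnS
        · intro hmem
          exact hsub hx ((hmemT x).2 hmem)
      have h5 := card_le_indepNumOn (addIsolated G) h4 (indep_insert_none G hind)
      rw [Finset.card_insert_of_notMem (by simp),
        Finset.card_image_of_injective _ (Option.some_injective V)] at h5
      omega
  · rw [hadd, htight]
    omega
end

section
/- For every even n ≥ 6, the wheel W_n (an (n−1)-cycle plus a vertex adjacent to all cycle vertices) is (2,0)-stable with α(W_n) = n/2 − 1. -/
open SimpleGraph Set

/-- The cycle graph on `n` vertices. -/
def cycleG (n : ℕ) : SimpleGraph (ZMod n) :=
  SimpleGraph.fromRel (fun i j => i = j + 1)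

/-- The wheel on `n` vertices: an `(n-1)`-cycle together with a hub vertex (`none`)
adjacent to all cycle vertices. -/
def wheelG (n : ℕ) : SimpleGraph (Option (ZMod (n - 1))) :=
  SimpleGraph.fromRel (fun a b => a = none ∨ ∃ i, a = some i ∧ b = some (i + 1))

namespace WheelAux

lemma indepNumOn_eq_of {V : Type*} (G : SimpleGraph V) (A : Set V) (k : ℕ)
    (hex : ∃ s : Finset V, ↑s ⊆ A ∧ s.card = k ∧
      ∀ x ∈ s, ∀ y ∈ s, x ≠ y → ¬ G.Adj x y)
    (hub : ∀ s : Finset V, (∀ x ∈ s, ∀ y ∈ s, x ≠ y → ¬ G.Adj x y) → s.card ≤ k) :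
    indepNumOn G A = k := by
  obtain ⟨s, h1, h2, h3⟩ := hex
  have hmem : k ∈ {n | ∃ s : Finset V, ↑s ⊆ A ∧ s.card = n ∧
      ∀ x ∈ s, ∀ y ∈ s, x ≠ y → ¬ G.Adj x y} := ⟨s, h1, h2, h3⟩
  have hbdd : ∀ x ∈ {n | ∃ s : Finset V, ↑s ⊆ A ∧ s.card = n ∧
      ∀ x ∈ s, ∀ y ∈ s, x ≠ y → ¬ G.Adj x y}, x ≤ k := by
    rintro x ⟨t, ht1, rfl, ht3⟩
    exact hub t ht3
  exact le_antisymm (csSup_le ⟨k, hmem⟩ hbdd) (le_csSup ⟨k, hbdd⟩ hmem)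

variable {n : ℕ}

lemma wheel_adj_some_some (i j : ZMod (n-1)) :
    (wheelG n).Adj (some i) (some j) ↔ i ≠ j ∧ (j = i + 1 ∨ i = j + 1) := by
  simp [wheelG, SimpleGraph.fromRel_adj]

lemma wheel_adj_none_some (x : ZMod (n-1)) :
    (wheelG n).Adj none (some x) := by
  simp [wheelG, SimpleGraph.fromRel_adj]

lemma cast_inj_small (hn : 6 ≤ n) {p q : ℕ} (hp : p < n-1) (hq : q < n-1)
    (h : (p : ZMod (n-1)) = q) : p = q := by
  rw [ZMod.natCast_eq_natCast_iff', Nat.mod_eq_of_lt hp, Nat.mod_eq_of_lt hq] at h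
  exact h

lemma not_adj_offsets (hn : 6 ≤ n) (a : ZMod (n-1)) {p q : ℕ}
    (hp1 : 1 ≤ p) (hp2 : p ≤ n-2) (hq1 : 1 ≤ q) (hq2 : q ≤ n-2)
    (h1 : q ≠ p+1) (h2 : p ≠ q+1) :
    ¬ (wheelG n).Adj (some (a + (p : ZMod (n-1)))) (some (a + (q : ZMod (n-1)))) := by
  rw [wheel_adj_some_some]
  rintro ⟨hne, h | h⟩
  · have h' : ((q : ℕ) : ZMod (n-1)) = ((p+1 : ℕ) : ZMod (n-1)) := by
      push_cast
      linear_combination h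
    rw [ZMod.natCast_eq_natCast_iff', Nat.mod_eq_of_lt (by omega : q < n-1)] at h'
    rcases Nat.lt_or_ge (p+1) (n-1) with hc | hc
    · rw [Nat.mod_eq_of_lt hc] at h'; omega
    · have hpe : p + 1 = n - 1 := by omega
      rw [hpe, Nat.mod_self] at h'; omega
  · have h' : ((p : ℕ) : ZMod (n-1)) = ((q+1 : ℕ) : ZMod (n-1)) := by
      push_cast
      linear_combination h
    rw [ZMod.natCast_eq_natCast_iff', Nat.mod_eq_of_lt (by omega : p < n-1)] at h'
    rcases Nat.lt_or_ge (q+1) (n-1) with hc | hc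
    · rw [Nat.mod_eq_of_lt hc] at h'; omega
    · have hqe : q + 1 = n - 1 := by omega
      rw [hqe, Nat.mod_self] at h'; omega

/-- Global upper bound. -/
lemma wheel_indep_le (hn : 6 ≤ n) (heven : Even n) (s : Finset (Option (ZMod (n-1))))
    (hi : ∀ x ∈ s, ∀ y ∈ s, x ≠ y → ¬ (wheelG n).Adj x y) : s.card ≤ n/2 - 1 := by
  haveI : NeZero (n-1) := ⟨by omega⟩
  by_cases hnone : none ∈ s
  · have hsub : s ⊆ {none} := by
      intro x hx
      rcases x with _ | i
      · simp
      · exact absurd (wheel_adj_none_some i)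
          (hi none hnone (some i) hx (by simp))
    have := Finset.card_le_card hsub
    simp only [Finset.card_singleton] at this
    omega
  · set t : Finset (ZMod (n-1)) := s.preimage some ((Option.some_injective _).injOn) with ht
    have hst : s = t.image some := by
      ext x
      rcases x with _ | i
      · simp [hnone]
      · simp [ht, Finset.mem_preimage]
    have hcard : s.card = t.card := by
      rw [hst, Finset.card_image_of_injective _ (Option.some_injective _)]
    have hind : ∀ i ∈ t, ∀ j ∈ t, j ≠ i + 1 := by
      intro i hit j hjt hji
      have hio : some i ∈ s := by rw [hst]; exact Finset.mem_image_of_mem _ hit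
      have hjo : some j ∈ s := by rw [hst]; exact Finset.mem_image_of_mem _ hjt
      by_cases hij : i = j
      · subst hij
        haveI : Fact (1 < n - 1) := ⟨by omega⟩
        exact one_ne_zero (show (1 : ZMod (n-1)) = 0 by linear_combination -hji)
      · exact hi (some i) hio (some j) hjo (by simpa using hij)
          ((wheel_adj_some_some i j).2 ⟨hij, Or.inl hji⟩)
    have hdisj : Disjoint t (t.image (· + 1)) := by
      rw [Finset.disjoint_right]
      intro x hx hxt
      obtain ⟨y, hy, rfl⟩ := Finset.mem_image.1 hx
      exact hind y hy (y+1) hxt rfl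
    have hcu : t.card + t.card ≤ n - 1 := by
      have h1 : (t ∪ t.image (· + 1)).card = t.card + t.card := by
        rw [Finset.card_union_of_disjoint hdisj,
          Finset.card_image_of_injective _ (add_left_injective 1)]
      have h2 := Finset.card_le_univ (t ∪ t.image (· + 1))
      rw [h1] at h2
      simpa [ZMod.card] using h2
    obtain ⟨r, hr⟩ := heven
    omega

/-- Construction: an independent set from a set of offsets. -/
lemma construction (hn : 6 ≤ n) (a : ZMod (n-1)) (O : Finset ℕ)
    (hO : ∀ p ∈ O, 1 ≤ p ∧ p ≤ n - 2)
    (hcons : ∀ p ∈ O, ∀ q ∈ O, q ≠ p + 1)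
    (hcardO : O.card = n/2 - 1)
    (A : Set (Option (ZMod (n-1))))
    (hA : ∀ p ∈ O, (some (a + (p : ZMod (n-1))) : Option (ZMod (n-1))) ∈ A) :
    ∃ s : Finset (Option (ZMod (n-1))), ↑s ⊆ A ∧ s.card = n/2 - 1 ∧
      ∀ x ∈ s, ∀ y ∈ s, x ≠ y → ¬ (wheelG n).Adj x y := by
  refine ⟨O.image (fun p : ℕ => (some (a + (p : ZMod (n-1))) : Option (ZMod (n-1)))), ?_, ?_, ?_⟩
  · intro x hx
    simp only [Finset.coe_image, Set.mem_image, Finset.mem_coe] at hx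
    obtain ⟨p, hp, rfl⟩ := hx
    exact hA p hp
  · rw [Finset.card_image_of_injOn, hcardO]
    intro p hp q hq h
    simp only [Option.some_inj] at h
    have := add_left_cancel h
    exact cast_inj_small hn (by have := hO p hp; omega) (by have := hO q hq; omega) this
  · intro x hx y hy hxy
    simp only [Finset.mem_image] at hx hy
    obtain ⟨p, hp, rfl⟩ := hx
    obtain ⟨q, hq, rfl⟩ := hy
    exact not_adj_offsets hn a (hO p hp).1 (hO p hp).2 (hO q hq).1 (hO q hq).2
      (hcons p hp q hq) (hcons q hq p hp)

/-- Offset set 1: shifted odd numbers. -/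
def O1 (n : ℕ) : Finset ℕ := (Finset.range (n/2 - 1)).image (fun k => 2*k+1)

lemma O1_mem (hn : 6 ≤ n) (heven : Even n) : ∀ p ∈ O1 n, 1 ≤ p ∧ p ≤ n - 2 := by
  intro p hp
  simp only [O1, Finset.mem_image, Finset.mem_range] at hp
  obtain ⟨k, hk, rfl⟩ := hp
  obtain ⟨r, rfl⟩ := heven
  omega

lemma O1_cons : ∀ p ∈ O1 n, ∀ q ∈ O1 n, q ≠ p + 1 := by
  intro p hp q hq
  simp only [O1, Finset.mem_image, Finset.mem_range] at hp hq
  obtain ⟨k, hk, rfl⟩ := hp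
  obtain ⟨j, hj, rfl⟩ := hq
  omega

lemma O1_card : (O1 n).card = n/2 - 1 := by
  rw [O1, Finset.card_image_of_injective _ (fun a b h => by omega), Finset.card_range]

lemma O1_ne_zero : ∀ p ∈ O1 n, p ≠ 0 := by
  intro p hp
  simp only [O1, Finset.mem_image, Finset.mem_range] at hp
  obtain ⟨k, hk, rfl⟩ := hp
  omega

/-- Offset set 2: two arcs, avoiding 0 and d. -/
def O2 (n d : ℕ) : Finset ℕ :=
  ((Finset.range (d/2)).image (fun k => 2*k+1)) ∪
    ((Finset.range ((n-1-d)/2)).image (fun k => d+1+2*k))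

lemma O2_mem (hn : 6 ≤ n) (hd1 : 1 ≤ d) (hd2 : d ≤ n - 2) :
    ∀ p ∈ O2 n d, 1 ≤ p ∧ p ≤ n - 2 := by
  intro p hp
  simp only [O2, Finset.mem_union, Finset.mem_image, Finset.mem_range] at hp
  rcases hp with ⟨k, hk, rfl⟩ | ⟨k, hk, rfl⟩ <;> omega

lemma O2_cons (hd1 : 1 ≤ d) : ∀ p ∈ O2 n d, ∀ q ∈ O2 n d, q ≠ p + 1 := by
  intro p hp q hq
  simp only [O2, Finset.mem_union, Finset.mem_image, Finset.mem_range] at hp hq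
  rcases hp with ⟨k, hk, rfl⟩ | ⟨k, hk, rfl⟩ <;>
    rcases hq with ⟨j, hj, rfl⟩ | ⟨j, hj, rfl⟩ <;> omega

lemma O2_card (hn : 6 ≤ n) (heven : Even n) (hd1 : 1 ≤ d) (hd2 : d ≤ n - 2) :
    (O2 n d).card = n/2 - 1 := by
  obtain ⟨r, rfl⟩ := heven
  rw [O2, Finset.card_union_of_disjoint, Finset.card_image_of_injective _
      (fun a b h => by omega), Finset.card_image_of_injective _ (fun a b h => by omega),
    Finset.card_range, Finset.card_range]
  · omega
  · rw [Finset.disjoint_left]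
    intro x hx hx'
    simp only [Finset.mem_image, Finset.mem_range] at hx hx'
    obtain ⟨k, hk, rfl⟩ := hx
    obtain ⟨j, hj, h⟩ := hx'
    omega

lemma O2_ne (hd1 : 1 ≤ d) : ∀ p ∈ O2 n d, p ≠ 0 ∧ p ≠ d := by
  intro p hp
  simp only [O2, Finset.mem_union, Finset.mem_image, Finset.mem_range] at hp
  rcases hp with ⟨k, hk, rfl⟩ | ⟨k, hk, rfl⟩ <;> omega

lemma ne_of_offset (hn : 6 ≤ n) (a : ZMod (n-1)) {p : ℕ} (hp1 : 1 ≤ p) (hp2 : p ≤ n-2) :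
    a + (p : ZMod (n-1)) ≠ a := by
  intro h
  have h0 : ((p : ℕ) : ZMod (n-1)) = ((0 : ℕ) : ZMod (n-1)) := by
    simpa using add_left_cancel (h.trans (by ring_nf : a = a + ((0:ℕ) : ZMod (n-1))))
  have := cast_inj_small hn (by omega) (by omega) h0
  omega

end WheelAux

open WheelAux in
theorem even_wheel_stable_two_zero (n : ℕ) (heven : Even n) (hn : 6 ≤ n) :
    _root_.indepNum (wheelG n) = n / 2 - 1 ∧
      ∀ u v : Option (ZMod (n - 1)), u ≠ v →
        indepNumOn (wheelG n) ({u, v} : Set (Option (ZMod (n - 1))))ᶜ = _root_.indepNum (wheelG n) := by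
  haveI : NeZero (n-1) := ⟨by omega⟩
  have hub := fun s hi => wheel_indep_le hn heven s hi
  have halpha : _root_.indepNum (wheelG n) = n / 2 - 1 := by
    refine indepNumOn_eq_of _ _ _ ?_ hub
    exact construction hn 0 (O1 n) (O1_mem hn heven) O1_cons O1_card _ (fun p _ => trivial)
  refine ⟨halpha, ?_⟩
  intro u v huv
  rw [halpha]
  refine indepNumOn_eq_of _ _ _ ?_ hub
  have key : ∀ b : ZMod (n-1), ∀ A : Set (Option (ZMod (n-1))),
      (∀ x : ZMod (n-1), x ≠ b → some x ∈ A) →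
      ∃ s : Finset (Option (ZMod (n-1))), ↑s ⊆ A ∧ s.card = n/2 - 1 ∧
        ∀ x ∈ s, ∀ y ∈ s, x ≠ y → ¬ (wheelG n).Adj x y := by
    intro b A hA
    refine construction hn b (O1 n) (O1_mem hn heven) O1_cons O1_card A ?_
    intro p hp
    have h := O1_mem hn heven p hp
    exact hA _ (ne_of_offset hn b h.1 h.2)
  match u, v with
  | none, none => exact absurd rfl huv
  | none, some b =>
    refine key b _ ?_
    intro x hx
    simp [hx]
  | some b, none =>
    refine key b _ ?_
    intro x hx
    simp [hx]
  | some a, some b =>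
    have hab : a ≠ b := by simpa using huv
    set d := (b - a).val with hd
    have hd1 : 1 ≤ d := by
      rcases Nat.eq_zero_or_pos d with h | h
      · exfalso
        rw [hd] at h
        have : b - a = 0 := by rwa [← ZMod.val_eq_zero]
        apply hab
        linear_combination -this
      · exact h
    have hd2 : d ≤ n - 2 := by
      have := ZMod.val_lt (b - a)
      omega
    have hbd : a + (d : ZMod (n-1)) = b := by
      rw [hd, ZMod.natCast_rightInverse (b - a)]
      ring
    refine construction hn a (O2 n d) (O2_mem hn hd1 hd2) (O2_cons hd1)
      (O2_card hn heven hd1 hd2) _ ?_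
    intro p hp
    have hm := O2_mem hn hd1 hd2 p hp
    have hne := O2_ne hd1 p hp
    simp only [Set.mem_compl_iff, Set.mem_insert_iff, Set.mem_singleton_iff, not_or]
    constructor
    · simp only [Option.some_inj]
      exact ne_of_offset hn a hm.1 hm.2
    · simp only [Option.some_inj]
      intro h
      rw [← hbd] at h
      have := add_left_cancel h
      exact hne.2 (cast_inj_small hn (by omega) (by omega) this)
end

section
/- There is no 6-vertex tight (3,0)-stable graph; i.e., no graph G on 6 vertices with α(G) = 2 such that removing any 3 vertices leaves independence number 2. -/
open SimpleGraph Set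

-- auxiliary: the defining set is bounded above by card V
lemma indep_bdd {V : Type*} [Fintype V] (G : SimpleGraph V) (A : Set V) :
    BddAbove {n | ∃ s : Finset V, ↑s ⊆ A ∧ s.card = n ∧
      ∀ x ∈ s, ∀ y ∈ s, x ≠ y → ¬ G.Adj x y} := by
  refine ⟨Fintype.card V, ?_⟩
  rintro n ⟨s, -, rfl, -⟩
  exact Finset.card_le_card (Finset.subset_univ s) |>.trans (le_of_eq (Finset.card_univ))

-- Ramsey-type: on 6 vertices, triangle or independent 3-set
lemma ramsey6 (G : SimpleGraph (Fin 6)) :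
    (∃ a b c : Fin 6, a ≠ b ∧ a ≠ c ∧ b ≠ c ∧ G.Adj a b ∧ G.Adj a c ∧ G.Adj b c) ∨
    (∃ a b c : Fin 6, a ≠ b ∧ a ≠ c ∧ b ≠ c ∧ ¬G.Adj a b ∧ ¬G.Adj a c ∧ ¬G.Adj b c) := by
  classical
  set v : Fin 6 := 0
  set U : Finset (Fin 6) := Finset.univ.erase v
  have hU : U.card = 5 := by decide
  set N := U.filter (fun w => G.Adj v w) with hN
  by_cases h3 : 3 ≤ N.card
  · obtain ⟨T, hTN, hT3⟩ := Finset.exists_subset_card_eq h3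
    obtain ⟨a, b, c, hab, hac, hbc, rfl⟩ := Finset.card_eq_three.mp hT3
    have ha : G.Adj v a := (Finset.mem_filter.mp (hTN (by simp))).2
    have hb : G.Adj v b := (Finset.mem_filter.mp (hTN (by simp))).2
    have hc : G.Adj v c := (Finset.mem_filter.mp (hTN (by simp))).2
    by_cases h1 : G.Adj a b
    · exact Or.inl ⟨v, a, b, ha.ne, hb.ne, hab, ha, hb, h1⟩
    by_cases h2 : G.Adj a c
    · exact Or.inl ⟨v, a, c, ha.ne, hc.ne, hac, ha, hc, h2⟩
    by_cases h4 : G.Adj b c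
    · exact Or.inl ⟨v, b, c, hb.ne, hc.ne, hbc, hb, hc, h4⟩
    exact Or.inr ⟨a, b, c, hab, hac, hbc, h1, h2, h4⟩
  · have hM : 3 ≤ (U \ N).card := by
      have hNU : N ⊆ U := by rw [hN]; exact Finset.filter_subset _ _
      have := Finset.card_sdiff_add_card_eq_card hNU
      omega
    obtain ⟨T, hTM, hT3⟩ := Finset.exists_subset_card_eq hM
    obtain ⟨a, b, c, hab, hac, hbc, rfl⟩ := Finset.card_eq_three.mp hT3
    have key : ∀ x ∈ ({a,b,c} : Finset (Fin 6)), x ≠ v ∧ ¬ G.Adj v x := by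
      intro x hx
      have := hTM hx
      rw [Finset.mem_sdiff] at this
      refine ⟨Finset.ne_of_mem_erase this.1, fun h => this.2 ?_⟩
      exact Finset.mem_filter.mpr ⟨this.1, h⟩
    obtain ⟨hav, ha⟩ := key a (by simp)
    obtain ⟨hbv, hb⟩ := key b (by simp)
    obtain ⟨hcv, hc⟩ := key c (by simp)
    by_cases h1 : G.Adj a b
    · by_cases h2 : G.Adj a c
      · by_cases h4 : G.Adj b c
        · exact Or.inl ⟨a, b, c, hab, hac, hbc, h1, h2, h4⟩
        · exact Or.inr ⟨v, b, c, Ne.symm hbv, Ne.symm hcv, hbc, hb, hc, h4⟩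
      · exact Or.inr ⟨v, a, c, Ne.symm hav, Ne.symm hcv, hac, ha, hc, h2⟩
    · exact Or.inr ⟨v, a, b, Ne.symm hav, Ne.symm hbv, hab, ha, hb, h1⟩

theorem no_six_vertex_tight_three_zero :
    ¬ ∃ G : SimpleGraph (Fin 6), _root_.indepNum G = 2 ∧
      ∀ S : Finset (Fin 6), S.card = 3 → indepNumOn G (↑S : Set (Fin 6))ᶜ = 2 := by
  classical
  rintro ⟨G, hα, hS⟩
  -- no independent 3-set
  have noind : ¬ ∃ a b c : Fin 6, a ≠ b ∧ a ≠ c ∧ b ≠ c ∧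
      ¬G.Adj a b ∧ ¬G.Adj a c ∧ ¬G.Adj b c := by
    rintro ⟨a, b, c, hab, hac, hbc, h1, h2, h3⟩
    have h3mem : (3 : ℕ) ∈ {n | ∃ s : Finset (Fin 6), ↑s ⊆ (Set.univ : Set (Fin 6)) ∧ s.card = n ∧
        ∀ x ∈ s, ∀ y ∈ s, x ≠ y → ¬ G.Adj x y} := by
      refine ⟨{a,b,c}, by simp, Finset.card_eq_three.mpr ⟨a,b,c,hab,hac,hbc,rfl⟩, ?_⟩
      intro x hx y hy hxy
      simp only [Finset.mem_insert, Finset.mem_singleton] at hx hy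
      rcases hx with rfl|rfl|rfl <;> rcases hy with rfl|rfl|rfl <;>
        first
          | exact absurd rfl hxy
          | assumption
          | (intro h; exact h1 h.symm)
          | (intro h; exact h2 h.symm)
          | (intro h; exact h3 h.symm)
    have := le_csSup (indep_bdd G Set.univ) h3mem
    rw [_root_.indepNum, indepNumOn] at hα
    omega
  -- so there is a triangle
  obtain ⟨a, b, c, hab, hac, hbc, h1, h2, h3⟩ := (ramsey6 G).resolve_right noind
  -- remove the complement of the triangle
  set S : Finset (Fin 6) := ({a,b,c} : Finset (Fin 6))ᶜ with hSdef
  have hcard : S.card = 3 := by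
    have : ({a,b,c} : Finset (Fin 6)).card = 3 :=
      Finset.card_eq_three.mpr ⟨a,b,c,hab,hac,hbc,rfl⟩
    rw [hSdef, Finset.card_compl, this]
    rfl
  have h2S := hS S hcard
  -- 2 is attained: sSup = 2 > 0, set nonempty & bdd above, so 2 ∈ set
  have hne : {n | ∃ s : Finset (Fin 6), ↑s ⊆ ((↑S : Set (Fin 6))ᶜ) ∧ s.card = n ∧
      ∀ x ∈ s, ∀ y ∈ s, x ≠ y → ¬ G.Adj x y}.Nonempty :=
    ⟨0, ∅, by simp, by simp, by simp⟩
  have hmem := Nat.sSup_mem hne (indep_bdd G _)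
  rw [indepNumOn] at h2S
  rw [h2S] at hmem
  obtain ⟨s, hsub, hsc, hind⟩ := hmem
  -- s has two distinct elements inside {a,b,c}, both nonadjacent: contradiction
  obtain ⟨x, y, hxy, rfl⟩ := Finset.card_eq_two.mp hsc
  have hx : x = a ∨ x = b ∨ x = c := by
    have := hsub (by simp : (x : Fin 6) ∈ (↑({x,y} : Finset (Fin 6)) : Set (Fin 6)))
    simp [hSdef] at this; tauto
  have hy : y = a ∨ y = b ∨ y = c := by
    have := hsub (by simp : (y : Fin 6) ∈ (↑({x,y} : Finset (Fin 6)) : Set (Fin 6)))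
    simp [hSdef] at this; tauto
  have hnadj : ¬ G.Adj x y := hind x (by simp) y (by simp) hxy
  rcases hx with rfl|rfl|rfl <;> rcases hy with rfl|rfl|rfl <;>
    first
      | exact hxy rfl
      | exact hnadj (by assumption)
      | exact hnadj (SimpleGraph.adj_symm _ (by assumption))
end

section
/- For m ≥ 3, let G_m be the circulant graph on vertex set ℤ/(2m²+2m)ℤ with i ∼ j iff i−j ≡ ±m or ±(m+1) (mod 2m²+2m). Then α(G_m) = m². -/
open SimpleGraph Set

/-- The circulant graph on `ℤ/(2m²+2m)ℤ` with connection set `{±m, ±(m+1)}`. -/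
def circG (m : ℕ) : SimpleGraph (ZMod (2 * m ^ 2 + 2 * m)) :=
  SimpleGraph.fromRel (fun i j =>
    i - j = (m : ZMod (2 * m ^ 2 + 2 * m)) ∨ i - j = (m : ZMod (2 * m ^ 2 + 2 * m)) + 1)

private lemma int_eq_zero_of_dvd_of_abs_lt {d x : ℤ} (h : d ∣ x) (hb : |x| < d) : x = 0 := by
  by_contra hx
  have h1 : d ∣ |x| := (dvd_abs d x).mpr h
  have h2 : 0 < |x| := abs_pos.mpr hx
  have h3 := Int.le_of_dvd h2 h1
  omega

/-- Key counting upper bound for the independence number. -/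
private lemma circ_upper (m n : ℕ) (hm : 3 ≤ m) (hn : n = 2 * m ^ 2 + 2 * m)
    (A : Finset (ZMod n))
    (hkey : ∀ a ∈ A, ∀ b ∈ A, b - a ≠ (m : ZMod n) ∧ b - a ≠ (m : ZMod n) + 1) :
    A.card ≤ m ^ 2 := by
  classical
  have hnpos : 0 < n := by nlinarith
  haveI : NeZero n := ⟨hnpos.ne'⟩
  -- abbreviations
  set M : ZMod n := (m : ZMod n) with hMdef
  set R : Finset (ZMod n) := A ∪ A.image (· + 1) with hRdef
  have hAR : A ⊆ R := Finset.subset_union_left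
  have hmemR : ∀ x : ZMod n, x ∈ R ↔ (x ∈ A ∨ x - 1 ∈ A) := by
    intro x
    simp only [hRdef, Finset.mem_union, Finset.mem_image]
    constructor
    · rintro (h | ⟨a, ha, rfl⟩)
      · exact Or.inl h
      · right; simpa using ha
    · rintro (h | h)
      · exact Or.inl h
      · exact Or.inr ⟨x - 1, h, by ring⟩
  -- consequences of independence
  have hAR1 : ∀ a ∈ A, ∀ r ∈ R, a - r ≠ M := by
    intro a ha r hr heq
    rcases (hmemR r).mp hr with h | h
    · exact (hkey r h a ha).1 heq
    · refine (hkey (r - 1) h a ha).2 ?_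
      rw [show a - (r - 1) = a - r + 1 by ring, heq]
  have hAR2 : ∀ a ∈ A, ∀ r ∈ R, r - a ≠ M + 1 := by
    intro a ha r hr heq
    rcases (hmemR r).mp hr with h | h
    · exact (hkey a ha r h).2 heq
    · refine (hkey a ha (r - 1) h).1 ?_
      rw [show r - 1 - a = r - a - 1 by ring, heq]; ring
  have hAM : ∀ a ∈ A, a - M ∉ R := by
    intro a ha hmem
    exact hAR1 a ha (a - M) hmem (by ring)
  have hAE : ∀ a ∈ A, a + M ∉ A := by
    intro a ha hmem
    exact (hkey a ha (a + M) hmem).1 (by ring)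
  -- block ends
  set E : Finset (ZMod n) := A.filter (fun a => a + 1 ∉ A) with hEdef
  have hRcard : R.card = A.card + E.card := by
    have himg : A.image (· + 1) \ A = E.image (· + 1) := by
      ext x
      simp only [Finset.mem_sdiff, Finset.mem_image, hEdef, Finset.mem_filter]
      constructor
      · rintro ⟨⟨a, ha, rfl⟩, hx⟩
        exact ⟨a, ⟨ha, hx⟩, rfl⟩
      · rintro ⟨a, ⟨ha, ha1⟩, rfl⟩
        exact ⟨⟨a, ha, rfl⟩, ha1⟩
    rw [hRdef, ← Finset.union_sdiff_self_eq_union,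
      Finset.card_union_of_disjoint Finset.disjoint_sdiff, himg,
      Finset.card_image_of_injective _ (add_left_injective 1)]
  -- run ends along step 2m+1
  set c : ZMod n := M + M + 1 with hcdef
  set W : Finset (ZMod n) := R.filter (fun r => r + c ∈ R) with hWdef
  set D : Finset (ZMod n) := R.filter (fun r => ¬ (r + c ∈ R)) with hDdef
  have hWD : W.card + D.card = R.card :=
    Finset.card_filter_add_card_filter_not _
  -- the three disjoint sets
  set X : Finset (ZMod n) := R.image (· + M) with hXdef
  set Y : Finset (ZMod n) := R.image (· - (M + 1)) with hYdef
  have hXcard : X.card = R.card := Finset.card_image_of_injective _ (add_left_injective M)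
  have hYcard : Y.card = R.card := by
    refine Finset.card_image_of_injective _ ?_
    intro x y h
    simpa using sub_left_injective h
  have hXY : X ∩ Y = W.image (· + M) := by
    ext x
    simp only [hXdef, hYdef, hWdef, Finset.mem_inter, Finset.mem_image, Finset.mem_filter]
    constructor
    · rintro ⟨⟨r, hr, rfl⟩, ⟨r', hr', heq⟩⟩
      refine ⟨r, ⟨hr, ?_⟩, rfl⟩
      have : r' = r + c := by
        have : r' = r + M + (M + 1) := by rw [← heq]; ring
        rw [this, hcdef]; ring
      rwa [← this]
    · rintro ⟨r, ⟨hr, hrc⟩, rfl⟩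
      exact ⟨⟨r, hr, rfl⟩, ⟨r + c, hrc, by rw [hcdef]; ring⟩⟩
  have hdisj1 : Disjoint A X := by
    rw [Finset.disjoint_left]
    rintro x hx hX
    rw [hXdef, Finset.mem_image] at hX
    obtain ⟨r, hr, rfl⟩ := hX
    exact hAR1 (r + M) hx r hr (by ring)
  have hdisj2 : Disjoint A Y := by
    rw [Finset.disjoint_left]
    rintro x hx hY
    rw [hYdef, Finset.mem_image] at hY
    obtain ⟨r, hr, heq⟩ := hY
    refine hAR2 x hx r hr ?_
    rw [← heq]; ring
  have hXYcard : (X ∩ Y).card = W.card := by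
    rw [hXY, Finset.card_image_of_injective _ (add_left_injective M)]
  have hu1 : (X ∪ Y).card + (X ∩ Y).card = X.card + Y.card :=
    Finset.card_union_add_card_inter X Y
  have hu2 : (A ∪ (X ∪ Y)).card = A.card + (X ∪ Y).card :=
    Finset.card_union_of_disjoint (Finset.disjoint_union_right.mpr ⟨hdisj1, hdisj2⟩)
  have hu3 : (A ∪ (X ∪ Y)).card ≤ n := by
    have := Finset.card_le_univ (A ∪ (X ∪ Y))
    rwa [ZMod.card] at this
  have hmain : 2 * A.card + E.card + D.card ≤ n := by omega
  -- pigeonhole for E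
  have hexE : ∀ a : ZMod n, ∃ j : ℕ,
      a ∈ A → (j < m ∧ a + (j : ZMod n) ∈ A ∧ a + ((j : ℕ) + 1 : ℕ) ∉ A) := by
    intro a
    by_cases ha : a ∈ A
    swap
    · exact ⟨0, fun h => absurd h ha⟩
    have hPm : a + ((m : ℕ) : ZMod n) ∉ A := by
      intro hmem
      exact hAE a ha (by rwa [hMdef])
    have hex : ∃ j : ℕ, a + (j : ZMod n) ∉ A := ⟨m, hPm⟩
    set k := Nat.find hex with hk
    have hspec : a + ((k : ℕ) : ZMod n) ∉ A := Nat.find_spec hex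
    have hkm : k ≤ m := Nat.find_le hPm
    have hk0 : k ≠ 0 := by
      intro h0
      rw [h0] at hspec
      simp only [Nat.cast_zero, add_zero] at hspec
      exact hspec ha
    refine ⟨k - 1, fun _ => ⟨by omega, ?_, ?_⟩⟩
    · have := Nat.find_min hex (m := k - 1) (by omega)
      simpa using this
    · have : k - 1 + 1 = k := by omega
      rw [this]; exact hspec
  choose jf hjf using hexE
  have hAEcard : A.card ≤ m * E.card := by
    refine Finset.card_le_mul_card_image_of_maps_to
      (f := fun a => a + ((jf a : ℕ) : ZMod n)) (t := E) ?_ m ?_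
    · intro a ha
      obtain ⟨hj, hin, hout⟩ := hjf a ha
      rw [hEdef, Finset.mem_filter]
      refine ⟨hin, ?_⟩
      intro hmem
      refine hout ?_
      have : ((jf a + 1 : ℕ) : ZMod n) = ((jf a : ℕ) : ZMod n) + 1 := by push_cast; ring
      rwa [this, ← add_assoc]
    · intro e he
      have hsub : A.filter (fun a => a + ((jf a : ℕ) : ZMod n) = e) ⊆
          (Finset.range m).image (fun j : ℕ => e - (j : ZMod n)) := by
        intro a ha
        rw [Finset.mem_filter] at ha
        obtain ⟨haA, hfa⟩ := ha
        obtain ⟨hj, _, _⟩ := hjf a haA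
        rw [Finset.mem_image]
        exact ⟨jf a, Finset.mem_range.mpr hj, by rw [← hfa]; ring⟩
      calc (A.filter (fun a => a + ((jf a : ℕ) : ZMod n) = e)).card
          ≤ ((Finset.range m).image (fun j : ℕ => e - (j : ZMod n))).card :=
            Finset.card_le_card hsub
        _ ≤ m := by
            refine le_trans Finset.card_image_le ?_
            simp
  -- pigeonhole for D
  have hmc : ((m : ℕ) : ZMod n) * c = - M := by
    have h1 : ((m * (2 * m + 1) + m : ℕ) : ZMod n) = 0 := by
      rw [show m * (2 * m + 1) + m = n by rw [hn]; ring]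
      exact ZMod.natCast_self n
    have h2 : ((m * (2 * m + 1) : ℕ) : ZMod n) = ((m : ℕ) : ZMod n) * c := by
      push_cast
      rw [hcdef, hMdef]
      ring
    push_cast at h1
    rw [hcdef, hMdef]
    linear_combination h1
  have hexD : ∀ a : ZMod n, ∃ k : ℕ,
      a ∈ A → (k < m ∧ (a + (k : ZMod n) * c ∈ R ∧ a + ((k : ℕ) + 1 : ℕ) * c ∉ R)) := by
    intro a
    by_cases ha : a ∈ A
    swap
    · exact ⟨0, fun h => absurd h ha⟩
    have hPm : a + ((m : ℕ) : ZMod n) * c ∉ R := by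
      rw [hmc, show a + - M = a - M by ring]
      exact hAM a ha
    have hex : ∃ k : ℕ, a + ((k : ℕ) : ZMod n) * c ∉ R := ⟨m, hPm⟩
    set k := Nat.find hex with hk
    have hspec : a + ((k : ℕ) : ZMod n) * c ∉ R := Nat.find_spec hex
    have hkm : k ≤ m := Nat.find_le hPm
    have hk0 : k ≠ 0 := by
      intro h0
      rw [h0] at hspec
      simp only [Nat.cast_zero, zero_mul, add_zero] at hspec
      exact hspec (hAR ha)
    refine ⟨k - 1, fun _ => ⟨by omega, ?_, ?_⟩⟩
    · have := Nat.find_min hex (m := k - 1) (by omega)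
      simpa using this
    · have h1 : (k - 1 + 1 : ℕ) = k := by omega
      rw [h1]
      exact hspec
  choose kf hkf using hexD
  have hADcard : A.card ≤ m * D.card := by
    refine Finset.card_le_mul_card_image_of_maps_to
      (f := fun a => a + ((kf a : ℕ) : ZMod n) * c) (t := D) ?_ m ?_
    · intro a ha
      obtain ⟨hk, hin, hout⟩ := hkf a ha
      rw [hDdef, Finset.mem_filter]
      refine ⟨hin, ?_⟩
      intro hmem
      refine hout ?_
      have : (((kf a + 1 : ℕ)) : ZMod n) * c = ((kf a : ℕ) : ZMod n) * c + c := by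
        push_cast; ring
      rwa [this, ← add_assoc]
    · intro d hd
      have hsub : A.filter (fun a => a + ((kf a : ℕ) : ZMod n) * c = d) ⊆
          (Finset.range m).image (fun k : ℕ => d - (k : ZMod n) * c) := by
        intro a ha
        rw [Finset.mem_filter] at ha
        obtain ⟨haA, hfa⟩ := ha
        obtain ⟨hk, _, _⟩ := hkf a haA
        rw [Finset.mem_image]
        exact ⟨kf a, Finset.mem_range.mpr hk, by rw [← hfa]; ring⟩
      calc (A.filter (fun a => a + ((kf a : ℕ) : ZMod n) * c = d)).card
          ≤ ((Finset.range m).image (fun k : ℕ => d - (k : ZMod n) * c)).card :=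
            Finset.card_le_card hsub
        _ ≤ m := by
            refine le_trans Finset.card_image_le ?_
            simp
  -- final arithmetic
  have h4 : (2 * m + 2) * A.card ≤ (2 * m + 2) * m ^ 2 := by
    have e1 : m * (2 * A.card + E.card + D.card) ≤ m * n :=
      Nat.mul_le_mul_left _ hmain
    have e2 : 2 * m * A.card + A.card + A.card ≤
        2 * m * A.card + m * E.card + m * D.card := by
      have := Nat.add_le_add (Nat.add_le_add (le_refl (2 * m * A.card)) hAEcard) hADcard
      omega
    calc (2 * m + 2) * A.card = 2 * m * A.card + A.card + A.card := by ring
      _ ≤ 2 * m * A.card + m * E.card + m * D.card := e2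
      _ = m * (2 * A.card + E.card + D.card) := by ring
      _ ≤ m * n := e1
      _ = (2 * m + 2) * m ^ 2 := by rw [hn]; ring
  exact Nat.le_of_mul_le_mul_left h4 (by omega)

theorem circG_indepNum (m : ℕ) (hm : 3 ≤ m) : _root_.indepNum (circG m) = m ^ 2 := by
  classical
  set n : ℕ := 2 * m ^ 2 + 2 * m with hn
  have hnpos : 0 < n := by
    rw [hn]
    have h0 : 0 < m := by omega
    nlinarith
  haveI : NeZero n := ⟨hnpos.ne'⟩
  have hMne : (m : ZMod n) ≠ 0 := by
    intro h
    rw [ZMod.natCast_eq_zero_iff] at h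
    have h3 := Nat.le_of_dvd (by omega) h
    rw [hn] at h3
    nlinarith
  have hM1ne : (m : ZMod n) + 1 ≠ 0 := by
    intro h
    have h2 : ((m + 1 : ℕ) : ZMod n) = 0 := by push_cast; rw [← h]
    rw [ZMod.natCast_eq_zero_iff] at h2
    have h3 := Nat.le_of_dvd (by omega) h2
    rw [hn] at h3
    nlinarith
  -- the defining set
  have hub : ∀ k ∈ {k | ∃ s : Finset (ZMod n), ↑s ⊆ (Set.univ : Set (ZMod n)) ∧
      s.card = k ∧ ∀ x ∈ s, ∀ y ∈ s, x ≠ y → ¬ (circG m).Adj x y}, k ≤ m ^ 2 := by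
    rintro k ⟨s, -, hcard, hind⟩
    have hkey : ∀ a ∈ s, ∀ b ∈ s, b - a ≠ (m : ZMod n) ∧ b - a ≠ (m : ZMod n) + 1 := by
      intro a ha b hb
      by_cases hab : a = b
      · subst hab
        constructor
        · simpa using fun h => hMne h.symm
        · simpa using fun h => hM1ne h.symm
      · have hnadj := hind b hb a ha (fun h => hab h.symm)
        rw [circG, SimpleGraph.fromRel_adj] at hnadj
        push_neg at hnadj
        have h2 := hnadj (fun h' => hab h'.symm)
        exact ⟨h2.1.1, h2.1.2⟩
    rw [← hcard]
    exact circ_upper m n hm hn s hkey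
  -- lower bound construction
  have hdvd2n : ((2 * m + 2 : ℤ)) ∣ (n : ℤ) := ⟨m, by rw [hn]; push_cast; ring⟩
  have harith : ∀ k r k' r' : ℕ, k < m → r < m → k' < m → r' < m →
      ∀ t : ℕ, (t = m ∨ t = m + 1) →
      ((k * (2 * m + 2) + r : ℕ) : ZMod n) - ((k' * (2 * m + 2) + r' : ℕ) : ZMod n)
        ≠ (t : ZMod n) := by
    intro k r k' r' hk hr hk' hr' t ht heq
    have h0 : ((((k : ℤ) * (2 * m + 2) + r) - ((k' : ℤ) * (2 * m + 2) + r') - t : ℤ)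
        : ZMod n) = 0 := by
      push_cast at heq ⊢
      linear_combination heq
    rw [ZMod.intCast_zmod_eq_zero_iff_dvd] at h0
    have h2 : ((2 * m + 2 : ℤ)) ∣
        (((k : ℤ) * (2 * m + 2) + r) - ((k' : ℤ) * (2 * m + 2) + r') - t) :=
      dvd_trans hdvd2n h0
    have h3 : ((2 * m + 2 : ℤ)) ∣ ((r : ℤ) - r' - t) := by
      have hrw : (r : ℤ) - r' - t =
          (((k : ℤ) * (2 * m + 2) + r) - ((k' : ℤ) * (2 * m + 2) + r') - t)
            - (2 * m + 2) * ((k : ℤ) - k') := by ring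
      rw [hrw]
      exact dvd_sub h2 (Dvd.intro _ rfl)
    have h4 : (r : ℤ) - r' - t = 0 := by
      refine int_eq_zero_of_dvd_of_abs_lt h3 (abs_lt.mpr ⟨?_, ?_⟩) <;>
        rcases ht with rfl | rfl <;> push_cast <;> omega
    rcases ht with rfl | rfl <;> omega
  have hinj : ∀ k r k' r' : ℕ, k < m → r < m → k' < m → r' < m →
      ((k * (2 * m + 2) + r : ℕ) : ZMod n) = ((k' * (2 * m + 2) + r' : ℕ) : ZMod n) →
      k = k' ∧ r = r' := by
    intro k r k' r' hk hr hk' hr' heq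
    have h0 : ((((k : ℤ) * (2 * m + 2) + r) - ((k' : ℤ) * (2 * m + 2) + r') : ℤ)
        : ZMod n) = 0 := by
      push_cast at heq ⊢
      linear_combination heq
    rw [ZMod.intCast_zmod_eq_zero_iff_dvd] at h0
    have h2 : ((2 * m + 2 : ℤ)) ∣
        (((k : ℤ) * (2 * m + 2) + r) - ((k' : ℤ) * (2 * m + 2) + r')) :=
      dvd_trans hdvd2n h0
    have h3 : ((2 * m + 2 : ℤ)) ∣ ((r : ℤ) - r') := by
      have hrw : (r : ℤ) - r' =
          (((k : ℤ) * (2 * m + 2) + r) - ((k' : ℤ) * (2 * m + 2) + r'))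
            - (2 * m + 2) * ((k : ℤ) - k') := by ring
      rw [hrw]
      exact dvd_sub h2 (Dvd.intro _ rfl)
    have h4 : (r : ℤ) - r' = 0 :=
      int_eq_zero_of_dvd_of_abs_lt h3 (abs_lt.mpr ⟨by omega, by omega⟩)
    have hrr : r = r' := by omega
    subst hrr
    have h5 : ((2 * m + 2 : ℤ)) * m ∣ ((2 * m + 2 : ℤ)) * ((k : ℤ) - k') := by
      have hneq : ((n : ℕ) : ℤ) = ((2 * m + 2 : ℤ)) * m := by rw [hn]; push_cast; ring
      have h6 : ((n : ℕ) : ℤ) ∣ ((2 * m + 2 : ℤ)) * ((k : ℤ) - k') := by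
        have hrw : ((2 * m + 2 : ℤ)) * ((k : ℤ) - k') =
            (((k : ℤ) * (2 * m + 2) + r) - ((k' : ℤ) * (2 * m + 2) + r)) := by ring
        rw [hrw]
        exact h0
      rwa [hneq] at h6
    have h7 : (m : ℤ) ∣ ((k : ℤ) - k') :=
      (mul_dvd_mul_iff_left (by positivity : ((2 * m + 2 : ℤ)) ≠ 0)).mp h5
    have h8 : (k : ℤ) - k' = 0 :=
      int_eq_zero_of_dvd_of_abs_lt h7 (abs_lt.mpr ⟨by omega, by omega⟩)
    exact ⟨by omega, rfl⟩
  set s0 : Finset (ZMod n) :=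
    ((Finset.range m) ×ˢ (Finset.range m)).image
      (fun p => ((p.1 * (2 * m + 2) + p.2 : ℕ) : ZMod n)) with hs0
  have hcard0 : s0.card = m ^ 2 := by
    rw [hs0, Finset.card_image_of_injOn, Finset.card_product, Finset.card_range, ← sq]
    rintro ⟨k, r⟩ hp ⟨k', r'⟩ hq hpq
    simp only [Finset.coe_product, Set.mem_prod, Finset.mem_coe, Finset.mem_range] at hp hq
    obtain ⟨h1, h2⟩ := hinj k r k' r' hp.1 hp.2 hq.1 hq.2 hpq
    simp [h1, h2]
  have hind0 : ∀ x ∈ s0, ∀ y ∈ s0, x ≠ y → ¬ (circG m).Adj x y := by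
    intro x hx y hy hxy hadj
    rw [hs0, Finset.mem_image] at hx hy
    obtain ⟨⟨k, r⟩, hp, rfl⟩ := hx
    obtain ⟨⟨k', r'⟩, hq, rfl⟩ := hy
    simp only [Finset.mem_product, Finset.mem_range] at hp hq
    rw [circG, SimpleGraph.fromRel_adj] at hadj
    obtain ⟨-, h⟩ := hadj
    have hM1 : (m : ZMod n) + 1 = ((m + 1 : ℕ) : ZMod n) := by push_cast; ring
    rcases h with (h | h) | (h | h)
    · exact harith k r k' r' hp.1 hp.2 hq.1 hq.2 m (Or.inl rfl) h
    · exact harith k r k' r' hp.1 hp.2 hq.1 hq.2 (m + 1) (Or.inr rfl) (by rwa [hM1] at h)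
    · exact harith k' r' k r hq.1 hq.2 hp.1 hp.2 m (Or.inl rfl) h
    · exact harith k' r' k r hq.1 hq.2 hp.1 hp.2 (m + 1) (Or.inr rfl) (by rwa [hM1] at h)
  have hmem : m ^ 2 ∈ {k | ∃ s : Finset (ZMod n), ↑s ⊆ (Set.univ : Set (ZMod n)) ∧
      s.card = k ∧ ∀ x ∈ s, ∀ y ∈ s, x ≠ y → ¬ (circG m).Adj x y} :=
    ⟨s0, Set.subset_univ _, hcard0, hind0⟩
  rw [_root_.indepNum, indepNumOn]
  refine le_antisymm (csSup_le ⟨0, ∅, ?_, ?_, ?_⟩ hub) (le_csSup ⟨m ^ 2, hub⟩ hmem)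
  · simp
  · simp
  · simp
end

section
/- For m ≥ 3, the circulant graph G_m on ℤ/(2m²+2m)ℤ with connection set {±m, ±(m+1)} is (3,0)-stable: for any three vertices u,v,w, α(G_m \ {u,v,w}) = α(G_m) = m². -/
open SimpleGraph Set

section Aux

variable {m : ℕ}

def IndepF (m : ℕ) (s : Finset (ZMod (2 * m ^ 2 + 2 * m))) : Prop :=
  ∀ x ∈ s, ∀ y ∈ s, x ≠ y → ¬ (circG m).Adj x y

lemma N_pos (hm : 3 ≤ m) : 0 < 2 * m ^ 2 + 2 * m := by positivity

lemma adj_iff (x y : ZMod (2 * m ^ 2 + 2 * m)) :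
    (circG m).Adj x y ↔ x ≠ y ∧ (x - y = (m : ZMod (2 * m ^ 2 + 2 * m)) ∨
      x - y = (m : ZMod (2 * m ^ 2 + 2 * m)) + 1 ∨
      y - x = (m : ZMod (2 * m ^ 2 + 2 * m)) ∨
      y - x = (m : ZMod (2 * m ^ 2 + 2 * m)) + 1) := by
  unfold circG
  rw [SimpleGraph.fromRel_adj]
  tauto

-- val of small casts
lemma val_cast_small (hm : 3 ≤ m) {k : ℕ} (hk : k < 2 * m ^ 2 + 2 * m) :
    ((k : ZMod (2 * m ^ 2 + 2 * m))).val = k := by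
  haveI : NeZero (2 * m ^ 2 + 2 * m) := ⟨by positivity⟩
  exact ZMod.val_cast_of_lt hk

lemma cast_ne_zero_small (hm : 3 ≤ m) {k : ℕ} (hk0 : k ≠ 0) (hk : k < 2 * m ^ 2 + 2 * m) :
    (k : ZMod (2 * m ^ 2 + 2 * m)) ≠ 0 := by
  intro h
  have := val_cast_small hm hk
  rw [h] at this
  simp at this
  exact hk0 this.symm

lemma m_lt_N (hm : 3 ≤ m) : m + 1 < 2 * m ^ 2 + 2 * m := by nlinarith

lemma forbid (hm : 3 ≤ m) {s : Finset (ZMod (2 * m ^ 2 + 2 * m))} (hs : IndepF m s)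
    {x : ZMod (2 * m ^ 2 + 2 * m)} {k : ℕ} (hk : k = m ∨ k = m + 1)
    (hx : x ∈ s) (hx' : x + (k : ZMod (2 * m ^ 2 + 2 * m)) ∈ s) : False := by
  have hkN : k < 2 * m ^ 2 + 2 * m := by
    rcases hk with h | h <;> subst h <;> [exact lt_trans (by omega) (m_lt_N hm); exact m_lt_N hm]
  have hk0 : k ≠ 0 := by rcases hk with h | h <;> omega
  have hne : x ≠ x + (k : ZMod (2 * m ^ 2 + 2 * m)) := by
    intro h
    have : (k : ZMod (2 * m ^ 2 + 2 * m)) = 0 := by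
      have := h.symm
      rwa [add_eq_left] at this
    exact cast_ne_zero_small hm hk0 hkN this
  have hadj : (circG m).Adj x (x + (k : ZMod (2 * m ^ 2 + 2 * m))) := by
    rw [adj_iff]
    refine ⟨hne, ?_⟩
    have : (x + (k : ZMod (2 * m ^ 2 + 2 * m))) - x = (k : ZMod (2 * m ^ 2 + 2 * m)) := by ring
    rcases hk with h | h
    · right; right; left; rw [this, h]
    · right; right; right; rw [this, h]; push_cast; ring
  exact hs x hx _ hx' hne hadj

def CS (m : ℕ) : Finset (ZMod (2 * m ^ 2 + 2 * m)) :=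
  ((Finset.range m) ×ˢ (Finset.range m)).image
    (fun p => ((p.1 * (2*m+1) + p.2 : ℕ) : ZMod (2 * m ^ 2 + 2 * m)))

def CT (m : ℕ) (t : ZMod (2 * m ^ 2 + 2 * m)) : Finset (ZMod (2 * m ^ 2 + 2 * m)) :=
  (CS m).image (t + ·)

lemma cell_le (hm : 3 ≤ m) {j i : ℕ} (hj : j < m) (hi : i < m) :
    j * (2*m+1) + i + (m+2) ≤ (2*m+1) * m := by
  have h1 : j * (2*m+1) ≤ (m-1) * (2*m+1) := Nat.mul_le_mul_right _ (by omega)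
  have h2 : (m-1) * (2*m+1) + (2*m+1) = m * (2*m+1) := by
    have : m - 1 + 1 = m := by omega
    calc (m-1) * (2*m+1) + (2*m+1) = (m-1+1) * (2*m+1) := by ring
      _ = m * (2*m+1) := by rw [this]
  have h3 : m * (2*m+1) = (2*m+1) * m := by ring
  omega

lemma NQ_eq : (2*m+1) * m + m = 2 * m ^ 2 + 2 * m := by ring

lemma mem_CT {t p : ZMod (2 * m ^ 2 + 2 * m)} :
    p ∈ CT m t ↔ ∃ j i : ℕ, j < m ∧ i < m ∧
      p = t + ((j * (2*m+1) + i : ℕ) : ZMod (2 * m ^ 2 + 2 * m)) := by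
  constructor
  · intro h
    rw [CT, Finset.mem_image] at h
    obtain ⟨q, hq, rfl⟩ := h
    rw [CS, Finset.mem_image] at hq
    obtain ⟨⟨j, i⟩, hji, rfl⟩ := hq
    rw [Finset.mem_product, Finset.mem_range, Finset.mem_range] at hji
    exact ⟨j, i, hji.1, hji.2, rfl⟩
  · rintro ⟨j, i, hj, hi, rfl⟩
    rw [CT, Finset.mem_image]
    refine ⟨_, ?_, rfl⟩
    rw [CS, Finset.mem_image]
    exact ⟨⟨j, i⟩, by simp [Finset.mem_product, hj, hi], rfl⟩

lemma CS_diff (hm : 3 ≤ m) {j i j' i' : ℕ} (hj : j < m) (hi : i < m) (hj' : j' < m)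
    (hi' : i' < m) {c : ℕ} (hc : c = m ∨ c = m + 1)
    (heq : ((j * (2*m+1) + i : ℕ) : ZMod (2 * m ^ 2 + 2 * m)) -
      ((j' * (2*m+1) + i' : ℕ) : ZMod (2 * m ^ 2 + 2 * m)) = (c : ZMod (2 * m ^ 2 + 2 * m))) :
    False := by
  have h1 := cell_le hm hj hi
  have h2 := cell_le hm hj' hi'
  have hNQ : (2*m+1) * m + m = 2 * m ^ 2 + 2 * m := NQ_eq
  have hlt : j' * (2*m+1) + i' + c < 2 * m ^ 2 + 2 * m := by omega
  have heq2 : ((j * (2*m+1) + i : ℕ) : ZMod (2 * m ^ 2 + 2 * m)) =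
      ((j' * (2*m+1) + i' + c : ℕ) : ZMod (2 * m ^ 2 + 2 * m)) := by
    push_cast at heq ⊢
    linear_combination heq
  have hnat : j * (2*m+1) + i = j' * (2*m+1) + i' + c := by
    have := congrArg ZMod.val heq2
    rwa [val_cast_small hm (by omega), val_cast_small hm hlt] at this
  have e1 : i + j * (2*m+1) = (i' + c) + j' * (2*m+1) := by omega
  have e2 := congrArg (· % (2*m+1)) e1
  simp only [Nat.add_mul_mod_self_right] at e2
  rw [Nat.mod_eq_of_lt (by omega), Nat.mod_eq_of_lt (by omega)] at e2
  omega

lemma CT_indep (hm : 3 ≤ m) (t : ZMod (2 * m ^ 2 + 2 * m)) : IndepF m (CT m t) := by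
  intro x hx y hy hne hadj
  rw [mem_CT] at hx hy
  obtain ⟨j, i, hj, hi, rfl⟩ := hx
  obtain ⟨j', i', hj', hi', rfl⟩ := hy
  rw [adj_iff] at hadj
  have e1 : (t + ((j * (2*m+1) + i : ℕ) : ZMod (2 * m ^ 2 + 2 * m))) -
      (t + ((j' * (2*m+1) + i' : ℕ) : ZMod (2 * m ^ 2 + 2 * m))) =
      ((j * (2*m+1) + i : ℕ) : ZMod (2 * m ^ 2 + 2 * m)) -
      ((j' * (2*m+1) + i' : ℕ) : ZMod (2 * m ^ 2 + 2 * m)) := by ring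
  have e2 : (t + ((j' * (2*m+1) + i' : ℕ) : ZMod (2 * m ^ 2 + 2 * m))) -
      (t + ((j * (2*m+1) + i : ℕ) : ZMod (2 * m ^ 2 + 2 * m))) =
      ((j' * (2*m+1) + i' : ℕ) : ZMod (2 * m ^ 2 + 2 * m)) -
      ((j * (2*m+1) + i : ℕ) : ZMod (2 * m ^ 2 + 2 * m)) := by ring
  have hm1 : ((m : ℕ) : ZMod (2 * m ^ 2 + 2 * m)) + 1 = ((m+1 : ℕ) : ZMod (2 * m ^ 2 + 2 * m)) := by
    push_cast; ring
  rcases hadj.2 with h | h | h | h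
  · exact CS_diff hm hj hi hj' hi' (Or.inl rfl) (by rw [e1] at h; exact h)
  · exact CS_diff hm hj hi hj' hi' (Or.inr rfl) (by rw [e1, hm1] at h; exact h)
  · exact CS_diff hm hj' hi' hj hi (Or.inl rfl) (by rw [e2] at h; exact h)
  · exact CS_diff hm hj' hi' hj hi (Or.inr rfl) (by rw [e2, hm1] at h; exact h)

lemma CT_card (hm : 3 ≤ m) (t : ZMod (2 * m ^ 2 + 2 * m)) : (CT m t).card = m ^ 2 := by
  unfold CT
  rw [Finset.card_image_of_injective _ (add_right_injective t)]
  unfold CS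
  rw [Finset.card_image_of_injOn, Finset.card_product, Finset.card_range]
  · ring
  · rintro ⟨j, i⟩ hji ⟨j', i'⟩ hji' h
    simp only [Finset.mem_coe, Finset.mem_product, Finset.mem_range] at hji hji'
    have c1 := cell_le hm hji.1 hji.2
    have c2 := cell_le hm hji'.1 hji'.2
    have hNQ : (2*m+1) * m + m = 2 * m ^ 2 + 2 * m := NQ_eq
    have h2 : ((j * (2*m+1) + i : ℕ) : ZMod (2 * m ^ 2 + 2 * m)) =
        ((j' * (2*m+1) + i' : ℕ) : ZMod (2 * m ^ 2 + 2 * m)) := h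
    have hnat : j * (2*m+1) + i = j' * (2*m+1) + i' := by
      have := congrArg ZMod.val h2
      rwa [val_cast_small hm (by omega), val_cast_small hm (by omega)] at this
    have e1 : i + j * (2*m+1) = i' + j' * (2*m+1) := by omega
    have e2 := congrArg (· % (2*m+1)) e1
    simp only [Nat.add_mul_mod_self_right] at e2
    rw [Nat.mod_eq_of_lt (by omega), Nat.mod_eq_of_lt (by omega)] at e2
    have hjj : j = j' := by
      have h3 : j * (2*m+1) = j' * (2*m+1) := by omega
      exact Nat.eq_of_mul_eq_mul_right (by omega) h3
    exact Prod.ext hjj e2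

lemma not_mem_CT (hm : 3 ≤ m) {t p : ZMod (2 * m ^ 2 + 2 * m)} {y : ℕ}
    (hy : y < 2 * m ^ 2 + 2 * m) (hgood : m ≤ y % (2*m+1) ∨ (2*m+1) * m ≤ y)
    (hpt : p - t = (y : ZMod (2 * m ^ 2 + 2 * m))) : p ∉ CT m t := by
  intro hp
  rw [mem_CT] at hp
  obtain ⟨j, i, hj, hi, hpe⟩ := hp
  have h1 := cell_le hm hj hi
  have hNQ : (2*m+1) * m + m = 2 * m ^ 2 + 2 * m := NQ_eq
  have heq : ((j * (2*m+1) + i : ℕ) : ZMod (2 * m ^ 2 + 2 * m)) =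
      ((y : ℕ) : ZMod (2 * m ^ 2 + 2 * m)) := by
    rw [← hpt, hpe]; ring
  have hnat : j * (2*m+1) + i = y := by
    have := congrArg ZMod.val heq
    rwa [val_cast_small hm (by omega), val_cast_small hm hy] at this
  rcases hgood with h | h
  · rw [← hnat, show j * (2*m+1) + i = i + j * (2*m+1) from by ring,
      Nat.add_mul_mod_self_right, Nat.mod_eq_of_lt (by omega)] at h
    omega
  · omega

set_option maxHeartbeats 1000000 in
theorem card_le_upper (hm : 3 ≤ m) {s : Finset (ZMod (2 * m ^ 2 + 2 * m))}
    (hs : IndepF m s) : s.card ≤ m ^ 2 := by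
  classical
  haveI : NeZero (2 * m ^ 2 + 2 * m) := ⟨by positivity⟩
  have hNQ : (2*m+1) * m + m = 2 * m ^ 2 + 2 * m := by ring
  by_cases hB : ∀ c : ZMod (2 * m ^ 2 + 2 * m),
      ∃ k : ℕ, 1 ≤ k ∧ k ≤ m ∧ c + ((k : ℕ) : ZMod (2 * m ^ 2 + 2 * m)) ∈ s
  · -- CASE B : every m-window meets s
    set T := s.card with hT
    set P := (s.filter (fun x => x + 1 ∈ s)).card with hP
    set U := Finset.univ.filter
      (fun c : ZMod (2 * m ^ 2 + 2 * m) => c ∉ s ∧ c + 1 ∉ s) with hU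
    set V := s.filter (fun x => x - 1 ∉ s) with hV
    -- injection 1 : x ↦ x + m
    have inj1 : T ≤ U.card := by
      apply Finset.card_le_card_of_injOn (fun x => x + ((m : ℕ) : ZMod (2 * m ^ 2 + 2 * m)))
      · intro x hx
        simp only [Finset.mem_coe]; rw [hU, Finset.mem_filter]
        refine ⟨Finset.mem_univ _, ?_, ?_⟩
        · intro hmem
          exact forbid hm hs (Or.inl rfl) hx hmem
        · intro hmem
          apply forbid hm hs (Or.inr rfl) hx
          have : x + ((m : ℕ) : ZMod (2 * m ^ 2 + 2 * m)) + 1 =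
              x + (((m + 1 : ℕ)) : ZMod (2 * m ^ 2 + 2 * m)) := by push_cast; ring
          rwa [this] at hmem
      · intro x _ y _ h
        simpa using h
    -- counting U
    have hUcard : U.card + (2 * T - P) = 2 * m ^ 2 + 2 * m := by
      set s₁ := s.image (fun x => x - 1) with hs₁
      have hinj : Function.Injective (fun x : ZMod (2 * m ^ 2 + 2 * m) => x - 1) := by
        intro x y h
        have := congrArg (· + 1) h
        simpa [sub_add_cancel] using this
      have hs₁card : s₁.card = T := Finset.card_image_of_injective _ hinj
      have hUc : U = (s ∪ s₁)ᶜ := by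
        ext c
        rw [hU, Finset.mem_filter, Finset.mem_compl, Finset.mem_union, hs₁, Finset.mem_image]
        constructor
        · rintro ⟨_, h1, h2⟩
          push_neg
          refine ⟨h1, fun x hx hxc => h2 ?_⟩
          rw [← hxc]
          simpa [sub_add_cancel] using hx
        · intro h
          push_neg at h
          refine ⟨Finset.mem_univ _, h.1, fun hc => ?_⟩
          exact h.2 (c + 1) hc (by ring)
      have hint : s ∩ s₁ = s.filter (fun x => x + 1 ∈ s) := by
        ext c
        rw [Finset.mem_inter, Finset.mem_filter, hs₁, Finset.mem_image]
        constructor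
        · rintro ⟨h1, x, hx, rfl⟩
          exact ⟨h1, by simpa using hx⟩
        · rintro ⟨h1, h2⟩
          exact ⟨h1, c + 1, h2, by ring⟩
      have hcup : (s ∪ s₁).card + P = 2 * T := by
        have h0 := Finset.card_union_add_card_inter s s₁
        have h1 := congrArg Finset.card hint
        omega
      have hcompl : ((s ∪ s₁)ᶜ).card = Fintype.card (ZMod (2 * m ^ 2 + 2 * m)) - (s ∪ s₁).card :=
        Finset.card_compl _
      have hcard : Fintype.card (ZMod (2 * m ^ 2 + 2 * m)) = 2 * m ^ 2 + 2 * m := ZMod.card _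
      have hle : (s ∪ s₁).card ≤ 2 * m ^ 2 + 2 * m := by
        have h := Finset.card_le_univ (s ∪ s₁)
        rwa [hcard] at h
      rw [hUc, hcompl, hcard]
      omega
    -- V card
    have hVcard : V.card + P = T := by
      have hsplit := Finset.card_filter_add_card_filter_not
        (s := s) (p := fun x => x - 1 ∈ s)
      have himg : (s.filter (fun x => x + 1 ∈ s)).image (fun x => x + 1) =
          s.filter (fun x => x - 1 ∈ s) := by
        ext y
        rw [Finset.mem_image, Finset.mem_filter]
        constructor
        · rintro ⟨x, hx, rfl⟩
          rw [Finset.mem_filter] at hx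
          exact ⟨hx.2, by simpa using hx.1⟩
        · rintro ⟨h1, h2⟩
          exact ⟨y - 1, Finset.mem_filter.mpr ⟨h2, by simpa using h1⟩, by ring⟩
      have hPeq : (s.filter (fun x => x - 1 ∈ s)).card = P := by
        rw [← himg, Finset.card_image_of_injective]
        intro x y h
        simpa using h
      rw [hV]
      have : (Finset.filter (fun x => ¬ (x - 1 ∈ s)) s).card =
          (Finset.filter (fun x => x - 1 ∉ s) s).card := rfl
      omega
    -- key lemma : block starts are m-syndetic
    have keyB : ∀ c : ZMod (2 * m ^ 2 + 2 * m), ∃ k : ℕ, 1 ≤ k ∧ k ≤ m ∧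
        c + ((k : ℕ) : ZMod (2 * m ^ 2 + 2 * m)) ∈ V := by
      intro c
      have hVmem : ∀ z : ZMod (2 * m ^ 2 + 2 * m), z ∈ s → z - 1 ∉ s → z ∈ V := by
        intro z h1 h2
        rw [hV, Finset.mem_filter]
        exact ⟨h1, h2⟩
      obtain he := hB c
      obtain ⟨hk₀1, hk₀m, hk₀mem⟩ := Nat.find_spec he
      set k₀ := Nat.find he with hk₀def
      clear_value k₀
      by_cases hk2 : 2 ≤ k₀
      · refine ⟨k₀, hk₀1, hk₀m, hVmem _ hk₀mem ?_⟩
        have hcast : c + ((k₀ : ℕ) : ZMod (2 * m ^ 2 + 2 * m)) - 1 =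
            c + ((k₀ - 1 : ℕ) : ZMod (2 * m ^ 2 + 2 * m)) := by
          rw [Nat.cast_sub (by omega)]
          push_cast
          ring
        rw [hcast]
        intro hmem
        exact Nat.find_min he (by rw [← hk₀def]; omega) ⟨by omega, by omega, hmem⟩
      · -- k₀ = 1
        have hk₀ : k₀ = 1 := by omega
        rw [hk₀] at hk₀mem
        by_cases hc : c ∈ s
        · -- block walk
          set Pr := fun r : ℕ => ∀ i : ℕ, i ≤ r → c + ((i : ℕ) : ZMod (2 * m ^ 2 + 2 * m)) ∈ s
            with hPr
          have hP1 : Pr 1 := by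
            intro i hi
            interval_cases i
            · simpa using hc
            · simpa using hk₀mem
          set R := Nat.findGreatest Pr (m - 1) with hR
          have hR1 : 1 ≤ R := Nat.le_findGreatest (by omega) hP1
          have hRm : R ≤ m - 1 := Nat.findGreatest_le _
          have hRs : Pr R := Nat.findGreatest_spec (m := 1) (by omega) hP1
          have hstop : c + ((R + 1 : ℕ) : ZMod (2 * m ^ 2 + 2 * m)) ∉ s := by
            rcases Nat.eq_or_lt_of_le hRm with he' | hlt
            · intro hmem
              apply forbid hm hs (Or.inl rfl) hc
              have : ((R + 1 : ℕ) : ZMod (2 * m ^ 2 + 2 * m)) =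
                  ((m : ℕ) : ZMod (2 * m ^ 2 + 2 * m)) := by
                congr 1
                omega
              rwa [this] at hmem
            · intro hmem
              have := Nat.findGreatest_is_greatest (show R < R + 1 by omega) (by omega)
              apply this
              intro i hi
              rcases Nat.lt_or_ge i (R + 1) with h' | h'
              · exact hRs i (by omega)
              · have : i = R + 1 := by omega
                rwa [this]
          obtain he2 := hB (c + ((R : ℕ) : ZMod (2 * m ^ 2 + 2 * m)))
          obtain ⟨hg1, hgm, hgmem⟩ := Nat.find_spec he2
          set g := Nat.find he2 with hgdef
          have hcastRg : ∀ j : ℕ, c + ((R : ℕ) : ZMod (2 * m ^ 2 + 2 * m)) +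
              ((j : ℕ) : ZMod (2 * m ^ 2 + 2 * m)) =
              c + ((R + j : ℕ) : ZMod (2 * m ^ 2 + 2 * m)) := by
            intro j
            push_cast
            ring
          have hg2 : 2 ≤ g := by
            by_contra h'
            have : g = 1 := by omega
            rw [this] at hgmem
            apply hstop
            have : c + ((R : ℕ) : ZMod (2 * m ^ 2 + 2 * m)) + ((1 : ℕ) : ZMod (2 * m ^ 2 + 2 * m)) =
                c + ((R + 1 : ℕ) : ZMod (2 * m ^ 2 + 2 * m)) := hcastRg 1
            rw [← this]
            simpa using hgmem
          have hgm' : g ≤ m - 1 := by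
            rcases Nat.eq_or_lt_of_le hgm with he' | hlt
            · exfalso
              apply forbid hm hs (Or.inl rfl) (hRs R le_rfl)
              rw [he'] at hgmem
              exact hgmem
            · omega
          by_cases hRg : R + g ≤ m
          · refine ⟨R + g, by omega, hRg, hVmem _ ?_ ?_⟩
            · rw [← hcastRg g]; exact hgmem
            · have hcast2 : c + ((R + g : ℕ) : ZMod (2 * m ^ 2 + 2 * m)) - 1 =
                  c + ((R : ℕ) : ZMod (2 * m ^ 2 + 2 * m)) +
                  ((g - 1 : ℕ) : ZMod (2 * m ^ 2 + 2 * m)) := by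
                rw [Nat.cast_sub (by omega)]
                push_cast
                ring
              rw [hcast2]
              intro hmem
              exact Nat.find_min he2 (show g - 1 < g by omega) ⟨by omega, by omega, hmem⟩
          · exfalso
            have hi1 : 1 ≤ R + g - m := by omega
            have hi2 : R + g - m ≤ R := by omega
            apply forbid hm hs (Or.inl rfl) (hRs (R + g - m) hi2)
            have heq : c + ((R + g - m : ℕ) : ZMod (2 * m ^ 2 + 2 * m)) +
                ((m : ℕ) : ZMod (2 * m ^ 2 + 2 * m)) =
                c + ((R : ℕ) : ZMod (2 * m ^ 2 + 2 * m)) + ((g : ℕ) : ZMod (2 * m ^ 2 + 2 * m)) := by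
              have h9 : (R + g - m) + m = R + g := by omega
              calc c + ((R + g - m : ℕ) : ZMod (2 * m ^ 2 + 2 * m)) +
                  ((m : ℕ) : ZMod (2 * m ^ 2 + 2 * m))
                  = c + (((R + g - m) + m : ℕ) : ZMod (2 * m ^ 2 + 2 * m)) := by push_cast; ring
                _ = c + ((R + g : ℕ) : ZMod (2 * m ^ 2 + 2 * m)) := by rw [h9]
                _ = c + ((R : ℕ) : ZMod (2 * m ^ 2 + 2 * m)) + ((g : ℕ) : ZMod (2 * m ^ 2 + 2 * m)) :=
                  (hcastRg g).symm
            rw [heq]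
            exact hgmem
        · refine ⟨1, le_rfl, by omega, hVmem _ (by simpa using hk₀mem) ?_⟩
          have : c + ((1 : ℕ) : ZMod (2 * m ^ 2 + 2 * m)) - 1 = c := by push_cast; ring
          rwa [this]
    -- injection 2
    have inj2 : 2 * m ^ 2 + 2 * m ≤ V.card * m := by
      have hcardZ : Fintype.card (ZMod (2 * m ^ 2 + 2 * m)) = 2 * m ^ 2 + 2 * m := ZMod.card _
      have := Finset.card_le_card_of_injOn
        (f := fun c : ZMod (2 * m ^ 2 + 2 * m) =>
          ((c + (((keyB c).choose : ℕ) : ZMod (2 * m ^ 2 + 2 * m)), (keyB c).choose) :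
            ZMod (2 * m ^ 2 + 2 * m) × ℕ))
        (s := Finset.univ) (t := V ×ˢ Finset.Icc 1 m) ?_ ?_
      · calc 2 * m ^ 2 + 2 * m = Finset.univ.card := by
              rw [Finset.card_univ, hcardZ]
          _ ≤ (V ×ˢ Finset.Icc 1 m).card := this
          _ = V.card * m := by
              rw [Finset.card_product, Nat.card_Icc]
              simp
      · intro c _
        obtain ⟨h1, h2, h3⟩ := (keyB c).choose_spec
        rw [Finset.mem_coe, Finset.mem_product, Finset.mem_Icc]
        exact ⟨h3, h1, h2⟩
      · intro c _ c' _ h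
        simp only [Prod.mk.injEq] at h
        obtain ⟨h1, h2⟩ := h
        rw [h2] at h1
        simpa using h1
    -- combine
    have harith : V.card * m + P * m = T * m := by
      rw [← Nat.add_mul, hVcard]
    have h3T : 3 * T ≤ 2 * m ^ 2 + 2 * m + P := by omega
    -- 3T ≤ N + P, N + P*m ≤ T*m → T ≤ m²-1
    have hmul : 3 * T * m ≤ (2 * m ^ 2 + 2 * m) * m + P * m := by
      calc 3 * T * m ≤ (2 * m ^ 2 + 2 * m + P) * m := Nat.mul_le_mul_right m h3T
        _ = (2 * m ^ 2 + 2 * m) * m + P * m := by ring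
    have hNP : 2 * m ^ 2 + 2 * m + P * m ≤ T * m := by omega
    by_contra hcon
    push_neg at hcon
    have hTm : (m ^ 2 + 1) * m ≤ T * m := Nat.mul_le_mul_right m (by omega)
    nlinarith [hmul, hNP, hTm, hm]
  · -- CASE A : some m-window is empty; rotate and cut into m windows of length 2m+1
    push_neg at hB
    obtain ⟨c, hc⟩ := hB
    set t0 := c + ((m+1 : ℕ) : ZMod (2 * m ^ 2 + 2 * m)) with ht0
    set s' := s.image (fun x => x - t0) with hs'
    have hs'card : s'.card = s.card := by
      rw [hs']
      apply Finset.card_image_of_injective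
      intro x y h
      have := congrArg (· + t0) h
      simpa [sub_add_cancel] using this
    have hs'ind : IndepF m s' := by
      intro x hx y hy hne hadj
      rw [hs', Finset.mem_image] at hx hy
      obtain ⟨x0, hx0, rfl⟩ := hx
      obtain ⟨y0, hy0, rfl⟩ := hy
      refine hs x0 hx0 y0 hy0 (fun h => hne (by rw [h])) ?_
      rw [adj_iff] at hadj ⊢
      have e1 : (x0 - t0) - (y0 - t0) = x0 - y0 := by ring
      have e2 : (y0 - t0) - (x0 - t0) = y0 - x0 := by ring
      rw [e1, e2] at hadj
      exact ⟨fun h => hne (by rw [h]), hadj.2⟩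
    have hval : ∀ y ∈ s', y.val + m + 1 ≤ 2 * m ^ 2 + 2 * m := by
      intro y hy
      by_contra hcon
      push_neg at hcon
      have hylt : y.val < 2 * m ^ 2 + 2 * m := ZMod.val_lt y
      set k := 2 * m ^ 2 + 2 * m - y.val with hk
      have hk1 : 1 ≤ k := by omega
      have hkm : k ≤ m := by omega
      apply hc (m + 1 - k) (by omega) (by omega)
      rw [hs', Finset.mem_image] at hy
      obtain ⟨x0, hx0, hfx⟩ := hy
      have hyv : ((y.val : ℕ) : ZMod (2 * m ^ 2 + 2 * m)) = y := ZMod.natCast_rightInverse y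
      have hx0e : x0 = y + t0 := by
        rw [← hfx]; ring
      have hkey : x0 = c + ((m + 1 - k : ℕ) : ZMod (2 * m ^ 2 + 2 * m)) := by
        rw [hx0e, ht0, ← hyv]
        have h9 : y.val + (m+1) = (m + 1 - k) + (2 * m ^ 2 + 2 * m) := by omega
        calc ((y.val : ℕ) : ZMod (2 * m ^ 2 + 2 * m)) + (c + ((m+1 : ℕ) : ZMod (2 * m ^ 2 + 2 * m)))
            = c + ((y.val + (m+1) : ℕ) : ZMod (2 * m ^ 2 + 2 * m)) := by push_cast; ring
          _ = c + (((m + 1 - k) + (2 * m ^ 2 + 2 * m) : ℕ) : ZMod (2 * m ^ 2 + 2 * m)) := by rw [h9]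
          _ = c + ((m + 1 - k : ℕ) : ZMod (2 * m ^ 2 + 2 * m)) := by
              rw [Nat.cast_add, ZMod.natCast_self, add_zero]
      rw [← hkey]
      exact hx0
    set J := s'.image ZMod.val with hJdef
    have hJcard : J.card = s.card := by
      rw [hJdef, Finset.card_image_of_injective _ (ZMod.val_injective (2 * m ^ 2 + 2 * m)), hs'card]
    have hJadd : ∀ x ∈ J, ∀ k : ℕ, (k = m ∨ k = m + 1) → x + k ∉ J := by
      intro x hx k hk hxk
      rw [hJdef, Finset.mem_image] at hx hxk
      obtain ⟨a0, ha0, hav⟩ := hx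
      obtain ⟨b0, hb0, hbv⟩ := hxk
      have h1 : ((x + k : ℕ) : ZMod (2 * m ^ 2 + 2 * m)) = b0 := by
        rw [← hbv]; exact ZMod.natCast_rightInverse b0
      have h2 : ((x : ℕ) : ZMod (2 * m ^ 2 + 2 * m)) = a0 := by
        rw [← hav]; exact ZMod.natCast_rightInverse a0
      have hb0e : b0 = a0 + ((k : ℕ) : ZMod (2 * m ^ 2 + 2 * m)) := by
        rw [← h1, ← h2]; push_cast; ring
      apply forbid hm hs'ind hk ha0
      rw [← hb0e]
      exact hb0
    have hJb : ∀ x ∈ J, x < (2*m+1)*m := by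
      intro x hx
      rw [hJdef, Finset.mem_image] at hx
      obtain ⟨y, hy, rfl⟩ := hx
      have := hval y hy
      omega
    have hTsum : s.card = ∑ j ∈ Finset.range m,
        (J.filter (fun x => x / (2*m+1) = j)).card := by
      rw [← hJcard]
      apply Finset.card_eq_sum_card_fiberwise
      intro x hx
      rw [Finset.mem_coe, Finset.mem_range]
      have h5 := hJb x hx
      have hmm' : m * (2*m+1) = (2*m+1)*m := Nat.mul_comm _ _
      have h6 : x < m * (2*m+1) := by omega
      exact (Nat.div_lt_iff_lt_mul (by omega)).mpr h6
    have hfiber : ∀ j ∈ Finset.range m,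
        (J.filter (fun x => x / (2*m+1) = j)).card ≤ m := by
      intro j hj
      set F := J.filter (fun x => x / (2*m+1) = j) with hF
      have hFx : ∀ x ∈ F, (2*m+1)*j + x % (2*m+1) = x ∧ x % (2*m+1) < 2*m+1 ∧ x ∈ J := by
        intro x hx
        rw [hF, Finset.mem_filter] at hx
        have hdm := Nat.div_add_mod x (2*m+1)
        rw [hx.2] at hdm
        exact ⟨hdm, Nat.mod_lt _ (by omega), hx.1⟩
      set ψ := fun x : ℕ => if x % (2*m+1) ≤ m then x + m else x - (m+1) with hψ
      have hGF : ∀ x ∈ F, ψ x ∉ J ∧ (2*m+1)*j ≤ ψ x ∧ ψ x < (2*m+1)*j + (2*m+1) := by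
        intro x hx
        obtain ⟨h1, h2, h3⟩ := hFx x hx
        rw [hψ]
        by_cases hc2 : x % (2*m+1) ≤ m
        · simp only [if_pos hc2]
          exact ⟨hJadd x h3 m (Or.inl rfl), by omega, by omega⟩
        · simp only [if_neg hc2]
          refine ⟨?_, by omega, by omega⟩
          intro hmem
          apply hJadd (x - (m+1)) hmem (m+1) (Or.inr rfl)
          have : x - (m+1) + (m+1) = x := by omega
          rw [this]
          exact h3
      set G := F.image ψ with hG
      have hdisj : Disjoint F G := by
        rw [Finset.disjoint_right]
        intro y hyG hyF
        rw [hG, Finset.mem_image] at hyG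
        obtain ⟨x, hxF, rfl⟩ := hyG
        exact (hGF x hxF).1 (hFx _ hyF).2.2
      have hinj : Set.InjOn ψ F := by
        intro x hxF y hyF hxy
        obtain ⟨hx1, hx2, _⟩ := hFx x hxF
        obtain ⟨hy1, hy2, _⟩ := hFx y hyF
        rw [hψ] at hxy
        simp only at hxy
        by_cases c1 : x % (2*m+1) ≤ m <;> by_cases c2 : y % (2*m+1) ≤ m
        · rw [if_pos c1, if_pos c2] at hxy; omega
        · rw [if_pos c1, if_neg c2] at hxy; omega
        · rw [if_neg c1, if_pos c2] at hxy; omega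
        · rw [if_neg c1, if_neg c2] at hxy; omega
      have hGcard : G.card = F.card := by
        rw [hG]
        exact Finset.card_image_of_injOn hinj
      have hsub : F ∪ G ⊆ Finset.Ico ((2*m+1)*j) ((2*m+1)*j + (2*m+1)) := by
        intro x hx
        rw [Finset.mem_union] at hx
        rw [Finset.mem_Ico]
        rcases hx with hx | hx
        · obtain ⟨h1, h2, _⟩ := hFx x hx
          omega
        · rw [hG, Finset.mem_image] at hx
          obtain ⟨x0, hx0, rfl⟩ := hx
          exact ⟨(hGF x0 hx0).2.1, (hGF x0 hx0).2.2⟩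
      have hcard2 : (F ∪ G).card ≤ 2*m+1 := by
        have := Finset.card_le_card hsub
        rwa [Nat.card_Ico, Nat.add_sub_cancel_left] at this
      have hcard3 : (F ∪ G).card = F.card + G.card := Finset.card_union_of_disjoint hdisj
      omega
    rw [hTsum]
    calc ∑ j ∈ Finset.range m, (J.filter (fun x => x / (2*m+1) = j)).card
        ≤ (Finset.range m).card * m := Finset.sum_le_card_nsmul _ _ m hfiber
      _ = m ^ 2 := by rw [Finset.card_range]; ring

-- helpers
lemma modq_small (hm : 3 ≤ m) {x : ℕ} (hx : x < 2*m+1) : x % (2*m+1) = x :=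
  Nat.mod_eq_of_lt hx

lemma modq_two (hm : 3 ≤ m) {x : ℕ} (hx1 : 2*m+1 ≤ x) (hx2 : x < 2*(2*m+1)) :
    x % (2*m+1) = x - (2*m+1) := by
  rw [Nat.mod_eq_sub_mod hx1, Nat.mod_eq_of_lt (by omega)]

lemma modq_shape (hm : 3 ≤ m) {x k r : ℕ} (h : x = (2*m+1)*k + r) (hr : r < 2*m+1) :
    x % (2*m+1) = r := by
  subst h
  rw [Nat.mul_add_mod, Nat.mod_eq_of_lt hr]

/-- positions in the last (2m+1) positions are good -/
lemma bighole (hm : 3 ≤ m) {x : ℕ} (h1 : (2*m+1)*m ≤ x + m + 1)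
    (h2 : x < 2 * m ^ 2 + 2 * m) :
    m ≤ x % (2*m+1) ∨ (2*m+1)*m ≤ x := by
  by_cases h : (2*m+1)*m ≤ x
  · exact Or.inr h
  · left
    have hNQ : (2*m+1) * m + m = 2 * m ^ 2 + 2 * m := by ring
    have hq : (2*m+1)*(m-1) + (2*m+1) = (2*m+1)*m := by
      rw [← Nat.mul_succ]
      congr 1
      omega
    have hx1 : (2*m+1)*(m-1) ≤ x := by omega
    have := modq_shape hm (show x = (2*m+1)*(m-1) + (x - (2*m+1)*(m-1)) by omega)
      (by omega)
    omega

lemma exists_avoid (hm : 3 ≤ m) (u : ZMod (2 * m ^ 2 + 2 * m)) (a b : ℕ)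
    (ha : 1 ≤ a) (hab : a < b) (hb : b + (2*m+1) ≤ 2 * m ^ 2 + 2 * m) :
    ∃ t, u ∉ CT m t ∧ u + (a : ZMod (2 * m ^ 2 + 2 * m)) ∉ CT m t ∧
      u + (b : ZMod (2 * m ^ 2 + 2 * m)) ∉ CT m t := by
  haveI : NeZero (2 * m ^ 2 + 2 * m) := ⟨by positivity⟩
  have hNQ : (2*m+1) * m + m = 2 * m ^ 2 + 2 * m := by ring
  have hNcast : ((2 * m ^ 2 + 2 * m : ℕ) : ZMod (2 * m ^ 2 + 2 * m)) = 0 :=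
    ZMod.natCast_self _
  have hq1 : (2*m+1)*(m+1) = (2*m+1)*m + (2*m+1) := by ring
  -- generic point equations for t := u - y₀
  have hpt0 : ∀ y₀ : ℕ, u - (u - ((y₀ : ℕ) : ZMod (2 * m ^ 2 + 2 * m))) =
      ((y₀ : ℕ) : ZMod (2 * m ^ 2 + 2 * m)) := by
    intro y₀; ring
  have hpt : ∀ (y₀ k : ℕ), (u + (k : ZMod (2 * m ^ 2 + 2 * m))) -
      (u - ((y₀ : ℕ) : ZMod (2 * m ^ 2 + 2 * m))) =
      ((y₀ + k : ℕ) : ZMod (2 * m ^ 2 + 2 * m)) := by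
    intro y₀ k; push_cast; ring
  have hptw : ∀ (y₀ k y' : ℕ), y₀ + k = y' + (2 * m ^ 2 + 2 * m) →
      (u + (k : ZMod (2 * m ^ 2 + 2 * m))) -
      (u - ((y₀ : ℕ) : ZMod (2 * m ^ 2 + 2 * m))) =
      ((y' : ℕ) : ZMod (2 * m ^ 2 + 2 * m)) := by
    intro y₀ k y' h
    rw [hpt y₀ k, h, Nat.cast_add, hNcast, add_zero]
  by_cases hcase1 : b ≤ 2*m
  · -- cluster in the big hole
    set y₀ := (2*m+1)*m - (m+1) with hy₀
    have hyb : (2*m+1)*m ≥ 2*m + 2 := by nlinarith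
    have key : ∀ k, k ≤ 2*m → (m ≤ (y₀ + k) % (2*m+1) ∨ (2*m+1)*m ≤ y₀ + k) ∧
        y₀ + k < 2 * m ^ 2 + 2 * m := by
      intro k hk
      constructor
      · by_cases hkm : k ≤ m
        · left
          have hq : (2*m+1)*(m-1) + (2*m+1) = (2*m+1)*m := by
            rw [← Nat.mul_succ]; congr 1; omega
          rw [modq_shape hm (show y₀ + k = (2*m+1)*(m-1) + (m + k) by omega) (by omega)]
          omega
        · right; omega
      · omega
    refine ⟨u - ((y₀ : ℕ) : ZMod (2 * m ^ 2 + 2 * m)), ?_, ?_, ?_⟩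
    · have hk := key 0 (by omega)
      simp only [Nat.add_zero] at hk
      exact not_mem_CT hm (y := y₀) hk.2 hk.1 (hpt0 y₀)
    · exact not_mem_CT hm (y := y₀ + a) (key a (by omega)).2 (key a (by omega)).1 (hpt y₀ a)
    · exact not_mem_CT hm (y := y₀ + b) (key b (by omega)).2 (key b (by omega)).1 (hpt y₀ b)
  · -- b ≥ 2m+1
    have hbQ : 2*m+1 ≤ b := by omega
    set A := a % (2*m+1) with hAdef
    set B := b % (2*m+1) with hBdef
    have hAQ : A < 2*m+1 := Nat.mod_lt _ (by omega)
    have hBQ : B < 2*m+1 := Nat.mod_lt _ (by omega)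
    obtain ⟨qa, hqa⟩ : ∃ q, a = (2*m+1)*q + A := ⟨a / (2*m+1), by rw [hAdef, Nat.div_add_mod]⟩
    obtain ⟨qb, hqb⟩ : ∃ q, b = (2*m+1)*q + B := ⟨b / (2*m+1), by rw [hBdef, Nat.div_add_mod]⟩
    -- residue of b - a
    set r := (b - a) % (2*m+1) with hrdef
    have hrQ : r < 2*m+1 := Nat.mod_lt _ (by omega)
    have hrA : (r + A) % (2*m+1) = B := by
      have hsub : (b - a) + a = b := Nat.sub_add_cancel (le_of_lt hab)
      have h0 := congrArg (· % (2*m+1)) hsub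
      rw [Nat.add_mod, ← hAdef, ← hrdef] at h0
      rw [hBdef]; exact h0
    by_cases hiii : a ≤ 2*m ∧ b - a ≤ 2*m
    · -- 2b-iii : small cluster spanning the wrap
      obtain ⟨hia, hic⟩ := hiii
      by_cases hc1 : m + 1 ≤ b - a
      · -- option 1
        set y := if b ≤ 3*m+1 then m else b - (2*m+1) with hydef
        have hy1 : m ≤ y := by rw [hydef]; split <;> omega
        have hy2 : y ≤ 2*m := by rw [hydef]; split <;> omega
        have hy3 : b ≤ y + (2*m+1) := by rw [hydef]; split <;> omega
        have hy4 : y + 1 ≤ b - a := by rw [hydef]; split <;> omega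
        set y₀ := y + (2 * m ^ 2 + 2 * m - b) with hy₀def
        have hb1 : y₀ < 2 * m ^ 2 + 2 * m := by omega
        have hg0 : m ≤ y₀ % (2*m+1) ∨ (2*m+1)*m ≤ y₀ :=
          bighole hm (by omega) (by omega)
        have hwa : y₀ + a = (y + (2 * m ^ 2 + 2 * m - (b - a))) := by omega
        have hg1 : m ≤ (y₀ + a) % (2*m+1) ∨ (2*m+1)*m ≤ y₀ + a :=
          bighole hm (by omega) (by omega)
        have hwb : y₀ + b = y + (2 * m ^ 2 + 2 * m) := by omega
        refine ⟨u - ((y₀ : ℕ) : ZMod (2 * m ^ 2 + 2 * m)), ?_, ?_, ?_⟩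
        · exact not_mem_CT hm (y := y₀) hb1 hg0 (hpt0 y₀)
        · exact not_mem_CT hm (y := y₀ + a) (by omega) hg1 (hpt y₀ a)
        · refine not_mem_CT hm (y := y) (by omega) ?_ (hptw y₀ b y (by omega))
          left; rw [modq_small hm (by omega)]; omega
      · -- option 2 : b - a ≤ m, hence a ≥ m+1 and b ≤ 3m+1
        have hcm : b - a ≤ m := by omega
        have ham1 : m + 1 ≤ a := by omega
        have hb3 : b ≤ 3*m + 1 := by omega
        set y₀ := (2*m+1)*m - (2*m+2) with hy₀def
        have hq2 : (2*m+1)*(m-2) + 2*(2*m+1) = (2*m+1)*m := by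
          have e1 : (2*m+1)*(m-2) + (2*m+1) = (2*m+1)*(m-1) := by
            rw [← Nat.mul_succ]; congr 1; omega
          have e2 : (2*m+1)*(m-1) + (2*m+1) = (2*m+1)*m := by
            rw [← Nat.mul_succ]; congr 1; omega
          omega
        have hg0 : m ≤ y₀ % (2*m+1) := by
          rw [modq_shape hm (show y₀ = (2*m+1)*(m-2) + 2*m by omega) (by omega)]; omega
        refine ⟨u - ((y₀ : ℕ) : ZMod (2 * m ^ 2 + 2 * m)), ?_, ?_, ?_⟩
        · exact not_mem_CT hm (y := y₀) (by omega) (Or.inl hg0) (hpt0 y₀)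
        · exact not_mem_CT hm (y := y₀ + a) (by omega)
            (bighole hm (by omega) (by omega)) (hpt y₀ a)
        · exact not_mem_CT hm (y := y₀ + b) (by omega)
            (bighole hm (by omega) (by omega)) (hpt y₀ b)
    · -- not a small cluster
      by_cases hclus : ∃ x', (x' = 0 ∨ x' = A ∨ x' = B) ∧
          ((0 + ((2*m+1) - x')) % (2*m+1) ≤ m) ∧
          ((A + ((2*m+1) - x')) % (2*m+1) ≤ m) ∧
          ((B + ((2*m+1) - x')) % (2*m+1) ≤ m)
      · -- 2a : residues clustered, use a pure W-position
        obtain ⟨x', hx'mem, c0, cA, cB⟩ := hclus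
        have hx'Q : x' < 2*m+1 := by rcases hx'mem with rfl | rfl | rfl <;> omega
        set z := (m + ((2*m+1) - x')) % (2*m+1) with hzdef
        have hzQ : z < 2*m+1 := Nat.mod_lt _ (by omega)
        have gd : ∀ yy : ℕ, ((yy + ((2*m+1) - x')) % (2*m+1) ≤ m) →
            m ≤ (z + yy) % (2*m+1) := by
          intro yy hyy
          have e1 : (z + yy) % (2*m+1) = ((m + ((2*m+1) - x')) + yy) % (2*m+1) := by
            rw [hzdef, Nat.mod_add_mod]
          have e2 : (m + ((2*m+1) - x')) + yy = m + (yy + ((2*m+1) - x')) := by ring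
          have e3 : (m + (yy + ((2*m+1) - x'))) % (2*m+1) =
              (m + (yy + ((2*m+1) - x')) % (2*m+1)) % (2*m+1) :=
            (Nat.ModEq.add_left m (Nat.mod_modEq _ _)).symm
          rw [e1, e2, e3, modq_small hm (by omega)]
          omega
        have gda : m ≤ (z + a) % (2*m+1) := by
          have e : (z + a) % (2*m+1) = (z + A) % (2*m+1) := by
            rw [hqa, show z + ((2*m+1)*qa + A) = (z + A) + (2*m+1)*qa by ring,
              Nat.add_mul_mod_self_left]
          rw [e]; exact gd A cA
        have gdb : m ≤ (z + b) % (2*m+1) := by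
          have e : (z + b) % (2*m+1) = (z + B) % (2*m+1) := by
            rw [hqb, show z + ((2*m+1)*qb + B) = (z + B) + (2*m+1)*qb by ring,
              Nat.add_mul_mod_self_left]
          rw [e]; exact gd B cB
        have gdz : m ≤ z % (2*m+1) := by
          have := gd 0 (by simpa using c0)
          simpa [modq_small hm hzQ] using this
        refine ⟨u - ((z : ℕ) : ZMod (2 * m ^ 2 + 2 * m)), ?_, ?_, ?_⟩
        · exact not_mem_CT hm (y := z) (by omega) (Or.inl gdz) (hpt0 z)
        · exact not_mem_CT hm (y := z + a) (by omega) (Or.inl gda) (hpt z a)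
        · exact not_mem_CT hm (y := z + b) (by omega) (Or.inl gdb) (hpt z b)
      · -- 2b-i / 2b-ii : derive structure facts
        push_neg at hclus
        have hmax : m + 1 ≤ A ∨ m + 1 ≤ B := by
          have h := hclus 0 (Or.inl rfl)
          rw [Nat.zero_add, Nat.sub_zero, Nat.mod_self] at h
          simp only [Nat.add_mod_right] at h
          rw [modq_small hm hAQ, modq_small hm hBQ] at h
          omega
        -- helper to compute components of clus
        have hcA := hclus A (Or.inr (Or.inl rfl))
        have hcB := hclus B (Or.inr (Or.inr rfl))
        rcases Nat.lt_or_ge A B with hABlt | hge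
        · -- A < B branch facts
          have hBm : m + 1 ≤ B := by
            rcases hmax with h | h
            · omega
            · exact h
          have hBmax : B ≤ 2*m := by omega
          have hAm : A ≤ m := by
            by_contra hAm
            have h1 : (0 + ((2*m+1) - A)) % (2*m+1) ≤ m := by
              rw [Nat.zero_add, modq_small hm (by omega)]; omega
            have h2 : (A + ((2*m+1) - A)) % (2*m+1) ≤ m := by
              rw [show A + ((2*m+1) - A) = 2*m+1 by omega, Nat.mod_self]; omega
            have h3 := hcA h1 h2
            rw [modq_two hm (by omega) (by omega)] at h3
            omega
          have hA1 : 1 ≤ A := by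
            by_contra hA0
            have h1 : (0 + ((2*m+1) - B)) % (2*m+1) ≤ m := by
              rw [Nat.zero_add, modq_small hm (by omega)]; omega
            have h2 : (A + ((2*m+1) - B)) % (2*m+1) ≤ m := by
              rw [show A = 0 by omega, Nat.zero_add, modq_small hm (by omega)]; omega
            have h3 := hcB h1 h2
            rw [show B + ((2*m+1) - B) = 2*m+1 by omega, Nat.mod_self] at h3
            omega
          have hdiff : B - A ≤ m := by
            by_contra hd
            have h1 : (0 + ((2*m+1) - B)) % (2*m+1) ≤ m := by
              rw [Nat.zero_add, modq_small hm (by omega)]; omega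
            have h2 : (A + ((2*m+1) - B)) % (2*m+1) ≤ m := by
              rw [modq_small hm (by omega)]; omega
            have h3 := hcB h1 h2
            rw [show B + ((2*m+1) - B) = 2*m+1 by omega, Nat.mod_self] at h3
            omega
          have hrBA : r = B - A := by
            rcases Nat.lt_or_ge (r + A) (2*m+1) with h | h
            · rw [modq_small hm h] at hrA; omega
            · rw [modq_two hm h (by omega)] at hrA; omega
          by_cases ha2 : 2*m+1 ≤ a
          · -- 2b-i, A < B
            set y₀ := m + (2 * m ^ 2 + 2 * m - a) with hy₀def
            have hbN : b < 2 * m ^ 2 + 2 * m := by omega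
            have haN : a < 2 * m ^ 2 + 2 * m := by omega
            have hwa : y₀ + a = m + (2 * m ^ 2 + 2 * m) := by omega
            have hg0 : m ≤ y₀ % (2*m+1) := by
              set r0 := y₀ % (2*m+1) with hr0def
              have hr0Q : r0 < 2*m+1 := Nat.mod_lt _ (by omega)
              have hT : (y₀ + a) % (2*m+1) = 2*m := by
                rw [hwa, modq_shape hm (show m + (2 * m ^ 2 + 2 * m) = (2*m+1)*m + 2*m by omega) (by omega)]
              rw [Nat.add_mod, ← hAdef, ← hr0def] at hT
              rcases Nat.lt_or_ge (r0 + A) (2*m+1) with h | h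
              · rw [modq_small hm h] at hT; omega
              · rw [modq_two hm h (by omega)] at hT; omega
            have hwb : y₀ + b = (m + (b - a)) + (2 * m ^ 2 + 2 * m) := by omega
            have hg2 : m ≤ (m + (b - a)) % (2*m+1) := by
              have e : (m + (b - a)) % (2*m+1) = (m + r) % (2*m+1) := by
                rw [hrdef]
                exact (Nat.ModEq.add_left m (Nat.mod_modEq _ _)).symm
              rw [e, hrBA, modq_small hm (by omega)]
              omega
            refine ⟨u - ((y₀ : ℕ) : ZMod (2 * m ^ 2 + 2 * m)), ?_, ?_, ?_⟩
            · exact not_mem_CT hm (y := y₀) (by omega) (Or.inl hg0) (hpt0 y₀)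
            · refine not_mem_CT hm (y := m) (by omega) ?_ (hptw y₀ a m (by omega))
              left; rw [modq_small hm (by omega)]
            · refine not_mem_CT hm (y := m + (b - a)) (by omega) (Or.inl hg2)
                (hptw y₀ b (m + (b-a)) (by omega))
          · -- 2b-ii, A < B  (a ≤ 2m, b - a ≥ 2m+1)
            have ha2' : a ≤ 2*m := by omega
            have hba : 2*m+1 ≤ b - a := by omega
            set y₀ := B + (2 * m ^ 2 + 2 * m - b) with hy₀def
            have hwb : y₀ + b = B + (2 * m ^ 2 + 2 * m) := by omega
            have hg0 : m ≤ y₀ % (2*m+1) := by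
              set r0 := y₀ % (2*m+1) with hr0def
              have hr0Q : r0 < 2*m+1 := Nat.mod_lt _ (by omega)
              have hT : (y₀ + b) % (2*m+1) = B - (m+1) := by
                rw [hwb, modq_shape hm (show B + (2 * m ^ 2 + 2 * m) = (2*m+1)*(m+1) + (B - (m+1)) by omega) (by omega)]
              rw [Nat.add_mod, ← hBdef, ← hr0def] at hT
              rcases Nat.lt_or_ge (r0 + B) (2*m+1) with h | h
              · rw [modq_small hm h] at hT; omega
              · rw [modq_two hm h (by omega)] at hT; omega
            have hg1 : m ≤ (y₀ + a) % (2*m+1) := by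
              set r1 := (y₀ + a) % (2*m+1) with hr1def
              have hr1Q : r1 < 2*m+1 := Nat.mod_lt _ (by omega)
              have hT : ((y₀ + a) + (b - a)) % (2*m+1) = B - (m+1) := by
                rw [show (y₀ + a) + (b - a) = y₀ + b by omega, hwb,
                  modq_shape hm (show B + (2 * m ^ 2 + 2 * m) = (2*m+1)*(m+1) + (B - (m+1)) by omega) (by omega)]
              rw [Nat.add_mod, ← hrdef, ← hr1def, hrBA] at hT
              rcases Nat.lt_or_ge (r1 + (B - A)) (2*m+1) with h | h
              · rw [modq_small hm h] at hT; omega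
              · rw [modq_two hm h (by omega)] at hT; omega
            refine ⟨u - ((y₀ : ℕ) : ZMod (2 * m ^ 2 + 2 * m)), ?_, ?_, ?_⟩
            · exact not_mem_CT hm (y := y₀) (by omega) (Or.inl hg0) (hpt0 y₀)
            · exact not_mem_CT hm (y := y₀ + a) (by omega) (Or.inl hg1) (hpt y₀ a)
            · refine not_mem_CT hm (y := B) (by omega) ?_ (hptw y₀ b B (by omega))
              left; rw [modq_small hm hBQ]; omega
        · -- B < A branch
          have hAm1 : m + 1 ≤ A := by
            rcases hmax with h | h
            · exact h
            · omega
          have hAmax : A ≤ 2*m := by omega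
          have hBA : B < A := by
            rcases Nat.eq_or_lt_of_le hge with h | h
            · exfalso
              by_cases hAm : A ≤ m
              · omega
              · have h1 : (0 + ((2*m+1) - A)) % (2*m+1) ≤ m := by
                  rw [Nat.zero_add, modq_small hm (by omega)]; omega
                have h2 : (A + ((2*m+1) - A)) % (2*m+1) ≤ m := by
                  rw [show A + ((2*m+1) - A) = 2*m+1 by omega, Nat.mod_self]; omega
                have h3 := hcA h1 h2
                rw [h, show A + ((2*m+1) - A) = 2*m+1 by omega, Nat.mod_self] at h3
                omega
            · exact h
          have hBm : B ≤ m := by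
            by_contra hBm
            have h1 : (0 + ((2*m+1) - B)) % (2*m+1) ≤ m := by
              rw [Nat.zero_add, modq_small hm (by omega)]; omega
            have h2 : (A + ((2*m+1) - B)) % (2*m+1) ≤ m := by
              rw [modq_two hm (by omega) (by omega)]; omega
            have h3 := hcB h1 h2
            rw [show B + ((2*m+1) - B) = 2*m+1 by omega, Nat.mod_self] at h3
            omega
          have hB1 : 1 ≤ B := by
            by_contra hB0
            have h1 : (0 + ((2*m+1) - A)) % (2*m+1) ≤ m := by
              rw [Nat.zero_add, modq_small hm (by omega)]; omega
            have h2 : (A + ((2*m+1) - A)) % (2*m+1) ≤ m := by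
              rw [show A + ((2*m+1) - A) = 2*m+1 by omega, Nat.mod_self]; omega
            have h3 := hcA h1 h2
            rw [show B = 0 by omega, Nat.zero_add, modq_small hm (by omega)] at h3
            omega
          have hdiff : A - B ≤ m := by
            by_contra hd
            have h1 : (0 + ((2*m+1) - A)) % (2*m+1) ≤ m := by
              rw [Nat.zero_add, modq_small hm (by omega)]; omega
            have h2 : (A + ((2*m+1) - A)) % (2*m+1) ≤ m := by
              rw [show A + ((2*m+1) - A) = 2*m+1 by omega, Nat.mod_self]; omega
            have h3 := hcA h1 h2
            rw [modq_small hm (by omega)] at h3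
            omega
          have hrBA : r = B + (2*m+1) - A := by
            rcases Nat.lt_or_ge (r + A) (2*m+1) with h | h
            · rw [modq_small hm h] at hrA; omega
            · rw [modq_two hm h (by omega)] at hrA; omega
          by_cases ha2 : 2*m+1 ≤ a
          · -- 2b-i, B < A
            set z := m + (A - B) with hzdef
            set y₀ := z + (2 * m ^ 2 + 2 * m - a) with hy₀def
            have hwa : y₀ + a = z + (2 * m ^ 2 + 2 * m) := by omega
            have hg0 : m ≤ y₀ % (2*m+1) := by
              set r0 := y₀ % (2*m+1) with hr0def
              have hr0Q : r0 < 2*m+1 := Nat.mod_lt _ (by omega)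
              have hT : (y₀ + a) % (2*m+1) = A - B - 1 := by
                rw [hwa, modq_shape hm
                  (show z + (2 * m ^ 2 + 2 * m) = (2*m+1)*(m+1) + (A - B - 1) by omega) (by omega)]
              rw [Nat.add_mod, ← hAdef, ← hr0def] at hT
              rcases Nat.lt_or_ge (r0 + A) (2*m+1) with h | h
              · rw [modq_small hm h] at hT; omega
              · rw [modq_two hm h (by omega)] at hT; omega
            have hwb : y₀ + b = (z + (b - a)) + (2 * m ^ 2 + 2 * m) := by omega
            have hg2 : m ≤ (z + (b - a)) % (2*m+1) := by
              have e : (z + (b - a)) % (2*m+1) = (z + r) % (2*m+1) := by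
                rw [hrdef]
                exact (Nat.ModEq.add_left z (Nat.mod_modEq _ _)).symm
              rw [e, hrBA, modq_shape hm
                (show z + (B + (2*m+1) - A) = (2*m+1)*1 + m by omega) (by omega)]
            refine ⟨u - ((y₀ : ℕ) : ZMod (2 * m ^ 2 + 2 * m)), ?_, ?_, ?_⟩
            · exact not_mem_CT hm (y := y₀) (by omega) (Or.inl hg0) (hpt0 y₀)
            · refine not_mem_CT hm (y := z) (by omega) ?_ (hptw y₀ a z (by omega))
              left; rw [modq_small hm (by omega)]; omega
            · refine not_mem_CT hm (y := z + (b - a)) (by omega) (Or.inl hg2)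
                (hptw y₀ b (z + (b-a)) (by omega))
          · -- 2b-ii, B < A
            have ha2' : a ≤ 2*m := by omega
            have hba : 2*m+1 ≤ b - a := by omega
            set z := (2*m+1) - (A - B) with hzdef
            have hz1 : m + 1 ≤ z := by omega
            have hz2 : z ≤ 2*m := by omega
            set y₀ := z + (2 * m ^ 2 + 2 * m - b) with hy₀def
            have hwb : y₀ + b = z + (2 * m ^ 2 + 2 * m) := by omega
            have hg0 : m ≤ y₀ % (2*m+1) := by
              set r0 := y₀ % (2*m+1) with hr0def
              have hr0Q : r0 < 2*m+1 := Nat.mod_lt _ (by omega)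
              have hT : (y₀ + b) % (2*m+1) = m + B - A := by
                rw [hwb, modq_shape hm
                  (show z + (2 * m ^ 2 + 2 * m) = (2*m+1)*(m+1) + (m + B - A) by omega) (by omega)]
              rw [Nat.add_mod, ← hBdef, ← hr0def] at hT
              rcases Nat.lt_or_ge (r0 + B) (2*m+1) with h | h
              · rw [modq_small hm h] at hT; omega
              · rw [modq_two hm h (by omega)] at hT; omega
            have hg1 : m ≤ (y₀ + a) % (2*m+1) := by
              set r1 := (y₀ + a) % (2*m+1) with hr1def
              have hr1Q : r1 < 2*m+1 := Nat.mod_lt _ (by omega)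
              have hT : ((y₀ + a) + (b - a)) % (2*m+1) = m + B - A := by
                rw [show (y₀ + a) + (b - a) = y₀ + b by omega, hwb, modq_shape hm
                  (show z + (2 * m ^ 2 + 2 * m) = (2*m+1)*(m+1) + (m + B - A) by omega) (by omega)]
              rw [Nat.add_mod, ← hrdef, ← hr1def, hrBA] at hT
              rcases Nat.lt_or_ge (r1 + (B + (2*m+1) - A)) (2*m+1) with h | h
              · rw [modq_small hm h] at hT; omega
              · rw [modq_two hm h (by omega)] at hT; omega
            refine ⟨u - ((y₀ : ℕ) : ZMod (2 * m ^ 2 + 2 * m)), ?_, ?_, ?_⟩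
            · exact not_mem_CT hm (y := y₀) (by omega) (Or.inl hg0) (hpt0 y₀)
            · exact not_mem_CT hm (y := y₀ + a) (by omega) (Or.inl hg1) (hpt y₀ a)
            · refine not_mem_CT hm (y := z) (by omega) ?_ (hptw y₀ b z (by omega))
              left; rw [modq_small hm (by omega)]; omega

lemma exists_avoid_sorted (hm : 3 ≤ m) (u : ZMod (2 * m ^ 2 + 2 * m)) (a b : ℕ)
    (ha : 1 ≤ a) (hab : a < b) (hb : b < 2 * m ^ 2 + 2 * m) :
    ∃ t, u ∉ CT m t ∧ u + (a : ZMod (2 * m ^ 2 + 2 * m)) ∉ CT m t ∧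
      u + (b : ZMod (2 * m ^ 2 + 2 * m)) ∉ CT m t := by
  haveI : NeZero (2 * m ^ 2 + 2 * m) := ⟨by positivity⟩
  have hNcast : ((2 * m ^ 2 + 2 * m : ℕ) : ZMod (2 * m ^ 2 + 2 * m)) = 0 :=
    ZMod.natCast_self _
  by_cases h1 : b + (2*m+1) ≤ 2 * m ^ 2 + 2 * m
  · exact exists_avoid hm u a b ha hab h1
  · by_cases h2 : 2*m+1 ≤ a
    · obtain ⟨t, ht1, ht2, ht3⟩ := exists_avoid hm
        (u + (a : ZMod (2 * m ^ 2 + 2 * m))) (b - a) (2 * m ^ 2 + 2 * m - a)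
        (by omega) (by omega) (by omega)
      refine ⟨t, ?_, ht1, ?_⟩
      · have e : u + (a : ZMod (2 * m ^ 2 + 2 * m)) +
            ((2 * m ^ 2 + 2 * m - a : ℕ) : ZMod (2 * m ^ 2 + 2 * m)) = u := by
          rw [add_assoc, ← Nat.cast_add, show a + (2 * m ^ 2 + 2 * m - a) = 2 * m ^ 2 + 2 * m by omega,
            hNcast, add_zero]
        rwa [e] at ht3
      · have e : u + (a : ZMod (2 * m ^ 2 + 2 * m)) +
            ((b - a : ℕ) : ZMod (2 * m ^ 2 + 2 * m)) = u + (b : ZMod (2 * m ^ 2 + 2 * m)) := by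
          rw [add_assoc, ← Nat.cast_add, show a + (b - a) = b by omega]
        rwa [e] at ht2
    · have hNbig : 3 * (2*m+1) ≤ 2 * m ^ 2 + 2 * m := by nlinarith
      obtain ⟨t, ht1, ht2, ht3⟩ := exists_avoid hm
        (u + (b : ZMod (2 * m ^ 2 + 2 * m))) (2 * m ^ 2 + 2 * m - b) (2 * m ^ 2 + 2 * m - b + a)
        (by omega) (by omega) (by omega)
      have e1 : u + (b : ZMod (2 * m ^ 2 + 2 * m)) +
          ((2 * m ^ 2 + 2 * m - b : ℕ) : ZMod (2 * m ^ 2 + 2 * m)) = u := by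
        rw [add_assoc, ← Nat.cast_add, show b + (2 * m ^ 2 + 2 * m - b) = 2 * m ^ 2 + 2 * m by omega,
          hNcast, add_zero]
      have e2 : u + (b : ZMod (2 * m ^ 2 + 2 * m)) +
          ((2 * m ^ 2 + 2 * m - b + a : ℕ) : ZMod (2 * m ^ 2 + 2 * m)) =
          u + (a : ZMod (2 * m ^ 2 + 2 * m)) := by
        rw [add_assoc, ← Nat.cast_add, show b + (2 * m ^ 2 + 2 * m - b + a) = 2 * m ^ 2 + 2 * m + a by omega,
          Nat.cast_add, hNcast, zero_add]
      rw [e1] at ht2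
      rw [e2] at ht3
      exact ⟨t, ht2, ht3, ht1⟩

lemma exists_avoid3 (hm : 3 ≤ m) (u v w : ZMod (2 * m ^ 2 + 2 * m))
    (huv : u ≠ v) (huw : u ≠ w) (hvw : v ≠ w) :
    ∃ t, u ∉ CT m t ∧ v ∉ CT m t ∧ w ∉ CT m t := by
  haveI : NeZero (2 * m ^ 2 + 2 * m) := ⟨by positivity⟩
  have hval : ∀ x : ZMod (2 * m ^ 2 + 2 * m), ((x.val : ℕ) : ZMod (2 * m ^ 2 + 2 * m)) = x :=
    fun x => ZMod.natCast_rightInverse x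
  have key : ∀ x : ZMod (2 * m ^ 2 + 2 * m), x ≠ 0 → 1 ≤ x.val ∧ x.val < 2 * m ^ 2 + 2 * m := by
    intro x hx
    refine ⟨?_, ZMod.val_lt x⟩
    rcases Nat.eq_zero_or_pos x.val with h | h
    · exact absurd ((ZMod.val_eq_zero _).mp h) hx
    · exact h
  have hvu0 : v - u ≠ 0 := sub_ne_zero.mpr (Ne.symm huv)
  have hwu0 : w - u ≠ 0 := sub_ne_zero.mpr (Ne.symm huw)
  obtain ⟨h1, h2⟩ := key _ hvu0
  obtain ⟨h3, h4⟩ := key _ hwu0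
  have hvv : u + (((v - u).val : ℕ) : ZMod (2 * m ^ 2 + 2 * m)) = v := by rw [hval]; ring
  have hww : u + (((w - u).val : ℕ) : ZMod (2 * m ^ 2 + 2 * m)) = w := by rw [hval]; ring
  have hne : (v - u).val ≠ (w - u).val := by
    intro h
    apply hvw
    have h5 : v - u = w - u := by
      rw [← hval (v - u), ← hval (w - u), h]
    have := congrArg (· + u) h5
    simpa using this
  rcases Nat.lt_or_ge ((v - u).val) ((w - u).val) with hlt | hge
  · obtain ⟨t, ht1, ht2, ht3⟩ := exists_avoid_sorted hm u _ _ h1 hlt h4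
    rw [hvv] at ht2; rw [hww] at ht3
    exact ⟨t, ht1, ht2, ht3⟩
  · have hlt : (w - u).val < (v - u).val := by omega
    obtain ⟨t, ht1, ht2, ht3⟩ := exists_avoid_sorted hm u _ _ h3 hlt h2
    rw [hww] at ht2; rw [hvv] at ht3
    exact ⟨t, ht1, ht3, ht2⟩

lemma indepNumOn_eq_of_CT (hm : 3 ≤ m) (A : Set (ZMod (2 * m ^ 2 + 2 * m)))
    (t : ZMod (2 * m ^ 2 + 2 * m)) (hsub : ↑(CT m t) ⊆ A) :
    indepNumOn (circG m) A = m ^ 2 := by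
  unfold indepNumOn
  apply le_antisymm
  · apply csSup_le
    · refine ⟨0, ∅, ?_, Finset.card_empty, ?_⟩
      · simp
      · intro x hx; simp at hx
    · rintro n ⟨s, hsA, hcard, hindep⟩
      exact hcard ▸ card_le_upper hm hindep
  · apply le_csSup
    · refine ⟨m ^ 2, ?_⟩
      rintro n ⟨s, hsA, hcard, hindep⟩
      exact hcard ▸ card_le_upper hm hindep
    · exact ⟨CT m t, hsub, CT_card hm t, CT_indep hm t⟩

theorem circG_stable_three_zero (m : ℕ) (hm : 3 ≤ m) :
    _root_.indepNum (circG m) = m ^ 2 ∧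
      ∀ u v w : ZMod (2 * m ^ 2 + 2 * m), u ≠ v → u ≠ w → v ≠ w →
        indepNumOn (circG m) ({u, v, w} : Set (ZMod (2 * m ^ 2 + 2 * m)))ᶜ = m ^ 2 := by
  constructor
  · exact indepNumOn_eq_of_CT hm Set.univ 0 (by simp)
  · intro u v w huv huw hvw
    obtain ⟨t, h1, h2, h3⟩ := exists_avoid3 hm u v w huv huw hvw
    apply indepNumOn_eq_of_CT hm _ t
    intro x hx
    simp only [Set.mem_compl_iff, Set.mem_insert_iff, Set.mem_singleton_iff]
    push_neg
    refine ⟨?_, ?_, ?_⟩ <;> rintro rfl <;> [exact h1 hx; exact h2 hx; exact h3 hx]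

end Aux
end

section
/- For every ℓ ≥ 0 there exists a sequence of (ℓ+3, ℓ)-stable graphs G_m with |V(G_m)| → ∞ and α(G_m) = |V(G_m)|/2 − O(√|V(G_m)|). -/
open SimpleGraph Set

namespace StableCirc

def nn (M : ℕ) : ℕ := 2*M*(M+1)

lemma nn_pos {M : ℕ} (hM : 2 ≤ M) : 0 < nn M := by
  have : 0 < M := by omega
  simp [nn]; omega

def CInd (M : ℕ) (A : Finset ℕ) : Prop :=
  ∀ a ∈ A, ∀ b ∈ A, ¬ (a + M ≡ b [MOD nn M]) ∧ ¬ (a + (M+1) ≡ b [MOD nn M])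

def tr (M r : ℕ) (A : Finset ℕ) : Finset ℕ := A.image (fun a => (a + r) % nn M)

lemma tr_subset {M r : ℕ} (hM : 2 ≤ M) (A : Finset ℕ) :
    tr M r A ⊆ Finset.range (nn M) := by
  intro x hx
  simp only [tr, Finset.mem_image] at hx
  obtain ⟨a, _, rfl⟩ := hx
  exact Finset.mem_range.2 (Nat.mod_lt _ (nn_pos hM))

lemma tr_card {M r : ℕ} (hM : 2 ≤ M) {A : Finset ℕ} (hA : A ⊆ Finset.range (nn M)) :
    (tr M r A).card = A.card := by
  apply Finset.card_image_of_injOn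
  intro a ha b hb h
  have ha' := Finset.mem_range.1 (hA ha)
  have hb' := Finset.mem_range.1 (hA hb)
  have : a + r ≡ b + r [MOD nn M] := h
  have h2 : a ≡ b [MOD nn M] := this.add_right_cancel' r
  have := h2.eq_of_lt_of_lt ha' hb'
  exact this

lemma tr_cind {M r : ℕ} (hM : 2 ≤ M) {A : Finset ℕ} (hA : A ⊆ Finset.range (nn M))
    (hI : CInd M A) : CInd M (tr M r A) := by
  intro a' ha' b' hb'
  simp only [tr, Finset.mem_image] at ha' hb'
  obtain ⟨a, ha, rfl⟩ := ha'
  obtain ⟨b, hb, rfl⟩ := hb'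
  obtain ⟨h1, h2⟩ := hI a ha b hb
  constructor
  · intro h
    apply h1
    have ka : (a + r) % nn M ≡ a + r [MOD nn M] := Nat.mod_modEq _ _
    have kb : (b + r) % nn M ≡ b + r [MOD nn M] := Nat.mod_modEq _ _
    have : a + r + M ≡ b + r [MOD nn M] := ((ka.add_right M).symm.trans h).trans kb
    have : a + M + r ≡ b + r [MOD nn M] := by
      have e : a + r + M = a + M + r := by ring
      rwa [e] at this
    exact this.add_right_cancel' r
  · intro h
    apply h2
    have ka : (a + r) % nn M ≡ a + r [MOD nn M] := Nat.mod_modEq _ _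
    have kb : (b + r) % nn M ≡ b + r [MOD nn M] := Nat.mod_modEq _ _
    have : a + r + (M+1) ≡ b + r [MOD nn M] := ((ka.add_right (M+1)).symm.trans h).trans kb
    have : a + (M+1) + r ≡ b + r [MOD nn M] := by
      have e : a + r + (M+1) = a + (M+1) + r := by ring
      rwa [e] at this
    exact this.add_right_cancel' r

lemma mod_shift (n : ℕ) (x u v : ℕ) (h : (u + v) % n = 0) :
    ((x + u) % n + v) % n = x % n := by
  have h0 : u + v ≡ 0 [MOD n] := by
    unfold Nat.ModEq
    simp [h]
  have h1 : (x + u) % n + v ≡ x + u + v [MOD n] := (Nat.mod_modEq _ _).add_right v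
  have h2 : x + u + v ≡ x + 0 [MOD n] := by
    have : x + u + v = x + (u + v) := by ring
    rw [this]
    exact Nat.ModEq.add_left x h0
  have h3 : (x + u) % n + v ≡ x [MOD n] := by
    have := h1.trans h2
    simpa using this
  exact h3

lemma inv1 (n y : ℕ) (hn : 0 < n) : (y % n + (n - y % n)) % n = 0 := by
  have : y % n < n := Nat.mod_lt _ hn
  have e : y % n + (n - y % n) = n := by omega
  rw [e, Nat.mod_self]

lemma inv2 (n y : ℕ) (hn : 0 < n) : ((n - y % n) + y) % n = 0 := by
  have h1 := Nat.div_add_mod y n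
  have h2 : y % n < n := Nat.mod_lt _ hn
  have e : (n - y % n) + y = n * (y / n) + n := by omega
  rw [e]
  have : n * (y / n) + n = n * (y / n + 1) := by ring
  rw [this, Nat.mul_mod_right]

lemma window_le {M : ℕ} (hM : 2 ≤ M) {A : Finset ℕ}
    (hI : CInd M A) (w : ℕ) :
    (A.filter (fun a => w ≤ a ∧ a ≤ w + 2*M)).card ≤ M := by
  classical
  set W := A.filter (fun a => w ≤ a ∧ a ≤ w + 2*M) with hW
  have hWsub : W ⊆ A := Finset.filter_subset _ _
  set E := W.image (fun a => a - w) with hE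
  have hEcard : E.card = W.card := by
    apply Finset.card_image_of_injOn
    intro a ha b hb h
    have h' : a - w = b - w := h
    have ha' := (Finset.mem_filter.1 ha).2
    have hb' := (Finset.mem_filter.1 hb).2
    omega
  have hErange : ∀ e ∈ E, e ≤ 2*M := by
    intro e he
    simp only [hE, Finset.mem_image] at he
    obtain ⟨a, ha, rfl⟩ := he
    have := (Finset.mem_filter.1 ha).2
    omega
  have hEelt : ∀ e ∈ E, w + e ∈ A := by
    intro e he
    simp only [hE, Finset.mem_image] at he
    obtain ⟨a, ha, rfl⟩ := he
    have h2 := (Finset.mem_filter.1 ha).2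
    have : w + (a - w) = a := by omega
    rw [this]
    exact hWsub ha
  set F := E.image (fun e => (e + M) % (2*M+1)) with hF
  have hFcard : F.card = E.card := by
    apply Finset.card_image_of_injOn
    intro a ha b hb h
    have ha' := hErange a ha
    have hb' := hErange b hb
    have h' : (a + M) % (2*M+1) = (b + M) % (2*M+1) := h
    have : a + M ≡ b + M [MOD 2*M+1] := h'
    have h2 : a ≡ b [MOD 2*M+1] := this.add_right_cancel' M
    exact h2.eq_of_lt_of_lt (by omega) (by omega)
  have hdisj : Disjoint E F := by
    rw [Finset.disjoint_right]
    intro x hxF hxE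
    simp only [hF, Finset.mem_image] at hxF
    obtain ⟨e, he, hex⟩ := hxF
    have heb := hErange e he
    have hq : w + e ∈ A := hEelt e he
    have hp : w + x ∈ A := hEelt x hxE
    by_cases hc : e + M < 2*M+1
    · have hx : x = e + M := by rw [← hex]; exact Nat.mod_eq_of_lt hc
      have heq : (w + e) + M = w + x := by omega
      have : (w + e) + M ≡ w + x [MOD nn M] := by rw [heq]
      exact (hI _ hq _ hp).1 this
    · have hx : x = e - M - 1 := by
        rw [← hex, Nat.mod_eq_sub_mod (by omega), Nat.mod_eq_of_lt (by omega)]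
        omega
      have hqe : w + e = (w + x) + (M+1) := by omega
      have : (w + x) + (M+1) ≡ w + e [MOD nn M] := by rw [hqe]
      exact (hI _ hp _ hq).2 this
  have hsub : E ∪ F ⊆ Finset.range (2*M+1) := by
    intro x hx
    rcases Finset.mem_union.1 hx with h | h
    · exact Finset.mem_range.2 (by have := hErange x h; omega)
    · simp only [hF, Finset.mem_image] at h
      obtain ⟨e, _, rfl⟩ := h
      exact Finset.mem_range.2 (Nat.mod_lt _ (by omega))
  have := Finset.card_le_card hsub
  rw [Finset.card_union_of_disjoint hdisj, Finset.card_range, hFcard, hEcard] at this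
  omega

lemma lemma_W {M : ℕ} (hM : 2 ≤ M) {A : Finset ℕ}
    (hI : CInd M A) (hB : M+1 ≤ (A.filter (fun a => a < 2*M+2)).card) :
    ∃ p q, p ∈ A ∧ q ∈ A ∧ q = p + (M+2) ∧ q < 2*M+2 ∧
      ∀ x ∈ A, ¬ (p < x ∧ x < q) := by
  classical
  set B := A.filter (fun a => a < 2*M+2) with hBdef
  have hBA : B ⊆ A := Finset.filter_subset _ _
  have hBlt : ∀ b ∈ B, b < 2*M+2 := fun b hb => (Finset.mem_filter.1 hb).2
  have hBne : B.Nonempty := Finset.card_pos.1 (by omega)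
  set b0 := B.min' hBne with hb0def
  have hb0B : b0 ∈ B := B.min'_mem hBne
  have hb0le : ∀ b ∈ B, b0 ≤ b := fun b hb => B.min'_le b hb
  have hb0A : b0 ∈ A := hBA hb0B
  -- no element equals b0+M or b0+M+1
  have hkey : ∀ b ∈ B, b ≠ b0 + M ∧ b ≠ b0 + M + 1 := by
    intro b hb
    constructor
    · intro h
      exact (hI b0 hb0A b (hBA hb)).1 (by rw [h])
    · intro h
      exact (hI b0 hb0A b (hBA hb)).2 (by rw [h]; rfl)
  set Blo := B.filter (fun b => b < b0 + M) with hBlodef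
  set Bhi := B.filter (fun b => b0 + M + 2 ≤ b) with hBhidef
  have hcover : B = Blo ∪ Bhi := by
    ext b
    simp only [hBlodef, hBhidef, Finset.mem_union, Finset.mem_filter]
    constructor
    · intro hb
      have h1 := hkey b hb
      have h2 := hb0le b hb
      rcases lt_or_ge b (b0 + M) with h | h
      · exact Or.inl ⟨hb, h⟩
      · exact Or.inr ⟨hb, by omega⟩
    · rintro (⟨hb, _⟩ | ⟨hb, _⟩) <;> exact hb
  have hdisjB : Disjoint Blo Bhi := by
    rw [Finset.disjoint_left]
    intro b hb hb'
    have h1 := (Finset.mem_filter.1 hb).2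
    have h2 := (Finset.mem_filter.1 hb').2
    omega
  set U := Blo.image (fun b => b - b0) with hUdef
  set V := Bhi.image (fun b => b - (b0 + M + 2)) with hVdef
  set T := V.image (fun v => v + 1) with hTdef
  have hUcard : U.card = Blo.card := by
    apply Finset.card_image_of_injOn
    intro a ha b hb h
    have h' : a - b0 = b - b0 := h
    have ha' := hb0le a (Finset.mem_of_mem_filter a ha)
    have hb' := hb0le b (Finset.mem_of_mem_filter b hb)
    omega
  have hVcard : V.card = Bhi.card := by
    apply Finset.card_image_of_injOn
    intro a ha b hb h
    have h' : a - (b0+M+2) = b - (b0+M+2) := h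
    have ha' := (Finset.mem_filter.1 ha).2
    have hb' := (Finset.mem_filter.1 hb).2
    omega
  have hTcard : T.card = V.card :=
    Finset.card_image_of_injective _ (add_left_injective 1)
  -- elements of U: u ∈ U gives b0 + u ∈ A with b0 + u < b0 + M
  have hUelt : ∀ u ∈ U, b0 + u ∈ A ∧ u < M := by
    intro u hu
    simp only [hUdef, Finset.mem_image] at hu
    obtain ⟨b, hb, rfl⟩ := hu
    have h1 := (Finset.mem_filter.1 hb).2
    have h2 := hb0le b (Finset.mem_of_mem_filter b hb)
    have : b0 + (b - b0) = b := by omega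
    rw [this]
    exact ⟨hBA (Finset.mem_of_mem_filter b hb), by omega⟩
  have hVelt : ∀ v ∈ V, b0 + M + 2 + v ∈ A ∧ b0 + M + 2 + v ∈ B ∧ v + 1 ≤ M := by
    intro v hv
    simp only [hVdef, Finset.mem_image] at hv
    obtain ⟨b, hb, rfl⟩ := hv
    have h1 := (Finset.mem_filter.1 hb).2
    have h2 := hBlt b (Finset.mem_of_mem_filter b hb)
    have h3 := hb0le b (Finset.mem_of_mem_filter b hb)
    have : b0 + M + 2 + (b - (b0 + M + 2)) = b := by omega
    rw [this]
    exact ⟨hBA (Finset.mem_of_mem_filter b hb), Finset.mem_of_mem_filter b hb, by omega⟩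
  have hTelt : ∀ t ∈ T, ∃ v ∈ V, t = v + 1 := by
    intro t ht
    simp only [hTdef, Finset.mem_image] at ht
    obtain ⟨v, hv, rfl⟩ := ht
    exact ⟨v, hv, rfl⟩
  have hUrange : U ⊆ Finset.range (M+1) := by
    intro u hu; exact Finset.mem_range.2 (by have := (hUelt u hu).2; omega)
  have hTrange : T ⊆ Finset.range (M+1) := by
    intro t ht
    obtain ⟨v, hv, rfl⟩ := hTelt t ht
    exact Finset.mem_range.2 (by have := (hVelt v hv).2.2; omega)
  have hUT : Disjoint U T := by
    rw [Finset.disjoint_left]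
    intro x hxU hxT
    obtain ⟨v, hv, rfl⟩ := hTelt x hxT
    obtain ⟨hpu, _⟩ := hUelt _ hxU
    obtain ⟨hqv, _, _⟩ := hVelt v hv
    have : (b0 + (v+1)) + (M+1) ≡ b0 + M + 2 + v [MOD nn M] := by
      have e : (b0 + (v+1)) + (M+1) = b0 + M + 2 + v := by ring
      rw [e]
    exact (hI _ hpu _ hqv).2 this
  have hBcard : B.card = Blo.card + Bhi.card := by
    rw [hcover]; exact Finset.card_union_of_disjoint hdisjB
  have hUTcard : (U ∪ T).card = U.card + T.card := Finset.card_union_of_disjoint hUT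
  have hUTsub : U ∪ T ⊆ Finset.range (M+1) := Finset.union_subset hUrange hTrange
  have hUTeq : U ∪ T = Finset.range (M+1) := by
    apply Finset.eq_of_subset_of_card_le hUTsub
    rw [Finset.card_range, hUTcard, hUcard, hTcard, hVcard]
    omega
  have hexhaust : ∀ x, x ≤ M → x ∈ U ∨ x ∈ T := by
    intro x hx
    have : x ∈ U ∪ T := by rw [hUTeq]; exact Finset.mem_range.2 (by omega)
    exact Finset.mem_union.1 this
  -- closure of T upward
  have hclos : ∀ t ∈ T, t + 1 ≤ M → t + 1 ∈ T := by
    intro t ht hle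
    rcases hexhaust (t+1) hle with h | h
    · exfalso
      obtain ⟨v, hv, rfl⟩ := hTelt t ht
      obtain ⟨hpu, _⟩ := hUelt _ h
      obtain ⟨hqv, _, _⟩ := hVelt v hv
      have : (b0 + (v+1+1)) + M ≡ b0 + M + 2 + v [MOD nn M] := by
        have e : (b0 + (v+1+1)) + M = b0 + M + 2 + v := by ring
        rw [e]
      exact (hI _ hpu _ hqv).1 this
    · exact h
  have hTne : T.Nonempty := by
    by_contra h
    rw [Finset.not_nonempty_iff_eq_empty] at h
    have : M ∈ U := by
      rcases hexhaust M le_rfl with h' | h'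
      · exact h'
      · rw [h] at h'; exact absurd h' (Finset.notMem_empty M)
    have := (hUelt M this).2
    omega
  set t0 := T.min' hTne with ht0def
  have ht0T : t0 ∈ T := T.min'_mem hTne
  have ht0le : ∀ t ∈ T, t0 ≤ t := fun t ht => T.min'_le t ht
  have ht0pos : 1 ≤ t0 := by
    obtain ⟨v, _, he⟩ := hTelt t0 ht0T
    omega
  have ht0M : t0 ≤ M := by
    have := hTrange ht0T
    have := Finset.mem_range.1 this
    omega
  have hIcc : ∀ k, t0 + k ≤ M → t0 + k ∈ T := by
    intro k
    induction k with
    | zero => intro _; exact ht0T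
    | succ k ih =>
      intro hk
      have h1 : t0 + k ∈ T := ih (by omega)
      have := hclos _ h1 (by omega)
      have e : t0 + k + 1 = t0 + (k+1) := by ring
      rwa [e] at this
  have hUlt : ∀ u ∈ U, u < t0 := by
    intro u hu
    by_contra h
    push_neg at h
    have hum : u ≤ M := by have := hUrange hu; have := Finset.mem_range.1 this; omega
    have : u ∈ T := by
      have : t0 + (u - t0) = u := by omega
      rw [← this]
      exact hIcc _ (by omega)
    exact (Finset.disjoint_left.1 hUT) hu this
  -- the witness
  have hwU : t0 - 1 ∈ U := by
    rcases hexhaust (t0 - 1) (by omega) with h | h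
    · exact h
    · have := ht0le _ h
      omega
  obtain ⟨hpA, _⟩ := hUelt _ hwU
  obtain ⟨v0, hv0, ht0v⟩ := hTelt t0 ht0T
  have hv0w : v0 = t0 - 1 := by omega
  obtain ⟨hqA, hqB, _⟩ := hVelt v0 hv0
  refine ⟨b0 + (t0 - 1), b0 + M + 2 + v0, hpA, hqA, by omega, hBlt _ hqB, ?_⟩
  intro x hx ⟨hx1, hx2⟩
  have hxB : x ∈ B := by
    rw [hBdef]
    refine Finset.mem_filter.2 ⟨hx, ?_⟩
    have := hBlt _ hqB
    omega
  have hxb0 : b0 ≤ x := hb0le x hxB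
  have : x ∈ Blo ∨ x ∈ Bhi := by
    have : x ∈ Blo ∪ Bhi := by rw [← hcover]; exact hxB
    exact Finset.mem_union.1 this
  rcases this with h | h
  · have hxU : x - b0 ∈ U := by
      rw [hUdef]
      exact Finset.mem_image.2 ⟨x, h, rfl⟩
    have := hUlt _ hxU
    omega
  · have hxV : x - (b0 + M + 2) ∈ V := by
      rw [hVdef]
      exact Finset.mem_image.2 ⟨x, h, rfl⟩
    have hxT : (x - (b0 + M + 2)) + 1 ∈ T := by
      rw [hTdef]
      exact Finset.mem_image.2 ⟨_, hxV, rfl⟩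
    have := ht0le _ hxT
    have h2 := (Finset.mem_filter.1 h).2
    omega

lemma card_bound {M : ℕ} (hM : 2 ≤ M) {A : Finset ℕ} (hA : A ⊆ Finset.range (nn M))
    (hI : CInd M A) : A.card ≤ M*M := by
  classical
  have hn : 0 < nn M := nn_pos hM
  by_cases hcase : ∀ t ∈ Finset.range (nn M),
      ((Finset.range (2*M+2)).filter (fun δ => (t + δ) % nn M ∈ A)).card ≤ M
  · -- sliding average
    have e2 : ∀ δ : ℕ, ((Finset.range (nn M)).filter (fun t => (t + δ) % nn M ∈ A)).card
        = A.card := by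
      intro δ
      apply Finset.card_bij (fun t _ => (t + δ) % nn M)
      · intro t ht
        exact (Finset.mem_filter.1 ht).2
      · intro t1 h1 t2 h2 he
        have k1 := Finset.mem_range.1 (Finset.mem_filter.1 h1).1
        have k2 := Finset.mem_range.1 (Finset.mem_filter.1 h2).1
        have : t1 + δ ≡ t2 + δ [MOD nn M] := he
        exact (this.add_right_cancel' δ).eq_of_lt_of_lt k1 k2
      · intro a ha
        have haR := Finset.mem_range.1 (hA ha)
        refine ⟨(a + (nn M - δ % nn M)) % nn M, Finset.mem_filter.2 ⟨Finset.mem_range.2 (Nat.mod_lt _ hn), ?_⟩, ?_⟩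
        · rw [mod_shift _ _ _ _ (inv2 _ δ hn), Nat.mod_eq_of_lt haR]
          exact ha
        · rw [mod_shift _ _ _ _ (inv2 _ δ hn), Nat.mod_eq_of_lt haR]
    have key : ∑ t ∈ Finset.range (nn M),
        ((Finset.range (2*M+2)).filter (fun δ => (t + δ) % nn M ∈ A)).card
        = (2*M+2) * A.card := by
      have e1 : ∀ t ∈ Finset.range (nn M),
          ((Finset.range (2*M+2)).filter (fun δ => (t + δ) % nn M ∈ A)).card
          = ∑ δ ∈ Finset.range (2*M+2), if (t + δ) % nn M ∈ A then 1 else 0 := by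
        intro t _
        rw [Finset.card_filter]
      rw [Finset.sum_congr rfl e1, Finset.sum_comm]
      have e3 : ∀ δ ∈ Finset.range (2*M+2),
          (∑ t ∈ Finset.range (nn M), if (t + δ) % nn M ∈ A then 1 else 0) = A.card := by
        intro δ _
        rw [← Finset.card_filter]
        exact e2 δ
      rw [Finset.sum_congr rfl e3, Finset.sum_const, Finset.card_range, smul_eq_mul]
    have hsum : ∑ t ∈ Finset.range (nn M),
        ((Finset.range (2*M+2)).filter (fun δ => (t + δ) % nn M ∈ A)).card
        ≤ (nn M) * M := by
      calc ∑ t ∈ Finset.range (nn M), ((Finset.range (2*M+2)).filter (fun δ => (t + δ) % nn M ∈ A)).card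
          ≤ ∑ _t ∈ Finset.range (nn M), M := Finset.sum_le_sum hcase
        _ = (nn M) * M := by rw [Finset.sum_const, Finset.card_range, smul_eq_mul]
    rw [key] at hsum
    have : (2*M+2) * A.card ≤ (2*M+2) * (M*M) := by
      have e : nn M * M = (2*M+2)*(M*M) := by simp [nn]; ring
      omega
    exact Nat.le_of_mul_le_mul_left this (by omega)
  · -- some dense window
    push_neg at hcase
    obtain ⟨t, htR, ht⟩ := hcase
    set B1 := tr M (nn M - t % nn M) A with hB1def
    have hB1sub : B1 ⊆ Finset.range (nn M) := tr_subset hM A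
    have hB1ci : CInd M B1 := tr_cind hM hA hI
    have hB1card : B1.card = A.card := tr_card hM hA
    have hdense : M+1 ≤ (B1.filter (fun a => a < 2*M+2)).card := by
      have hsub : (Finset.range (2*M+2)).filter (fun δ => (t + δ) % nn M ∈ A)
          ⊆ B1.filter (fun a => a < 2*M+2) := by
        intro δ hδ
        obtain ⟨hδr, hδA⟩ := Finset.mem_filter.1 hδ
        refine Finset.mem_filter.2 ⟨?_, Finset.mem_range.1 hδr⟩
        rw [hB1def]
        refine Finset.mem_image.2 ⟨(t + δ) % nn M, hδA, ?_⟩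
        have h0 : (t + (nn M - t % nn M)) % nn M = 0 := by
          rw [Nat.add_comm]; exact inv2 _ t hn
        rw [Nat.add_comm t δ, mod_shift _ _ _ _ h0, Nat.mod_eq_of_lt]
        have hr := Finset.mem_range.1 hδr
        have : (2:ℕ)*M+2 ≤ nn M := by simp [nn]; nlinarith
        omega
      calc M + 1 ≤ _ := by omega
        _ ≤ _ := Finset.card_le_card hsub
    obtain ⟨p, q, hp, hq, hqp, hqlt, hbet⟩ := lemma_W hM hB1ci hdense
    set C := tr M (nn M - q) B1 with hCdef
    have hCsub : C ⊆ Finset.range (nn M) := tr_subset hM B1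
    have hCci : CInd M C := tr_cind hM hB1sub hB1ci
    have hCcard : C.card = B1.card := tr_card hM hB1sub
    have hCbound : ∀ cc ∈ C, cc + M + 2 ≤ nn M := by
      intro cc hcc
      rw [hCdef] at hcc
      obtain ⟨b, hb, hbe⟩ := Finset.mem_image.1 hcc
      have hbR := Finset.mem_range.1 (hB1sub hb)
      have hqn : q ≤ nn M := by
        have : (2:ℕ)*M+2 ≤ nn M := by simp [nn]; nlinarith
        omega
      rcases lt_or_ge b q with hbq | hbq
      · -- cc = b + nn - q
        have he : b + (nn M - q) < nn M := by omega
        rw [Nat.mod_eq_of_lt he] at hbe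
        by_contra hcon
        push_neg at hcon
        -- cc ≥ nn - M - 1, so b ≥ q - M - 1 = p + 1
        have hbp : p < b ∧ b < q := by omega
        exact hbet b hb hbp
      · -- cc = b - q
        have he : b + (nn M - q) = nn M + (b - q) := by omega
        rw [he, Nat.add_mod_left, Nat.mod_eq_of_lt (by omega)] at hbe
        omega
    -- partition into M windows of length 2M+1
    have hCsub2 : C ⊆ (Finset.range M).biUnion
        (fun i => C.filter (fun a => (2*M+1)*i ≤ a ∧ a ≤ (2*M+1)*i + 2*M)) := by
      intro cc hcc
      have hcb := hCbound cc hcc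
      have hdm := Nat.div_add_mod cc (2*M+1)
      have hmlt : cc % (2*M+1) < 2*M+1 := Nat.mod_lt _ (by omega)
      set j := cc / (2*M+1) with hjdef
      have hjM : j < M := by
        by_contra hj
        push_neg at hj
        have h1 : (2*M+1)*M ≤ (2*M+1)*j := Nat.mul_le_mul_left _ hj
        have h2 : nn M = (2*M+1)*M + M := by simp [nn]; ring
        omega
      refine Finset.mem_biUnion.2 ⟨j, Finset.mem_range.2 hjM, Finset.mem_filter.2 ⟨hcc, ?_, ?_⟩⟩
      · omega
      · omega
    calc A.card = C.card := by omega
      _ ≤ _ := Finset.card_le_card hCsub2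
      _ ≤ ∑ i ∈ Finset.range M,
          (C.filter (fun a => (2*M+1)*i ≤ a ∧ a ≤ (2*M+1)*i + 2*M)).card :=
            Finset.card_biUnion_le
      _ ≤ ∑ _i ∈ Finset.range M, M := Finset.sum_le_sum (fun i _ => window_le hM hCci _)
      _ = M * M := by rw [Finset.sum_const, Finset.card_range, smul_eq_mul]

def I0 (M : ℕ) : Finset ℕ :=
  (Finset.range (nn M)).filter (fun z => z % (2*M+1) < M ∧ z / (2*M+1) < M)

lemma I0_subset (M : ℕ) : I0 M ⊆ Finset.range (nn M) := Finset.filter_subset _ _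

lemma I0_struct {M : ℕ} {z : ℕ} (hz : z ∈ I0 M) :
    ∃ q r, q < M ∧ r < M ∧ z = (2*M+1)*q + r := by
  obtain ⟨_, h1, h2⟩ := Finset.mem_filter.1 hz
  exact ⟨z / (2*M+1), z % (2*M+1), h2, h1, by
    have := Nat.div_add_mod z (2*M+1); omega⟩

lemma I0_mem {M : ℕ} (hM : 2 ≤ M) {q r : ℕ} (hq : q < M) (hr : r < M) :
    (2*M+1)*q + r ∈ I0 M := by
  have h1 : ((2*M+1)*q + r) % (2*M+1) = r := by
    rw [Nat.mul_add_mod, Nat.mod_eq_of_lt (by omega)]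
  have h2 : ((2*M+1)*q + r) / (2*M+1) = q := by
    rw [Nat.mul_add_div (by omega), Nat.div_eq_of_lt (by omega)]
    omega
  refine Finset.mem_filter.2 ⟨Finset.mem_range.2 ?_, by omega, by omega⟩
  have hb : (2*M+1)*(q+1) ≤ (2*M+1)*M := Nat.mul_le_mul_left _ (by omega)
  have e1 : (2*M+1)*(q+1) = (2*M+1)*q + (2*M+1) := by ring
  have e2 : nn M = (2*M+1)*M + M := by simp [nn]; ring
  omega

lemma I0_card {M : ℕ} (hM : 2 ≤ M) : (I0 M).card = M*M := by
  classical
  have : ((Finset.range M) ×ˢ (Finset.range M)).card = M*M := by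
    rw [Finset.card_product, Finset.card_range]
  rw [← this]
  symm
  apply Finset.card_bij (fun p _ => (2*M+1)*p.1 + p.2)
  · rintro ⟨q, r⟩ hp
    obtain ⟨hq, hr⟩ := Finset.mem_product.1 hp
    exact I0_mem hM (Finset.mem_range.1 hq) (Finset.mem_range.1 hr)
  · rintro ⟨q1, r1⟩ h1 ⟨q2, r2⟩ h2 he
    obtain ⟨hq1, hr1⟩ := Finset.mem_product.1 h1
    obtain ⟨hq2, hr2⟩ := Finset.mem_product.1 h2
    simp only at he
    have hr1' := Finset.mem_range.1 hr1
    have hr2' := Finset.mem_range.1 hr2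
    have : q1 = q2 := by
      rcases Nat.lt_trichotomy q1 q2 with h | h | h
      · have h6 : (2*M+1)*(q1+1) ≤ (2*M+1)*q2 := Nat.mul_le_mul_left _ (by omega)
        have e1 : (2*M+1)*(q1+1) = (2*M+1)*q1 + (2*M+1) := by ring
        omega
      · exact h
      · have h6 : (2*M+1)*(q2+1) ≤ (2*M+1)*q1 := Nat.mul_le_mul_left _ (by omega)
        have e1 : (2*M+1)*(q2+1) = (2*M+1)*q2 + (2*M+1) := by ring
        omega
    subst this
    have : r1 = r2 := by omega
    simp [this]
  · intro z hz
    obtain ⟨q, r, hq, hr, he⟩ := I0_struct hz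
    exact ⟨⟨q, r⟩, Finset.mem_product.2 ⟨Finset.mem_range.2 hq, Finset.mem_range.2 hr⟩, he.symm⟩

lemma I0_cind {M : ℕ} (hM : 2 ≤ M) : CInd M (I0 M) := by
  have key : ∀ d, M ≤ d → d ≤ M+1 → ∀ a ∈ I0 M, ∀ b ∈ I0 M, ¬ (a + d ≡ b [MOD nn M]) := by
    intro d hd1 hd2 a ha b hb hmod
    obtain ⟨qa, ra, hqa, hra, hea⟩ := I0_struct ha
    obtain ⟨qb, rb, hqb, hrb, heb⟩ := I0_struct hb
    have hbn := Finset.mem_range.1 (I0_subset M ha)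
    have hbn' := Finset.mem_range.1 (I0_subset M hb)
    have hb' : b % nn M = b := Nat.mod_eq_of_lt hbn'
    have hnn_big : 2*M + 2 ≤ nn M := by simp [nn]; nlinarith
    have hcases : a + d = b ∨ a + d = b + nn M := by
      unfold Nat.ModEq at hmod
      rw [hb'] at hmod
      rcases lt_or_ge (a + d) (nn M) with h | h
      · left; rw [Nat.mod_eq_of_lt h] at hmod; exact hmod
      · right
        rw [Nat.mod_eq_sub_mod h, Nat.mod_eq_of_lt (by omega)] at hmod
        omega
    have hqaB : (2*M+1)*(qa+1) ≤ (2*M+1)*M := Nat.mul_le_mul_left _ (by omega)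
    have hqbB : (2*M+1)*(qb+1) ≤ (2*M+1)*M := Nat.mul_le_mul_left _ (by omega)
    have ea : (2*M+1)*(qa+1) = (2*M+1)*qa + (2*M+1) := by ring
    have eb : (2*M+1)*(qb+1) = (2*M+1)*qb + (2*M+1) := by ring
    have hnn : nn M = (2*M+1)*M + M := by simp [nn]; ring
    rcases hcases with h | h
    · -- a + d = b : compare q's
      have : qa = qb := by
        rcases Nat.lt_trichotomy qa qb with hlt | heq | hgt
        · have h6 : (2*M+1)*(qa+1) ≤ (2*M+1)*qb := Nat.mul_le_mul_left _ (by omega)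
          omega

        · exact heq
        · have h6 : (2*M+1)*(qb+1) ≤ (2*M+1)*qa := Nat.mul_le_mul_left _ (by omega)
          omega
      subst this
      omega
    · -- a + d = b + nn M : size contradiction
      omega
  intro a ha b hb
  exact ⟨key M le_rfl (by omega) a ha b hb, key (M+1) (by omega) le_rfl a ha b hb⟩

lemma bad_small {M : ℕ} (hM : 2 ≤ M) (u : ℕ) :
    ((Finset.range (2*M+1)).filter (fun δ => (u + δ) % nn M ∈ I0 M)).card ≤ M := by
  classical
  have hn : 0 < nn M := nn_pos hM
  set Au := tr M (nn M - u % nn M) (I0 M) with hAu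
  have hci : CInd M Au := tr_cind hM (I0_subset M) (I0_cind hM)
  have h0 : (u + (nn M - u % nn M)) % nn M = 0 := by
    rw [Nat.add_comm]; exact inv2 _ u hn
  have hsub : (Finset.range (2*M+1)).filter (fun δ => (u + δ) % nn M ∈ I0 M)
      ⊆ Au.filter (fun a => 0 ≤ a ∧ a ≤ 0 + 2*M) := by
    intro δ hδ
    obtain ⟨hδr, hδI⟩ := Finset.mem_filter.1 hδ
    have hδlt := Finset.mem_range.1 hδr
    refine Finset.mem_filter.2 ⟨?_, by omega, by omega⟩
    rw [hAu]
    refine Finset.mem_image.2 ⟨(u + δ) % nn M, hδI, ?_⟩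
    rw [Nat.add_comm u δ, mod_shift _ _ _ _ h0, Nat.mod_eq_of_lt]
    have : (2:ℕ)*M+1 ≤ nn M := by simp [nn]; nlinarith
    omega
  calc _ ≤ _ := Finset.card_le_card hsub
    _ ≤ M := window_le hM hci 0

lemma dodge {M : ℕ} (hM : 2 ≤ M) (a b c : ℕ) (ha : a < nn M) :
    ∃ t, (a + t) % nn M ∉ I0 M ∧ (b + t) % nn M ∉ I0 M ∧ (c + t) % nn M ∉ I0 M := by
  classical
  have hn : 0 < nn M := nn_pos hM
  set B0 := 2*M*M - 1 with hB0
  have hBig : ∀ δ ≤ 2*M, B0 + δ ∉ I0 M := by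
    intro δ hδ hmem
    obtain ⟨q, r, hq, hr, he⟩ := I0_struct hmem
    have hb : (2*M+1)*(q+1) ≤ (2*M+1)*M := Nat.mul_le_mul_left _ (by omega)
    have e1 : (2*M+1)*(q+1) = (2*M+1)*q + (2*M+1) := by ring
    have e2 : (2*M+1)*M = 2*M*M + M := by ring
    -- every element of I0 is ≤ 2M^2-2 < B0
    omega
  set base := B0 + (nn M - a) with hbase
  set BADb := (Finset.range (2*M+1)).filter (fun δ => ((b + base) + δ) % nn M ∈ I0 M) with hBb
  set BADc := (Finset.range (2*M+1)).filter (fun δ => ((c + base) + δ) % nn M ∈ I0 M) with hBc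
  have hb_card : BADb.card ≤ M := bad_small hM (b + base)
  have hc_card : BADc.card ≤ M := bad_small hM (c + base)
  have hun : (BADb ∪ BADc).card ≤ 2*M := by
    calc (BADb ∪ BADc).card ≤ BADb.card + BADc.card := Finset.card_union_le _ _
      _ ≤ 2*M := by omega
  have hex : ((Finset.range (2*M+1)) \ (BADb ∪ BADc)).Nonempty := by
    rw [← Finset.card_pos]
    have hsub : BADb ∪ BADc ⊆ Finset.range (2*M+1) :=
      Finset.union_subset (Finset.filter_subset _ _) (Finset.filter_subset _ _)
    rw [Finset.card_sdiff_of_subset hsub, Finset.card_range]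
    omega
  obtain ⟨δ, hδ⟩ := hex
  rw [Finset.mem_sdiff, Finset.mem_union] at hδ
  obtain ⟨hδr, hδn⟩ := hδ
  push_neg at hδn
  obtain ⟨hnb, hnc⟩ := hδn
  have hδlt := Finset.mem_range.1 hδr
  refine ⟨base + δ, ?_, ?_, ?_⟩
  · -- a lands in the big run
    have he : a + (base + δ) = nn M + (B0 + δ) := by
      rw [hbase]; omega
    rw [he, Nat.add_mod_left, Nat.mod_eq_of_lt]
    · exact hBig δ (by omega)
    · -- B0 + δ < nn M
      have e : nn M = 2*M*M + 2*M := by simp [nn]; ring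
      have h9 : 2*M*2 ≤ 2*M*M := Nat.mul_le_mul_left _ hM
      omega
  · have he : b + (base + δ) = (b + base) + δ := by ring
    rw [he]
    intro hmem
    exact hnb (Finset.mem_filter.2 ⟨hδr, hmem⟩)
  · have he : c + (base + δ) = (c + base) + δ := by ring
    rw [he]
    intro hmem
    exact hnc (Finset.mem_filter.2 ⟨hδr, hmem⟩)

/-! ### the graph -/

def Gr (M : ℕ) : SimpleGraph (Fin (nn M)) where
  Adj x y := x ≠ y ∧
    ((x.val + M) % nn M = y.val ∨ (y.val + M) % nn M = x.val ∨
     (x.val + (M+1)) % nn M = y.val ∨ (y.val + (M+1)) % nn M = x.val)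
  symm := by
    constructor
    intro x y ⟨h1, h2⟩
    exact ⟨h1.symm, by tauto⟩
  loopless := by constructor; intro x ⟨h1, _⟩; exact h1 rfl

lemma indep_iff {M : ℕ} (hM : 2 ≤ M) (s : Finset (Fin (nn M))) :
    (∀ x ∈ s, ∀ y ∈ s, x ≠ y → ¬ (Gr M).Adj x y) ↔ CInd M (s.image Fin.val) := by
  have hnn_big : 2*M + 2 ≤ nn M := by simp [nn]; nlinarith
  constructor
  · intro h a ha b hb
    obtain ⟨x, hx, rfl⟩ := Finset.mem_image.1 ha
    obtain ⟨y, hy, rfl⟩ := Finset.mem_image.1 hb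
    constructor
    · intro hmod
      by_cases hxy : x = y
      · subst hxy
        have : (x.val + M) % nn M = x.val % nn M := hmod
        rw [Nat.mod_eq_of_lt x.isLt] at this
        have h2 : x.val + M < nn M + nn M := by have := x.isLt; omega
        rcases lt_or_ge (x.val + M) (nn M) with hlt | hge
        · rw [Nat.mod_eq_of_lt hlt] at this; omega
        · rw [Nat.mod_eq_sub_mod hge, Nat.mod_eq_of_lt (by omega)] at this
          have := x.isLt; omega
      · apply h x hx y hy hxy
        refine ⟨hxy, Or.inl ?_⟩
        have : (x.val + M) % nn M = y.val % nn M := hmod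
        rwa [Nat.mod_eq_of_lt y.isLt] at this
    · intro hmod
      by_cases hxy : x = y
      · subst hxy
        have : (x.val + (M+1)) % nn M = x.val % nn M := hmod
        rw [Nat.mod_eq_of_lt x.isLt] at this
        rcases lt_or_ge (x.val + (M+1)) (nn M) with hlt | hge
        · rw [Nat.mod_eq_of_lt hlt] at this; omega
        · rw [Nat.mod_eq_sub_mod hge, Nat.mod_eq_of_lt (by have := x.isLt; omega)] at this
          have := x.isLt; omega
      · apply h x hx y hy hxy
        refine ⟨hxy, Or.inr (Or.inr (Or.inl ?_))⟩
        have : (x.val + (M+1)) % nn M = y.val % nn M := hmod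
        rwa [Nat.mod_eq_of_lt y.isLt] at this
  · intro h x hx y hy hxy hadj
    obtain ⟨-, hd⟩ := hadj
    have hxi : x.val ∈ s.image Fin.val := Finset.mem_image.2 ⟨x, hx, rfl⟩
    have hyi : y.val ∈ s.image Fin.val := Finset.mem_image.2 ⟨y, hy, rfl⟩
    rcases hd with h1 | h1 | h1 | h1
    · exact (h _ hxi _ hyi).1 (by
        show (x.val + M) % nn M = y.val % nn M
        rw [Nat.mod_eq_of_lt y.isLt]; exact h1)
    · exact (h _ hyi _ hxi).1 (by
        show (y.val + M) % nn M = x.val % nn M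
        rw [Nat.mod_eq_of_lt x.isLt]; exact h1)
    · exact (h _ hxi _ hyi).2 (by
        show (x.val + (M+1)) % nn M = y.val % nn M
        rw [Nat.mod_eq_of_lt y.isLt]; exact h1)
    · exact (h _ hyi _ hxi).2 (by
        show (y.val + (M+1)) % nn M = x.val % nn M
        rw [Nat.mod_eq_of_lt x.isLt]; exact h1)

lemma val_image_subset {M : ℕ} (s : Finset (Fin (nn M))) :
    s.image Fin.val ⊆ Finset.range (nn M) := by
  intro x hx
  obtain ⟨a, _, rfl⟩ := Finset.mem_image.1 hx
  exact Finset.mem_range.2 a.isLt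

lemma upper {M : ℕ} (hM : 2 ≤ M) (s : Finset (Fin (nn M)))
    (h : ∀ x ∈ s, ∀ y ∈ s, x ≠ y → ¬ (Gr M).Adj x y) : s.card ≤ M*M := by
  have := card_bound hM (val_image_subset s) ((indep_iff hM s).1 h)
  rwa [Finset.card_image_of_injective _ Fin.val_injective] at this

lemma exists_avoid {M : ℕ} (hM : 2 ≤ M) (a b c : Fin (nn M)) :
    ∃ s : Finset (Fin (nn M)), s.card = M*M ∧
      (∀ x ∈ s, ∀ y ∈ s, x ≠ y → ¬ (Gr M).Adj x y) ∧ a ∉ s ∧ b ∉ s ∧ c ∉ s := by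
  classical
  have hn : 0 < nn M := nn_pos hM
  obtain ⟨t, h1, h2, h3⟩ := dodge hM a.val b.val c.val a.isLt
  set A' := tr M (nn M - t % nn M) (I0 M) with hA'
  have hsub : A' ⊆ Finset.range (nn M) := tr_subset hM _
  have hci : CInd M A' := tr_cind hM (I0_subset M) (I0_cind hM)
  have hcard : A'.card = M*M := by rw [hA', tr_card hM (I0_subset M), I0_card hM]
  have h0 : ((nn M - t % nn M) + t) % nn M = 0 := inv2 _ t hn
  have havoid : ∀ v : Fin (nn M), (v.val + t) % nn M ∉ I0 M → v.val ∉ A' := by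
    intro v hv hmem
    rw [hA'] at hmem
    obtain ⟨z, hz, hze⟩ := Finset.mem_image.1 hmem
    apply hv
    have : (v.val + t) % nn M = z := by
      rw [← hze, mod_shift _ _ _ _ h0, Nat.mod_eq_of_lt (Finset.mem_range.1 (I0_subset M hz))]
    rw [this]; exact hz
  refine ⟨A'.attachFin (fun z hz => Finset.mem_range.1 (hsub hz)), ?_, ?_, ?_, ?_, ?_⟩
  · rw [Finset.card_attachFin, hcard]
  · rw [indep_iff hM]
    have : (A'.attachFin (fun z hz => Finset.mem_range.1 (hsub hz))).image Fin.val = A' := by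
      ext z
      simp only [Finset.mem_image]
      constructor
      · rintro ⟨x, hx, rfl⟩
        exact (Finset.mem_attachFin _).1 hx
      · intro hz
        exact ⟨⟨z, Finset.mem_range.1 (hsub hz)⟩, (Finset.mem_attachFin _).2 hz, rfl⟩
    rw [this]
    exact hci
  · intro hmem
    exact havoid a h1 ((Finset.mem_attachFin _).1 hmem)
  · intro hmem
    exact havoid b h2 ((Finset.mem_attachFin _).1 hmem)
  · intro hmem
    exact havoid c h3 ((Finset.mem_attachFin _).1 hmem)

lemma bddAbove_indep {V : Type*} [Fintype V] (G : SimpleGraph V) (A : Set V) :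
    BddAbove {n | ∃ s : Finset V, ↑s ⊆ A ∧ s.card = n ∧
      ∀ x ∈ s, ∀ y ∈ s, x ≠ y → ¬ G.Adj x y} := by
  refine ⟨Fintype.card V, ?_⟩
  rintro k ⟨s, _, rfl, _⟩
  exact Finset.card_le_univ s

lemma indepNum_eq {M : ℕ} (hM : 2 ≤ M) : _root_.indepNum (Gr M) = M*M := by
  have hn : 0 < nn M := nn_pos hM
  apply le_antisymm
  · apply csSup_le
    · exact ⟨0, ∅, by simp⟩
    · rintro k ⟨s, _, rfl, hs⟩
      exact upper hM s hs
  · obtain ⟨s, hcard, hindep, -, -, -⟩ := exists_avoid hM ⟨0, hn⟩ ⟨0, hn⟩ ⟨0, hn⟩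
    apply le_csSup (bddAbove_indep _ _)
    exact ⟨s, by simp, hcard, hindep⟩

lemma stable {M : ℕ} (hM : 2 ≤ M) (l : ℕ) : IsStable (Gr M) (l+3) l := by
  intro S hS
  classical
  obtain ⟨T, hTS, hT3⟩ := Finset.exists_subset_card_eq (s := S) (n := 3) (by omega)
  obtain ⟨a, b, c, -, -, -, rfl⟩ := Finset.card_eq_three.1 hT3
  obtain ⟨s, hcard, hindep, ha, hb, hc⟩ := exists_avoid hM a b c
  have hint : (s ∩ S).card ≤ l := by
    have hsub : s ∩ S ⊆ S \ {a, b, c} := by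
      intro x hx
      obtain ⟨hxs, hxS⟩ := Finset.mem_inter.1 hx
      refine Finset.mem_sdiff.2 ⟨hxS, ?_⟩
      intro hxT
      rcases Finset.mem_insert.1 hxT with rfl | hxT
      · exact ha hxs
      rcases Finset.mem_insert.1 hxT with rfl | hxT
      · exact hb hxs
      rw [Finset.mem_singleton] at hxT
      subst hxT
      exact hc hxs
    calc (s ∩ S).card ≤ (S \ {a,b,c}).card := Finset.card_le_card hsub
      _ = S.card - 3 := by rw [Finset.card_sdiff_of_subset hTS, hT3]
      _ ≤ l := by omega
  have hsplit : (s \ S).card + (s ∩ S).card = s.card := Finset.card_sdiff_add_card_inter s S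
  have hmem : (s \ S).card ∈ {n | ∃ s' : Finset (Fin (nn M)), ↑s' ⊆ ((↑S : Set (Fin (nn M)))ᶜ) ∧ s'.card = n ∧
      ∀ x ∈ s', ∀ y ∈ s', x ≠ y → ¬ (Gr M).Adj x y} := by
    refine ⟨s \ S, ?_, rfl, ?_⟩
    · intro x hx
      simp only [Finset.coe_sdiff, Set.mem_diff] at hx
      simp only [Set.mem_compl_iff, Finset.mem_coe]
      exact hx.2
    · intro x hx y hy hxy
      exact hindep x (Finset.mem_sdiff.1 hx).1 y (Finset.mem_sdiff.1 hy).1 hxy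
  have hle : (s \ S).card ≤ indepNumOn (Gr M) ((↑S : Set (Fin (nn M)))ᶜ) :=
    le_csSup (bddAbove_indep _ _) hmem
  rw [indepNum_eq hM]
  omega

end StableCirc

open StableCirc in
theorem exists_stable_seq_asymptotically_tight (l : ℕ) :
    ∃ C : ℝ, 0 < C ∧ ∃ (n : ℕ → ℕ) (G : ∀ m : ℕ, SimpleGraph (Fin (n m))),
      Filter.Tendsto n Filter.atTop Filter.atTop ∧
      ∀ m : ℕ, IsStable (G m) (l + 3) l ∧
        |(_root_.indepNum (G m) : ℝ) - (n m : ℝ) / 2| ≤ C * Real.sqrt (n m) := by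
  refine ⟨1, one_pos, fun k => nn (k+2), fun k => Gr (k+2), ?_, ?_⟩
  · apply Filter.tendsto_atTop_mono (f := id)
    · intro k
      simp only [id]
      have : k ≤ 2*(k+2)*(k+2+1) := by nlinarith
      simpa [nn] using this
    · exact Filter.tendsto_id
  · intro k
    have hM : 2 ≤ k + 2 := by omega
    refine ⟨stable hM l, ?_⟩
    rw [indepNum_eq hM]
    set M := k + 2 with hMdef
    have he : (nn M : ℝ) = 2*M*(M+1) := by unfold nn; push_cast; ring
    have habs : |((M*M : ℕ) : ℝ) - (nn M : ℝ)/2| = (M : ℝ) := by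
      rw [he]
      push_cast
      rw [abs_sub_comm, abs_of_nonneg (by nlinarith)]
      ring
    rw [habs, one_mul]
    have h1 : ((M:ℝ))^2 ≤ (nn M : ℝ) := by rw [he]; push_cast; nlinarith
    calc (M:ℝ) = Real.sqrt ((M:ℝ)^2) := (Real.sqrt_sq (by positivity)).symm
      _ ≤ Real.sqrt (nn M) := Real.sqrt_le_sqrt h1
end
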